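/- arXiv:1901.02201 — 8 statements merged into one kernel-verified Lean document; each statement's English description precedes it below -/
import Mathlib

section
/- A starlike tree (a tree with exactly one vertex of degree at least 3) has exactly one Laplacian eigenvalue greater than or equal to 4, and this eigenvalue equals 4 if and only if the tree is the star K_{1,3}. -/
set_option maxHeartbeats 1000000

open Matrix Finset SimpleGraph

namespace StarlikeAux

section Eigen

variable {n : Type*} [Fintype n] [DecidableEq n]


noncomputable def ev (A : Matrix n n ℝ) (hA : A.IsHermitian) (i : n) : n → ℝ :=
  ⇑(hA.eigenvectorBasis i)

lemma ev_dot (A : Matrix n n ℝ) (hA : A.IsHermitian) (i j : n) :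
    ev A hA i ⬝ᵥ ev A hA j = if i = j then (1:ℝ) else 0 := by
  have h := orthonormal_iff_ite.mp hA.eigenvectorBasis.orthonormal i j
  simpa [ev, PiLp.inner_apply, dotProduct, mul_comm] using h

/-- coordinates of `x` in the eigenbasis -/
noncomputable def coord (A : Matrix n n ℝ) (hA : A.IsHermitian) (x : n → ℝ) (i : n) : ℝ :=
  ev A hA i ⬝ᵥ x

lemma coord_eq (A : Matrix n n ℝ) (hA : A.IsHermitian) (x : n → ℝ) :
    coord A hA x = star (hA.eigenvectorUnitary : Matrix n n ℝ) *ᵥ x := by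
  funext i
  simp only [coord, ev, dotProduct, mulVec, dotProduct, star_eq_conjTranspose, conjTranspose_apply,
    star_trivial]
  exact Finset.sum_congr rfl fun j _ => by rw [Matrix.IsHermitian.eigenvectorUnitary_apply hA j i]

lemma dot_self_eq (A : Matrix n n ℝ) (hA : A.IsHermitian) (x : n → ℝ) :
    x ⬝ᵥ x = ∑ i, (coord A hA x i)^2 := by
  have hU := (Matrix.mem_unitaryGroup_iff).mp hA.eigenvectorUnitary.2
  calc x ⬝ᵥ x = x ⬝ᵥ (((hA.eigenvectorUnitary : Matrix n n ℝ) *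
        star (hA.eigenvectorUnitary : Matrix n n ℝ)) *ᵥ x) := by rw [hU, one_mulVec]
    _ = x ⬝ᵥ ((hA.eigenvectorUnitary : Matrix n n ℝ) *ᵥ
        (star (hA.eigenvectorUnitary : Matrix n n ℝ) *ᵥ x)) := by rw [mulVec_mulVec]
    _ = (x ᵥ* (hA.eigenvectorUnitary : Matrix n n ℝ)) ⬝ᵥ
        (star (hA.eigenvectorUnitary : Matrix n n ℝ) *ᵥ x) := by rw [dotProduct_mulVec]
    _ = ∑ i, (coord A hA x i)^2 := by
        rw [← coord_eq]
        rw [dotProduct]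
        refine Finset.sum_congr rfl fun i _ => ?_
        rw [sq]
        congr 1
        rw [coord_eq]
        simp [vecMul, mulVec, dotProduct, star_eq_conjTranspose, conjTranspose_apply, mul_comm]

lemma quadform_eq (A : Matrix n n ℝ) (hA : A.IsHermitian) (x : n → ℝ) :
    x ⬝ᵥ (A *ᵥ x) = ∑ i, hA.eigenvalues i * (coord A hA x i)^2 := by
  have hST := hA.spectral_theorem
  calc x ⬝ᵥ (A *ᵥ x)
      = x ⬝ᵥ ((hA.eigenvectorUnitary : Matrix n n ℝ) *ᵥ
          ((diagonal (RCLike.ofReal ∘ hA.eigenvalues) : Matrix n n ℝ) *ᵥ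
           (star (hA.eigenvectorUnitary : Matrix n n ℝ) *ᵥ x))) := by
        simp only [Unitary.conjStarAlgAut_apply, Unitary.coe_star] at hST
        rw [mulVec_mulVec, mulVec_mulVec, ← hST]
    _ = (x ᵥ* (hA.eigenvectorUnitary : Matrix n n ℝ)) ⬝ᵥ
          ((diagonal (RCLike.ofReal ∘ hA.eigenvalues) : Matrix n n ℝ) *ᵥ coord A hA x) := by
        rw [dotProduct_mulVec, coord_eq]
    _ = ∑ i, hA.eigenvalues i * (coord A hA x i)^2 := by
        rw [dotProduct]
        refine Finset.sum_congr rfl fun i _ => ?_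
        rw [mulVec_diagonal]
        have hx : (x ᵥ* (hA.eigenvectorUnitary : Matrix n n ℝ)) i = coord A hA x i := by
          rw [coord_eq]
          simp [vecMul, mulVec, dotProduct, star_eq_conjTranspose, conjTranspose_apply, mul_comm]
        rw [hx]
        simp only [Function.comp_apply, RCLike.ofReal_real_eq_id, id_eq]
        ring





lemma dot_self_pos (x : n → ℝ) (hx : x ≠ 0) : 0 < x ⬝ᵥ x := by
  have h : x ⬝ᵥ x = ∑ i, (x i)^2 := by simp [dotProduct, sq]
  rw [h]
  have : ∃ i, x i ≠ 0 := by
    by_contra hc; push_neg at hc; exact hx (funext hc)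
  obtain ⟨i, hi⟩ := this
  exact Finset.sum_pos' (fun j _ => sq_nonneg _) ⟨i, Finset.mem_univ i, by positivity⟩

lemma exists_eig_ge {A : Matrix n n ℝ} (hA : A.IsHermitian) {x : n → ℝ} (hx : x ≠ 0)
    (h : 4 * (x ⬝ᵥ x) ≤ x ⬝ᵥ (A *ᵥ x)) : ∃ i, 4 ≤ hA.eigenvalues i := by
  by_contra hc
  push_neg at hc
  have h1 : x ⬝ᵥ (A *ᵥ x) < 4 * (x ⬝ᵥ x) := by
    rw [quadform_eq A hA x, dot_self_eq A hA x, Finset.mul_sum]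
    have hex : ∃ i, coord A hA x i ≠ 0 := by
      by_contra hc2; push_neg at hc2
      have : x ⬝ᵥ x = 0 := by rw [dot_self_eq A hA x]; simp [hc2]
      exact absurd this (ne_of_gt (dot_self_pos x hx))
    obtain ⟨i, hi⟩ := hex
    apply Finset.sum_lt_sum (fun j _ => mul_le_mul_of_nonneg_right (le_of_lt (hc j)) (sq_nonneg _))
    exact ⟨i, Finset.mem_univ i, by
      have := hc i
      have h2 : (0:ℝ) < (coord A hA x i)^2 := by positivity
      nlinarith⟩
  linarith

lemma exists_eig_gt {A : Matrix n n ℝ} (hA : A.IsHermitian) {x : n → ℝ}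
    (h : 4 * (x ⬝ᵥ x) < x ⬝ᵥ (A *ᵥ x)) : ∃ i, 4 < hA.eigenvalues i := by
  by_contra hc
  push_neg at hc
  have h1 : x ⬝ᵥ (A *ᵥ x) ≤ 4 * (x ⬝ᵥ x) := by
    rw [quadform_eq A hA x, dot_self_eq A hA x, Finset.mul_sum]
    exact Finset.sum_le_sum fun j _ => mul_le_mul_of_nonneg_right (hc j) (sq_nonneg _)
  linarith

lemma all_eig_le {A : Matrix n n ℝ} (hA : A.IsHermitian)
    (h : ∀ x : n → ℝ, x ⬝ᵥ (A *ᵥ x) ≤ 4 * (x ⬝ᵥ x)) : ∀ i, hA.eigenvalues i ≤ 4 := by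
  intro i
  have hii : ev A hA i ⬝ᵥ ev A hA i = 1 := by simpa using ev_dot A hA i i
  have h1 : ev A hA i ⬝ᵥ (A *ᵥ ev A hA i) = hA.eigenvalues i := by
    rw [show A *ᵥ ev A hA i = hA.eigenvalues i • ev A hA i from hA.mulVec_eigenvectorBasis i]
    rw [dotProduct_smul, smul_eq_mul, hii, mul_one]
  have h2 := h (ev A hA i)
  rw [h1, hii] at h2
  linarith

/-- If every nonzero vector vanishing at `c` has Rayleigh quotient `< 4`, then at most one
eigenvalue is `≥ 4`. -/
lemma eig_ge_unique {A : Matrix n n ℝ} (hA : A.IsHermitian) (c : n)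
    (h : ∀ x : n → ℝ, x ≠ 0 → x c = 0 → x ⬝ᵥ (A *ᵥ x) < 4 * (x ⬝ᵥ x)) :
    ∀ i j, 4 ≤ hA.eigenvalues i → 4 ≤ hA.eigenvalues j → i = j := by
  intro i j hi hj
  by_contra hij
  -- build x = α • ev i + β • ev j with x c = 0
  set α := ev A hA j c with hα
  set β := -(ev A hA i c) with hβ
  set x : n → ℝ := α • ev A hA i + β • ev A hA j with hxdef
  have hxc : x c = 0 := by simp [hxdef, hα, hβ]; ring
  have hij' : ev A hA i ⬝ᵥ ev A hA j = 0 := by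
    have := ev_dot A hA i j; rwa [if_neg hij] at this
  have hij'' : ev A hA j ⬝ᵥ ev A hA i = 0 := by
    have := ev_dot A hA j i; rwa [if_neg (Ne.symm hij)] at this
  have hii : ev A hA i ⬝ᵥ ev A hA i = 1 := by simpa using ev_dot A hA i i
  have hjj : ev A hA j ⬝ᵥ ev A hA j = 1 := by simpa using ev_dot A hA j j
  have hxx : x ⬝ᵥ x = α^2 + β^2 := by
    simp only [hxdef, add_dotProduct, dotProduct_add, smul_dotProduct, dotProduct_smul,
      hii, hjj, hij', hij'', smul_eq_mul]
    ring
  have hAx : A *ᵥ x = (α * hA.eigenvalues i) • ev A hA i + (β * hA.eigenvalues j) • ev A hA j := by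
    rw [hxdef, mulVec_add, mulVec_smul, mulVec_smul,
      show A *ᵥ ev A hA i = hA.eigenvalues i • ev A hA i from hA.mulVec_eigenvectorBasis i,
      show A *ᵥ ev A hA j = hA.eigenvalues j • ev A hA j from hA.mulVec_eigenvectorBasis j]
    show α • (hA.eigenvalues i • ev A hA i) + β • (hA.eigenvalues j • ev A hA j) = _
    funext v; simp; ring
  have hquad : x ⬝ᵥ (A *ᵥ x) = hA.eigenvalues i * α^2 + hA.eigenvalues j * β^2 := by
    rw [hAx]
    simp only [hxdef, add_dotProduct, dotProduct_add, smul_dotProduct, dotProduct_smul,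
      hii, hjj, hij', hij'', smul_eq_mul]
    ring
  by_cases hβ0 : β = 0
  · -- then ev i vanishes at c; use x' = ev i
    have hic : ev A hA i c = 0 := by simpa [hβ] using hβ0
    have hne : ev A hA i ≠ 0 := by
      intro h0
      rw [h0] at hii; simp at hii
    have := h (ev A hA i) hne hic
    have h1 : ev A hA i ⬝ᵥ (A *ᵥ ev A hA i) = hA.eigenvalues i := by
      rw [show A *ᵥ ev A hA i = hA.eigenvalues i • ev A hA i from hA.mulVec_eigenvectorBasis i,
        dotProduct_smul, smul_eq_mul, hii, mul_one]
    rw [h1, hii] at this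
    linarith
  · have hxne : x ≠ 0 := by
      intro h0
      rw [h0] at hxx
      simp at hxx
      have hb2 : β^2 ≠ 0 := pow_ne_zero 2 hβ0
      have hb3 : 0 < β^2 := lt_of_le_of_ne (sq_nonneg β) (Ne.symm hb2)
      nlinarith [sq_nonneg α]
    have := h x hxne hxc
    rw [hquad, hxx] at this
    nlinarith [sq_nonneg α, sq_nonneg β]


end Eigen

section Graph

variable {V : Type*} [Fintype V] [DecidableEq V]


def f (G : SimpleGraph V) [DecidableRel G.Adj] (x : V → ℝ) (u v : V) : ℝ :=
  if G.Adj u v then (x u - x v)^2 else 0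

omit [Fintype V] [DecidableEq V] in
lemma f_nonneg (G : SimpleGraph V) [DecidableRel G.Adj] (x : V → ℝ) (u v : V) :
    0 ≤ f G x u v := by unfold f; split <;> positivity

lemma quad_eq (G : SimpleGraph V) [DecidableRel G.Adj] (x : V → ℝ) :
    x ⬝ᵥ (G.lapMatrix ℝ *ᵥ x) = (∑ u, ∑ v, f G x u v) / 2 := by
  have h := G.lapMatrix_toLinearMap₂' (R := ℝ) x
  rw [Matrix.toLinearMap₂'_apply'] at h
  exact h

lemma rows_ge (G : SimpleGraph V) [DecidableRel G.Adj] (x : V → ℝ) (F : Finset V) :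
    ∑ u ∈ F, ∑ v, f G x u v ≤ ∑ u, ∑ v, f G x u v :=
  Finset.sum_le_sum_of_subset_of_nonneg (Finset.subset_univ F)
    (fun u _ _ => Finset.sum_nonneg fun v _ => f_nonneg G x u v)

lemma row_ge (G : SimpleGraph V) [DecidableRel G.Adj] (x : V → ℝ) (u : V) (W : Finset V) :
    ∑ v ∈ W, f G x u v ≤ ∑ v, f G x u v :=
  Finset.sum_le_sum_of_subset_of_nonneg (Finset.subset_univ W)
    (fun v _ _ => f_nonneg G x u v)

lemma dot_eq_sum_sq (x : V → ℝ) : x ⬝ᵥ x = ∑ v, (x v)^2 := by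
  simp [dotProduct, sq]

/-- general star test vector -/
lemma star_test (G : SimpleGraph V) [DecidableRel G.Adj] (c : V) (T : Finset V)
    (hT : T ⊆ G.neighborFinset c) (hTpos : 0 < T.card) :
    ∃ x : V → ℝ, x ≠ 0 ∧ x ⬝ᵥ x = (T.card : ℝ)^2 + T.card ∧
      (T.card : ℝ) * ((T.card : ℝ) + 1)^2 ≤ x ⬝ᵥ (G.lapMatrix ℝ *ᵥ x) := by
  set k : ℝ := (T.card : ℝ) with hk
  have hcT : c ∉ T := fun h => G.irrefl (G.mem_neighborFinset c c |>.mp (hT h))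
  set x : V → ℝ := fun v => if v = c then k else if v ∈ T then -1 else 0 with hx
  have hxc : x c = k := by simp [hx]
  have hxT : ∀ v ∈ T, x v = -1 := by
    intro v hv
    have : v ≠ c := fun h => hcT (h ▸ hv)
    simp [hx, this, hv]
  have hx0 : ∀ v, v ∉ insert c T → x v = 0 := by
    intro v hv
    simp only [Finset.mem_insert, not_or] at hv
    simp [hx, hv.1, hv.2]
  have hk0 : 0 ≤ k := by positivity
  refine ⟨x, ?_, ?_, ?_⟩
  · intro h0
    have : x c = 0 := by rw [h0]; rfl
    rw [hxc] at this
    rw [hk] at this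
    have : T.card = 0 := by exact_mod_cast this
    omega
  · rw [dot_eq_sum_sq]
    rw [← Finset.sum_subset (Finset.subset_univ (insert c T))
      (fun v _ hv => by rw [hx0 v hv]; ring)]
    rw [Finset.sum_insert hcT, hxc]
    rw [Finset.sum_congr rfl (fun v hv => by rw [hxT v hv])]
    simp [sq, hk]
  · rw [quad_eq]
    have h1 : ∑ v ∈ T, f G x c v = k * (k+1)^2 := by
      rw [Finset.sum_congr rfl (fun v hv => show f G x c v = (k+1)^2 from ?_)]
      · rw [Finset.sum_const, hk]; simp [nsmul_eq_mul]
      · unfold f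
        rw [if_pos (G.mem_neighborFinset c v |>.mp (hT hv)), hxc, hxT v hv]
        ring
    have h2 : ∀ u ∈ T, ∑ v ∈ {c}, f G x u v = (k+1)^2 := by
      intro u hu
      rw [Finset.sum_singleton]
      unfold f
      rw [if_pos (G.mem_neighborFinset c u |>.mp (hT hu)).symm, hxc, hxT u hu]
      ring
    have hbound : 2 * (k * (k+1)^2) ≤ ∑ u, ∑ v, f G x u v := by
      calc 2 * (k * (k+1)^2) = k * (k+1)^2 + ∑ u ∈ T, (k+1)^2 := by
            rw [Finset.sum_const]; simp [nsmul_eq_mul, hk]; ring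
        _ ≤ (∑ v ∈ T, f G x c v) + ∑ u ∈ T, ∑ v, f G x u v := by
            rw [h1]
            gcongr with u hu
            calc (k+1)^2 = ∑ v ∈ {c}, f G x u v := (h2 u hu).symm
              _ ≤ ∑ v, f G x u v := row_ge G x u {c}
        _ ≤ (∑ v, f G x c v) + ∑ u ∈ T, ∑ v, f G x u v :=
            add_le_add_left (row_ge G x c T) _
        _ = ∑ u ∈ insert c T, ∑ v, f G x u v := by rw [Finset.sum_insert hcT]
        _ ≤ ∑ u, ∑ v, f G x u v := rows_ge G x (insert c T)
    linarith

/-- key strict inequality -/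
lemma strict_bound (G : SimpleGraph V) [DecidableRel G.Adj] (hconn : G.Connected) (c : V)
    (hdeg : ∀ v, v ≠ c → G.degree v ≤ 2) (x : V → ℝ) (hx : x ≠ 0) (hxc : x c = 0) :
    x ⬝ᵥ (G.lapMatrix ℝ *ᵥ x) < 4 * (x ⬝ᵥ x) := by
  rw [quad_eq]
  set g : V → V → ℝ := fun u v => if G.Adj u v then 2*(x u)^2 + 2*(x v)^2 else 0 with hg
  have hfg : ∀ u v, f G x u v ≤ g u v := by
    intro u v
    unfold f; rw [hg]; dsimp only
    split
    · nlinarith [sq_nonneg (x u + x v)]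
    · exact le_refl 0
  -- find a strict pair
  obtain ⟨u₀, hu₀⟩ : ∃ u, x u ≠ 0 := by
    by_contra hcon; push_neg at hcon; exact hx (funext hcon)
  have hstrict : ∃ a b, f G x a b < g a b := by
    by_cases hall : ∀ u v, G.Adj u v → x u = -(x v)
    · exfalso
      have hwalk : ∀ (a b : V), G.Walk a b → (x a)^2 = (x b)^2 := by
        intro a b w
        induction w with
        | nil => rfl
        | cons h p ih => rw [← ih, hall _ _ h]; ring
      obtain ⟨w⟩ := (hconn.preconnected u₀ c)
      have := hwalk _ _ w
      rw [hxc] at this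
      have h0 : x u₀ ^ 2 = 0 := by simpa using this
      exact hu₀ (pow_eq_zero_iff two_ne_zero |>.mp h0)
    · push_neg at hall
      obtain ⟨a, b, hadj, hne⟩ := hall
      refine ⟨a, b, ?_⟩
      unfold f; rw [hg]; dsimp only
      rw [if_pos hadj, if_pos hadj]
      have : x a + x b ≠ 0 := fun h => hne (by linarith)
      have hp : 0 < (x a + x b)^2 := lt_of_le_of_ne (sq_nonneg _) (Ne.symm (pow_ne_zero 2 this))
      nlinarith
  obtain ⟨a, b, hab⟩ := hstrict
  have hsum_lt : ∑ u, ∑ v, f G x u v < ∑ u, ∑ v, g u v := by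
    rw [← Finset.sum_product' (f := fun u v => f G x u v),
      ← Finset.sum_product' (f := fun u v => g u v)]
    apply Finset.sum_lt_sum
    · exact fun p _ => hfg p.1 p.2
    · exact ⟨(a, b), Finset.mem_univ _, hab⟩
  have hgsum : ∑ u, ∑ v, g u v = 4 * ∑ u, (G.degree u : ℝ) * (x u)^2 := by
    have h1 : ∀ u, ∑ v, g u v
        = 2*(x u)^2 * (G.degree u : ℝ) + ∑ v, (if G.Adj u v then 2*(x v)^2 else 0) := by
      intro u
      rw [hg]; dsimp only
      rw [show (2*(x u)^2 * (G.degree u : ℝ)) = ∑ v, (if G.Adj u v then 2*(x u)^2 else 0) by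
        rw [← Finset.sum_filter]
        simp only [Finset.sum_const, nsmul_eq_mul]
        rw [show (Finset.univ.filter (G.Adj u)).card = G.degree u from ?_]
        · ring
        · rw [SimpleGraph.degree]; congr 1; ext v
          simp [SimpleGraph.mem_neighborFinset]]
      rw [← Finset.sum_add_distrib]
      refine Finset.sum_congr rfl fun v _ => ?_
      split <;> simp <;> ring
    have h2 : ∑ u, ∑ v, (if G.Adj u v then 2*(x v)^2 else 0)
        = ∑ v, 2*(x v)^2 * (G.degree v : ℝ) := by
      rw [Finset.sum_comm]
      refine Finset.sum_congr rfl fun v _ => ?_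
      have hcomm : ∀ u, (if G.Adj u v then 2*(x v)^2 else 0) = (if G.Adj v u then 2*(x v)^2 else 0) := by
        intro u
        by_cases h : G.Adj u v
        · rw [if_pos h, if_pos (h.symm)]
        · rw [if_neg h, if_neg (fun h2 => h h2.symm)]
      rw [Finset.sum_congr rfl (fun u _ => hcomm u), ← Finset.sum_filter]
      simp only [Finset.sum_const, nsmul_eq_mul]
      rw [show (Finset.univ.filter (G.Adj v)).card = G.degree v from ?_]
      · ring
      · rw [SimpleGraph.degree]; congr 1; ext u
        simp [SimpleGraph.mem_neighborFinset]
    simp_rw [h1]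
    rw [Finset.sum_add_distrib, h2, Finset.mul_sum]
    rw [← Finset.sum_add_distrib]
    refine Finset.sum_congr rfl fun u _ => by ring
  have hdegsum : ∑ u, (G.degree u : ℝ) * (x u)^2 ≤ 2 * (x ⬝ᵥ x) := by
    rw [dot_eq_sum_sq, Finset.mul_sum]
    refine Finset.sum_le_sum fun u _ => ?_
    by_cases hu : x u = 0
    · simp [hu]
    · have huc : u ≠ c := fun h => hu (h ▸ hxc)
      have := hdeg u huc
      have h2 : (G.degree u : ℝ) ≤ 2 := by exact_mod_cast this
      nlinarith [sq_nonneg (x u)]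
  calc (∑ u, ∑ v, f G x u v) / 2 < (∑ u, ∑ v, g u v) / 2 := by linarith
    _ = 2 * ∑ u, (G.degree u : ℝ) * (x u)^2 := by rw [hgsum]; ring
    _ ≤ 4 * (x ⬝ᵥ x) := by linarith

/-- strict test vector when the center has degree exactly 3 and there is a vertex at
distance 2. -/
lemma dist2_test (G : SimpleGraph V) [DecidableRel G.Adj] (c w e : V)
    (hdeg3 : G.degree c = 3) (hw : G.Adj c w) (he : G.Adj w e) (hec : e ≠ c)
    (henc : ¬ G.Adj c e) :
    ∃ x : V → ℝ, 4 * (x ⬝ᵥ x) < x ⬝ᵥ (G.lapMatrix ℝ *ᵥ x) := by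
  set T : Finset V := G.neighborFinset c with hTdef
  have hwT : w ∈ T := (G.mem_neighborFinset c w).mpr hw
  have hcT : c ∉ T := fun h => G.irrefl ((G.mem_neighborFinset c c).mp h)
  have heT : e ∉ T := fun h => henc ((G.mem_neighborFinset c e).mp h)
  have hew : e ≠ w := fun h => G.irrefl (h ▸ he)
  have hcw : c ≠ w := G.ne_of_adj hw
  have hce : c ≠ e := Ne.symm hec
  have hcardT : T.card = 3 := hdeg3
  set x : V → ℝ := fun v => if v = c then 3 else if v = e then 1 else if v = w then -2
    else if v ∈ T then -1 else 0 with hx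
  have hxc : x c = 3 := by simp [hx]
  have hxe : x e = 1 := by simp [hx, hec]
  have hxw : x w = -2 := by simp [hx, hcw.symm, hew.symm]
  have hxT : ∀ v ∈ T, v ≠ w → x v = -1 := by
    intro v hv hvw
    have h1 : v ≠ c := fun h => hcT (h ▸ hv)
    have h2 : v ≠ e := fun h => heT (h ▸ hv)
    simp [hx, h1, h2, hvw, hv]
  set S : Finset V := insert c (insert e T) with hS
  have hx0 : ∀ v, v ∉ S → x v = 0 := by
    intro v hv
    simp only [hS, Finset.mem_insert, not_or] at hv
    have hvw : v ≠ w := fun h => hv.2.2 (h ▸ hwT)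
    simp [hx, hv.1, hv.2.1, hvw, hv.2.2]
  have hceT : c ∉ insert e T := by simp [hce, hcT]
  -- ‖x‖² = 16
  have hdot : x ⬝ᵥ x = 16 := by
    rw [dot_eq_sum_sq,
      ← Finset.sum_subset (Finset.subset_univ S) (fun v _ hv => by rw [hx0 v hv]; ring)]
    rw [hS, Finset.sum_insert hceT, Finset.sum_insert heT, hxc, hxe]
    rw [← Finset.sum_erase_add T _ hwT, hxw]
    rw [Finset.sum_congr rfl (fun v hv =>
      by rw [hxT v (Finset.mem_of_mem_erase hv) (Finset.ne_of_mem_erase hv)])]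
    rw [Finset.sum_const]
    have : (T.erase w).card = 2 := by rw [Finset.card_erase_of_mem hwT, hcardT]
    rw [this]
    norm_num
  -- quadratic form ≥ 66
  have hquad : (66:ℝ) ≤ x ⬝ᵥ (G.lapMatrix ℝ *ᵥ x) := by
    rw [quad_eq]
    have hrow_c : (57:ℝ) ≤ ∑ v, f G x c v := by
      refine le_trans ?_ (row_ge G x c T)
      rw [← Finset.sum_erase_add T _ hwT]
      have h1 : f G x c w = 25 := by
        unfold f; rw [if_pos hw, hxc, hxw]; norm_num
      have h2 : ∀ v ∈ T.erase w, f G x c v = 16 := by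
        intro v hv
        have hvT := Finset.mem_of_mem_erase hv
        unfold f
        rw [if_pos ((G.mem_neighborFinset c v).mp hvT), hxc,
          hxT v hvT (Finset.ne_of_mem_erase hv)]
        norm_num
      rw [h1, Finset.sum_congr rfl h2, Finset.sum_const,
        show (T.erase w).card = 2 by rw [Finset.card_erase_of_mem hwT, hcardT]]
      norm_num
    have hrow_e : (9:ℝ) ≤ ∑ v, f G x e v := by
      refine le_trans ?_ (row_ge G x e {w})
      rw [Finset.sum_singleton]
      unfold f
      rw [if_pos he.symm, hxe, hxw]
      norm_num
    have hrow_w : (34:ℝ) ≤ ∑ v, f G x w v := by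
      refine le_trans ?_ (row_ge G x w {c, e})
      rw [Finset.sum_insert (by simp [hce]), Finset.sum_singleton]
      unfold f
      rw [if_pos hw.symm, if_pos he, hxc, hxw, hxe]
      norm_num
    have hrow_T : ∀ u ∈ T.erase w, (16:ℝ) ≤ ∑ v, f G x u v := by
      intro u hu
      have huT := Finset.mem_of_mem_erase hu
      refine le_trans ?_ (row_ge G x u {c})
      rw [Finset.sum_singleton]
      unfold f
      rw [if_pos ((G.mem_neighborFinset c u).mp huT).symm, hxc,
        hxT u huT (Finset.ne_of_mem_erase hu)]
      norm_num
    have htotal : (132:ℝ) ≤ ∑ u ∈ S, ∑ v, f G x u v := by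
      rw [hS, Finset.sum_insert hceT, Finset.sum_insert heT,
        ← Finset.sum_erase_add T _ hwT]
      have hTsum : (32:ℝ) ≤ ∑ u ∈ T.erase w, ∑ v, f G x u v := by
        calc (32:ℝ) = ∑ _u ∈ T.erase w, (16:ℝ) := by
              rw [Finset.sum_const,
                show (T.erase w).card = 2 by rw [Finset.card_erase_of_mem hwT, hcardT]]
              norm_num
          _ ≤ _ := Finset.sum_le_sum hrow_T
      linarith
    have := le_trans htotal (rows_ge G x S)
    linarith
  exact ⟨x, by rw [hdot]; linarith⟩



omit [Fintype V] [DecidableEq V] in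
/-- an acyclic graph has no triangles -/
lemma no_triangle {G : SimpleGraph V} (hA : G.IsAcyclic) {a b c : V}
    (hab : G.Adj a b) (hbc : G.Adj b c) (hac : G.Adj a c) : False := by
  rw [isAcyclic_iff_path_unique] at hA
  have hp1 : (SimpleGraph.Walk.cons hac SimpleGraph.Walk.nil).IsPath := by
    simp [SimpleGraph.Walk.cons_isPath_iff, G.ne_of_adj hac]
  have hp2 : (SimpleGraph.Walk.cons hab
      (SimpleGraph.Walk.cons hbc SimpleGraph.Walk.nil)).IsPath := by
    simp [SimpleGraph.Walk.cons_isPath_iff, G.ne_of_adj hab, G.ne_of_adj hbc, G.ne_of_adj hac]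
  have := hA ⟨_, hp1⟩ ⟨_, hp2⟩
  have hlen := congrArg (fun p : G.Path a c => p.1.length) this
  simp at hlen

omit [Fintype V] [DecidableEq V] in
/-- in the "star" case, every vertex is the center or a neighbor of the center -/
lemma star_total {G : SimpleGraph V} (hconn : G.Connected) (c : V)
    (hstar : ∀ w, G.Adj c w → ∀ e, G.Adj w e → e = c) (v : V) :
    v = c ∨ G.Adj c v := by
  obtain ⟨p⟩ := hconn.preconnected v c
  induction p with
  | nil => exact Or.inl rfl
  | @cons a y _ h q ih =>
    rcases ih hstar with h1 | h1
    · exact Or.inr (h1 ▸ h.symm)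
    · exact Or.inl (hstar y h1 a h.symm)





lemma star_iso {G : SimpleGraph V} [DecidableRel G.Adj] (hconn : G.Connected)
    (c : V) (hdeg3 : G.degree c = 3)
    (hstar : ∀ w, G.Adj c w → ∀ e, G.Adj w e → e = c) :
    Nonempty (G ≃g completeBipartiteGraph (Fin 1) (Fin 3)) := by
  obtain ⟨a, b, w, hab, haw, hbw, hTeq⟩ :=
    Finset.card_eq_three.mp (hdeg3 : (G.neighborFinset c).card = 3)
  have hmem : ∀ v, v ∈ G.neighborFinset c ↔ G.Adj c v := fun v => G.mem_neighborFinset c v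
  have ha : G.Adj c a := (hmem a).mp (by rw [hTeq]; simp)
  have hb : G.Adj c b := (hmem b).mp (by rw [hTeq]; simp)
  have hw : G.Adj c w := (hmem w).mp (by rw [hTeq]; simp)
  have hca : c ≠ a := G.ne_of_adj ha
  have hcb : c ≠ b := G.ne_of_adj hb
  have hcw : c ≠ w := G.ne_of_adj hw
  have htot : ∀ v, v = c ∨ v = a ∨ v = b ∨ v = w := by
    intro v
    rcases star_total hconn c hstar v with h | h
    · exact Or.inl h
    · have : v ∈ G.neighborFinset c := (hmem v).mpr h
      rw [hTeq] at this
      simp only [Finset.mem_insert, Finset.mem_singleton] at this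
      tauto
  have hnoTT : ∀ u v, G.Adj c u → G.Adj c v → ¬ G.Adj u v := by
    intro u v hu hv huv
    exact G.ne_of_adj hv (Eq.symm (hstar u hu v huv))
  have hAdjTT : ∀ u v, (u = a ∨ u = b ∨ u = w) → (v = a ∨ v = b ∨ v = w) → ¬ G.Adj u v := by
    rintro u v (rfl | rfl | rfl) (rfl | rfl | rfl)
    exacts [hnoTT _ _ ha ha, hnoTT _ _ ha hb, hnoTT _ _ ha hw,
      hnoTT _ _ hb ha, hnoTT _ _ hb hb, hnoTT _ _ hb hw,
      hnoTT _ _ hw ha, hnoTT _ _ hw hb, hnoTT _ _ hw hw]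
  have hadj : ∀ u v, G.Adj u v ↔
      ((u = c ∧ (v = a ∨ v = b ∨ v = w)) ∨ (v = c ∧ (u = a ∨ u = b ∨ u = w))) := by
    intro u v
    constructor
    · intro h
      rcases htot u with hu | hu
      · rcases htot v with hv | hv
        · exfalso; rw [hu, hv] at h; exact G.irrefl h
        · exact Or.inl ⟨hu, hv⟩
      · rcases htot v with hv | hv
        · exact Or.inr ⟨hv, hu⟩
        · exact absurd h (hAdjTT u v hu hv)
    · rintro (⟨rfl, (rfl | rfl | rfl)⟩ | ⟨rfl, (rfl | rfl | rfl)⟩)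
      exacts [ha, hb, hw, ha.symm, hb.symm, hw.symm]
  refine ⟨⟨⟨fun v => if v = a then Sum.inr 0 else if v = b then Sum.inr 1
      else if v = w then Sum.inr 2 else Sum.inl 0,
    Sum.elim (fun _ => c) ![a, b, w], ?_, ?_⟩, ?_⟩⟩
  · intro v
    rcases htot v with hv | hv | hv | hv <;> rw [hv] <;>
      simp [hca, hcb, hcw, hca.symm, hcb.symm, hcw.symm, hab, haw, hbw,
        hab.symm, haw.symm, hbw.symm]
  · intro s
    rcases s with i | j
    · have : i = 0 := Subsingleton.elim i 0
      rw [this]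
      simp [hca, hcb, hcw, hca.symm, hcb.symm, hcw.symm]
    · fin_cases j <;>
        simp [hca, hcb, hcw, hca.symm, hcb.symm, hcw.symm, hab, haw, hbw,
          hab.symm, haw.symm, hbw.symm]
  · intro u v
    simp only [Equiv.coe_fn_mk]
    rw [hadj u v]
    rcases htot u with hu | hu | hu | hu <;> rcases htot v with hv | hv | hv | hv <;>
      rw [hu, hv] <;>
      simp [completeBipartiteGraph, hca, hcb, hcw, hca.symm, hcb.symm, hcw.symm,
        hab, haw, hbw, hab.symm, haw.symm, hbw.symm]

lemma quad_le_card4 (G : SimpleGraph V) [DecidableRel G.Adj] (h4 : Fintype.card V = 4)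
    (x : V → ℝ) : x ⬝ᵥ (G.lapMatrix ℝ *ᵥ x) ≤ 4 * (x ⬝ᵥ x) := by
  rw [quad_eq, dot_eq_sum_sq]
  have hfle : ∀ u v, f G x u v ≤ (x u - x v)^2 := by
    intro u v; unfold f; split
    · exact le_refl _
    · positivity
  have hmono : ∑ u, ∑ v, f G x u v ≤ ∑ u, ∑ v, (x u - x v)^2 :=
    Finset.sum_le_sum fun u _ => Finset.sum_le_sum fun v _ => hfle u v
  have hrow : ∀ u, ∑ v, (x u - x v)^2
      = 4 * (x u)^2 - 2 * x u * (∑ v, x v) + ∑ v, (x v)^2 := by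
    intro u
    have : ∀ v, (x u - x v)^2 = (x u)^2 - 2 * x u * x v + (x v)^2 := fun v => by ring
    simp_rw [this]
    rw [Finset.sum_add_distrib, Finset.sum_sub_distrib, Finset.sum_const, ← Finset.mul_sum,
      Finset.card_univ, h4]
    push_cast
    ring
  have hexp : ∑ u, ∑ v, (x u - x v)^2
      = 8 * (∑ v, (x v)^2) - 2 * (∑ v, x v)^2 := by
    simp_rw [hrow]
    rw [Finset.sum_add_distrib, Finset.sum_sub_distrib, Finset.sum_const, ← Finset.mul_sum,
      ← Finset.sum_mul, Finset.card_univ, h4]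
    push_cast
    rw [show (∑ i : V, 2 * x i) = 2 * (∑ v : V, x v) from by rw [Finset.mul_sum],
      nsmul_eq_mul]
    push_cast
    ring
  have hsq : 0 ≤ (∑ v, x v)^2 := sq_nonneg _
  linarith


end Graph

end StarlikeAux

open scoped Classical in
/-- Number of Laplacian eigenvalues (with multiplicity) that are `≥ 4`. -/
noncomputable def n4plus {V : Type*} [Fintype V] [DecidableEq V] (G : SimpleGraph V) : ℕ :=
  (Finset.univ.filter
    fun i => (4:ℝ) ≤ (SimpleGraph.posSemidef_lapMatrix ℝ G).1.eigenvalues i).card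

open scoped Classical in
/-- The `j`-th largest Laplacian eigenvalue (1-indexed). -/
noncomputable def eigDesc {V : Type*} [Fintype V] [DecidableEq V] (G : SimpleGraph V) (j : ℕ) : ℝ :=
  ((Finset.univ.val.map (SimpleGraph.posSemidef_lapMatrix ℝ G).1.eigenvalues).sort (· ≤ ·)).getD
    (Fintype.card V - j) 0

/-- a starlike tree has exactly one Laplacian eigenvalue `≥ 4`, and this
eigenvalue equals `4` iff the tree is `K_{1,3}`. -/
theorem starlike_tree_spectrum {V : Type*} [Fintype V] [DecidableEq V]
    (G : SimpleGraph V) [DecidableRel G.Adj] (hT : G.IsTree)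
    (c : V) (hc : 3 ≤ G.degree c) (huniq : ∀ v : V, 3 ≤ G.degree v → v = c) :
    n4plus G = 1 ∧
      ∀ i, 4 ≤ (SimpleGraph.posSemidef_lapMatrix ℝ G).1.eigenvalues i →
        ((SimpleGraph.posSemidef_lapMatrix ℝ G).1.eigenvalues i = 4 ↔
          Nonempty (G ≃g completeBipartiteGraph (Fin 1) (Fin 3))) := by
  classical
  set hL := (SimpleGraph.posSemidef_lapMatrix ℝ G).1 with hLdef
  have hconn := hT.isConnected
  have hacyc := hT.IsAcyclic
  have hdeg2 : ∀ v, v ≠ c → G.degree v ≤ 2 := by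
    intro v hv
    by_contra hcon
    exact hv (huniq v (by omega))
  -- strict bound off the center
  have hstrict : ∀ x : V → ℝ, x ≠ 0 → x c = 0 →
      x ⬝ᵥ (G.lapMatrix ℝ *ᵥ x) < 4 * (x ⬝ᵥ x) :=
    fun x hx hxc => StarlikeAux.strict_bound G hconn c hdeg2 x hx hxc
  have huniqEig : ∀ i j, 4 ≤ hL.eigenvalues i → 4 ≤ hL.eigenvalues j → i = j :=
    StarlikeAux.eig_ge_unique hL c hstrict
  -- existence of an eigenvalue ≥ 4
  obtain ⟨T, hTsub, hTcard⟩ := Finset.exists_subset_card_eq (n := 3)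
    (s := G.neighborFinset c) hc
  obtain ⟨x, hx0, hxdot, hxquad⟩ := StarlikeAux.star_test G c T hTsub (by omega)
  have hx4 : 4 * (x ⬝ᵥ x) ≤ x ⬝ᵥ (G.lapMatrix ℝ *ᵥ x) := by
    rw [hxdot, hTcard] at *
    calc 4 * ((3:ℝ)^2 + 3) = 3 * (3+1)^2 := by norm_num
      _ ≤ _ := by exact_mod_cast hxquad
  obtain ⟨i₀, hi₀⟩ := StarlikeAux.exists_eig_ge hL hx0 hx4
  have hpart1 : n4plus G = 1 := by
    unfold n4plus
    rw [Finset.card_eq_one]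
    refine ⟨i₀, Finset.eq_singleton_iff_unique_mem.mpr ⟨?_, ?_⟩⟩
    · simp only [Finset.mem_filter, Finset.mem_univ, true_and]
      convert hi₀ using 2 <;> congr!
    · intro j hj
      simp only [Finset.mem_filter, Finset.mem_univ, true_and] at hj
      refine huniqEig j i₀ ?_ hi₀
      convert hj using 2 <;> congr!
  refine ⟨hpart1, ?_⟩
  intro i hi
  constructor
  · -- eigenvalue = 4 → K_{1,3}
    intro heq
    by_contra hniso
    -- get a strict test vector
    have hstrictvec : ∃ x : V → ℝ, 4 * (x ⬝ᵥ x) < x ⬝ᵥ (G.lapMatrix ℝ *ᵥ x) := by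
      rcases Nat.lt_or_ge (G.degree c) 4 with hd | hd
      · have hdeg3 : G.degree c = 3 := by omega
        by_cases hstar : ∀ w, G.Adj c w → ∀ e, G.Adj w e → e = c
        · exact absurd (StarlikeAux.star_iso hconn c hdeg3 hstar) hniso
        · push_neg at hstar
          obtain ⟨w, hw, e, he, hec⟩ := hstar
          have henc : ¬ G.Adj c e := fun h => StarlikeAux.no_triangle hacyc hw he h
          exact StarlikeAux.dist2_test G c w e hdeg3 hw he hec henc
      · obtain ⟨T4, hT4sub, hT4card⟩ := Finset.exists_subset_card_eq (n := 4)
          (s := G.neighborFinset c) hd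
        obtain ⟨y, hy0, hydot, hyquad⟩ := StarlikeAux.star_test G c T4 hT4sub (by omega)
        refine ⟨y, ?_⟩
        rw [hydot, hT4card] at *
        calc 4 * ((4:ℝ)^2 + 4) < 4 * (4+1)^2 := by norm_num
          _ ≤ _ := by exact_mod_cast hyquad
    obtain ⟨z, hz⟩ := hstrictvec
    obtain ⟨j, hj⟩ := StarlikeAux.exists_eig_gt hL hz
    have : j = i := huniqEig j i (le_of_lt hj) hi
    rw [this] at hj
    rw [heq] at hj
    exact lt_irrefl _ hj
  · -- K_{1,3} → eigenvalue = 4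
    rintro ⟨iso⟩
    have hcard : Fintype.card V = 4 := by
      rw [Fintype.card_congr iso.toEquiv]
      simp
    have hle := StarlikeAux.all_eig_le hL
      (fun x => StarlikeAux.quad_le_card4 G hcard x) i
    linarith
end

section
/- For any finite tree G in which every vertex has degree at most 3, the number of Laplacian eigenvalues of G that are at least 4 (counted with multiplicity) is at most the number of vertices of G with degree exactly 3. -/
open SimpleGraph Matrix Finset

section aux
variable {V : Type*} [Fintype V] [DecidableEq V] (G : SimpleGraph V) [DecidableRel G.Adj]

private lemma inner_eq_dot' (x y : EuclideanSpace ℝ V) : (inner ℝ x y : ℝ) = x ⬝ᵥ y := by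
  simp [PiLp.inner_apply, dotProduct, RCLike.inner_apply, mul_comm]

private lemma Q_eq' (x : V → ℝ) :
    x ⬝ᵥ (G.lapMatrix ℝ *ᵥ x) =
      (∑ i, ∑ j, if G.Adj i j then (x i - x j) ^ 2 else 0) / 2 := by
  rw [← Matrix.toLinearMap₂'_apply', SimpleGraph.lapMatrix_toLinearMap₂']

private lemma sum_if_adj' (c : V → ℝ) :
    ∑ i, ∑ j, (if G.Adj i j then c i else 0) = ∑ i, (G.degree i : ℝ) * c i := by
  refine Finset.sum_congr rfl fun i _ => ?_
  rw [Finset.sum_ite, Finset.sum_const, Finset.sum_const, smul_zero, add_zero, nsmul_eq_mul]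
  congr 1
  have hfil : Finset.univ.filter (G.Adj i) = G.neighborFinset i := by
    ext j; simp [SimpleGraph.mem_neighborFinset]
  rw [hfil, SimpleGraph.card_neighborFinset_eq_degree]

private lemma sum_if_adj'' (c : V → ℝ) :
    ∑ i, ∑ j, (if G.Adj i j then c j else 0) = ∑ i, (G.degree i : ℝ) * c i := by
  rw [Finset.sum_comm]
  conv_lhs => enter [2, i, 2, j]; rw [if_congr (G.adj_comm j i) rfl rfl]
  exact sum_if_adj' G c

end aux

section wside
variable {V : Type*} [Fintype V] [DecidableEq V] {G : SimpleGraph V} [DecidableRel G.Adj]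

private lemma w_strict (hT : G.IsTree) (hdeg : ∀ v : V, G.degree v ≤ 3) (x : V → ℝ)
    (hW : ∀ v, G.degree v = 3 → x v = 0) (hx : x ≠ 0) :
    x ⬝ᵥ (G.lapMatrix ℝ *ᵥ x) < 4 * (x ⬝ᵥ x) := by
  set A1 := ∑ i, ∑ j, if G.Adj i j then (x i - x j) ^ 2 else 0 with hA1
  set P := ∑ i, ∑ j, if G.Adj i j then (x i + x j) ^ 2 else 0 with hP
  set Rr := ∑ i, (4 - 2 * (G.degree i : ℝ)) * x i ^ 2 with hRr
  have hA1P : A1 + P = ∑ i, (G.degree i : ℝ) * (2 * x i ^ 2)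
      + ∑ i, (G.degree i : ℝ) * (2 * x i ^ 2) := by
    have estep : A1 + P = (∑ i, ∑ j, if G.Adj i j then 2 * x i ^ 2 else 0)
        + ∑ i, ∑ j, if G.Adj i j then 2 * x j ^ 2 else 0 := by
      rw [hA1, hP, ← Finset.sum_add_distrib, ← Finset.sum_add_distrib]
      refine Finset.sum_congr rfl fun i _ => ?_
      rw [← Finset.sum_add_distrib, ← Finset.sum_add_distrib]
      refine Finset.sum_congr rfl fun j _ => ?_
      by_cases h : G.Adj i j <;> simp [h] <;> ring
    rw [estep, sum_if_adj' G (fun i => 2 * x i ^ 2), sum_if_adj'' G (fun j => 2 * x j ^ 2)]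
  have hRD : Rr + ∑ i, (G.degree i : ℝ) * (2 * x i ^ 2) = 4 * ∑ i, x i * x i := by
    rw [hRr, ← Finset.sum_add_distrib, Finset.mul_sum]
    exact Finset.sum_congr rfl fun i _ => by ring
  have hdot : x ⬝ᵥ x = ∑ i, x i * x i := rfl
  have keyid : x ⬝ᵥ (G.lapMatrix ℝ *ᵥ x) + P / 2 + Rr = 4 * (x ⬝ᵥ x) := by
    rw [Q_eq' G, hdot, ← hA1]
    linarith [hA1P, hRD]
  have hPnn : 0 ≤ P := by
    refine Finset.sum_nonneg fun i _ => Finset.sum_nonneg fun j _ => ?_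
    positivity
  have hRnn : 0 ≤ Rr := by
    refine Finset.sum_nonneg fun i _ => ?_
    by_cases h : x i = 0
    · simp [h]
    · have h3 : G.degree i ≠ 3 := fun hc => h (hW i hc)
      have h2 : G.degree i ≤ 2 := by have := hdeg i; omega
      have hc : (G.degree i : ℝ) ≤ 2 := by exact_mod_cast h2
      exact mul_nonneg (by linarith) (sq_nonneg _)
  by_contra hcon
  push_neg at hcon
  have hP0 : P = 0 := by linarith
  have hR0 : Rr = 0 := by linarith
  -- adjacency implies opposite values
  have hAdj : ∀ i j, G.Adj i j → x j = -x i := by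
    intro i j hij
    have h1 := (Finset.sum_eq_zero_iff_of_nonneg (fun i _ =>
      Finset.sum_nonneg fun j _ => by positivity)).mp hP0 i (Finset.mem_univ i)
    have h2 := (Finset.sum_eq_zero_iff_of_nonneg (fun j _ => by positivity)).mp h1 j
      (Finset.mem_univ j)
    rw [if_pos hij] at h2
    have := pow_eq_zero_iff (n := 2) (by norm_num) |>.mp h2
    linarith
  -- nonzero values force degree 2
  have hDeg2 : ∀ i, x i ≠ 0 → G.degree i = 2 := by
    intro i hi
    have h1 := (Finset.sum_eq_zero_iff_of_nonneg (fun i hi' => by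
      by_cases h : x i = 0
      · simp [h]
      · have h3 : G.degree i ≠ 3 := fun hc => h (hW i hc)
        have h2 : (G.degree i : ℝ) ≤ 2 := by
          have : G.degree i ≤ 2 := by have := hdeg i; omega
          exact_mod_cast this
        nlinarith [sq_nonneg (x i)])).mp hR0 i (Finset.mem_univ i)
    have hx2 : x i ^ 2 ≠ 0 := pow_ne_zero 2 hi
    have : (4 : ℝ) - 2 * (G.degree i : ℝ) = 0 := by
      rcases mul_eq_zero.mp h1 with h | h
      · exact h
      · exact absurd h hx2
    have : (G.degree i : ℝ) = 2 := by linarith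
    exact_mod_cast this
  obtain ⟨v₀, hv₀⟩ := Function.ne_iff.mp hx
  have step : ∀ (a b : V) (w : G.Walk a b), x a ≠ 0 → x b ≠ 0 := by
    intro a b w
    induction w with
    | nil => exact id
    | cons h p ih =>
      intro ha
      refine ih ?_
      rw [hAdj _ _ h]
      exact neg_ne_zero.mpr ha
  have hall : ∀ u, G.degree u = 2 := by
    intro u
    obtain ⟨w⟩ := hT.isConnected.preconnected v₀ u
    exact hDeg2 u (step v₀ u w hv₀)
  have hsum : ∑ v : V, G.degree v = 2 * Fintype.card V := by
    simp [hall, Finset.card_univ, mul_comm]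
  have hedges := SimpleGraph.sum_degrees_eq_twice_card_edges G
  have hcard := hT.card_edgeFinset
  have hpos : 0 < Fintype.card V := @Fintype.card_pos V _ hT.isConnected.nonempty
  omega

end wside

section eside
variable {V : Type*} [Fintype V] [DecidableEq V] {G : SimpleGraph V} [DecidableRel G.Adj]

private lemma e_bound (x : EuclideanSpace ℝ V)
    (hx : x ∈ Submodule.span ℝ
      ((SimpleGraph.posSemidef_lapMatrix ℝ G).1.eigenvectorBasis ''
        {i | (4 : ℝ) ≤ (SimpleGraph.posSemidef_lapMatrix ℝ G).1.eigenvalues i})) :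
    4 * (x ⬝ᵥ x) ≤ x ⬝ᵥ (G.lapMatrix ℝ *ᵥ x) := by
  set hL := (SimpleGraph.posSemidef_lapMatrix ℝ G).1 with hhL
  set b := hL.eigenvectorBasis with hb
  set μ := hL.eigenvalues with hμ
  -- inner products with eigenvectors outside the set vanish
  have hc0 : ∀ i, ¬ (4 : ℝ) ≤ μ i → (inner ℝ (b i) x : ℝ) = 0 := by
    intro i hi
    induction hx using Submodule.span_induction with
    | mem y hy =>
      obtain ⟨j, hj, rfl⟩ := hy
      rw [orthonormal_iff_ite.mp b.orthonormal, if_neg]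
      rintro rfl
      exact hi hj
    | zero => exact inner_zero_right _
    | add y z _ _ hy hz => rw [inner_add_right, hy, hz, add_zero]
    | smul a y _ hy => rw [inner_smul_right, hy, mul_zero]
  -- eigen-equation for inner products
  have hLx : ∀ i, (inner ℝ (b i) (WithLp.toLp 2 (G.lapMatrix ℝ *ᵥ x : V → ℝ) : EuclideanSpace ℝ V) : ℝ)
      = μ i * (inner ℝ (b i) x : ℝ) := by
    intro i
    rw [inner_eq_dot', inner_eq_dot']
    rw [Matrix.dotProduct_mulVec, ← Matrix.mulVec_transpose,
      (SimpleGraph.isSymm_lapMatrix (R := ℝ) G).eq]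
    rw [show G.lapMatrix ℝ *ᵥ (b i) = μ i • ((b i : V → ℝ)) from hL.mulVec_eigenvectorBasis i]
    rw [smul_dotProduct, smul_eq_mul]
  have hxx : (x ⬝ᵥ x : ℝ) = ∑ i, (inner ℝ x (b i) : ℝ) * (inner ℝ (b i) x : ℝ) := by
    rw [← inner_eq_dot', ← b.sum_inner_mul_inner x x]
  have hxLx : (x ⬝ᵥ (G.lapMatrix ℝ *ᵥ x) : ℝ)
      = ∑ i, (inner ℝ x (b i) : ℝ) * (μ i * (inner ℝ (b i) x : ℝ)) := by
    rw [← inner_eq_dot' x (WithLp.toLp 2 (G.lapMatrix ℝ *ᵥ x : V → ℝ) : EuclideanSpace ℝ V),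
      ← b.sum_inner_mul_inner x (WithLp.toLp 2 (G.lapMatrix ℝ *ᵥ x : V → ℝ) : EuclideanSpace ℝ V)]
    exact Finset.sum_congr rfl fun i _ => by rw [hLx i]
  rw [hxx, hxLx, Finset.mul_sum]
  refine Finset.sum_le_sum fun i _ => ?_
  by_cases hi : (4 : ℝ) ≤ μ i
  · have hsym : (inner ℝ x (b i) : ℝ) = (inner ℝ (b i) x : ℝ) := real_inner_comm _ _
    rw [hsym]
    nlinarith [sq_nonneg ((inner ℝ (b i) x : ℝ))]
  · rw [hc0 i hi]
    simp

end eside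

/-- for a finite tree with maximum degree `3`, the number of Laplacian
eigenvalues `≥ 4` is at most the number of vertices of degree exactly `3`. -/
theorem n4plus_le_nT {V : Type*} [Fintype V] [DecidableEq V]
    (G : SimpleGraph V) [DecidableRel G.Adj] (hT : G.IsTree)
    (hdeg : ∀ v : V, G.degree v ≤ 3) :
    n4plus G ≤ (Finset.univ.filter fun v : V => G.degree v = 3).card := by
  classical
  set hL := (SimpleGraph.posSemidef_lapMatrix ℝ G).1 with hhL
  set b := hL.eigenvectorBasis with hb
  set μ := hL.eigenvalues with hμ
  set T : Finset V := Finset.univ.filter (fun v : V => G.degree v = 3) with hTdef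
  -- the subspace spanned by eigenvectors with eigenvalue ≥ 4
  set E : Submodule ℝ (EuclideanSpace ℝ V) :=
    Submodule.span ℝ (⇑b '' {i | (4 : ℝ) ≤ μ i}) with hE
  have hfinE : Module.finrank ℝ E = n4plus G := by
    have libasis : LinearIndependent ℝ ⇑b := by
      simpa using b.toBasis.linearIndependent
    have : Fintype ↥{i | (4 : ℝ) ≤ μ i} := Fintype.ofFinite _
    have li := libasis.comp ((↑) : {i | (4 : ℝ) ≤ μ i} → V) Subtype.val_injective
    have himg : (⇑b '' {i | (4 : ℝ) ≤ μ i})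
        = Set.range (⇑b ∘ (Subtype.val : {i | (4 : ℝ) ≤ μ i} → V)) :=
      (Set.image_eq_range _ _).trans rfl
    rw [hE, himg, finrank_span_eq_card li]
    have hn4 : n4plus G = (Finset.univ.filter fun i => (4 : ℝ) ≤ μ i).card := by
      unfold n4plus
      congr!
    rw [hn4, ← Fintype.card_subtype]
    exact Fintype.card_congr (Equiv.refl _)
  -- the subspace of functions vanishing on degree-3 vertices
  set π : EuclideanSpace ℝ V →ₗ[ℝ] (↥T → ℝ) :=
    (LinearMap.funLeft ℝ ℝ (Subtype.val : ↥T → V)).comp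
      (WithLp.linearEquiv 2 ℝ (V → ℝ)).toLinearMap with hπ
  set W : Submodule ℝ (EuclideanSpace ℝ V) := LinearMap.ker π with hW
  have hπsurj : Function.Surjective π := by
    intro g
    refine ⟨(WithLp.equiv 2 (V → ℝ)).symm
      (fun u => if h : G.degree u = 3 then g ⟨u, by simp [hTdef, h]⟩ else 0), ?_⟩
    ext t
    have ht : G.degree (t : V) = 3 := (Finset.mem_filter.mp t.2).2
    simp [hπ, LinearMap.funLeft, WithLp.linearEquiv, ht]
  have hfinW : T.card + Module.finrank ℝ W = Fintype.card V := by
    have hrn := LinearMap.finrank_range_add_finrank_ker π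
    rw [LinearMap.range_eq_top.mpr hπsurj] at hrn
    have h1 : Module.finrank ℝ (⊤ : Submodule ℝ (↥T → ℝ)) = T.card := by
      rw [finrank_top, Module.finrank_pi]
      simp
    rw [h1, finrank_euclideanSpace] at hrn
    rw [← hrn, hW]
  -- the two subspaces intersect trivially
  have hdisj : E ⊓ W = ⊥ := by
    rw [Submodule.eq_bot_iff]
    rintro x ⟨hxE, hxW⟩
    by_contra hx0
    have hEineq := e_bound (G := G) x hxE
    have hWx : ∀ v, G.degree v = 3 → (x : V → ℝ) v = 0 := by
      intro v hv
      have hvT : v ∈ T := by simp [hTdef, hv]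
      have := congrFun (LinearMap.mem_ker.mp hxW) ⟨v, hvT⟩
      simpa [hπ, LinearMap.funLeft, WithLp.linearEquiv] using this
    have hxne : (x : V → ℝ) ≠ 0 := fun h => hx0 (by ext i; exact congrFun h i)
    have hWineq := w_strict hT hdeg (x : V → ℝ) hWx hxne
    linarith
  -- dimension counting
  have hsum := Submodule.finrank_sup_add_finrank_inf_eq E W
  rw [hdisj, finrank_bot, add_zero, hfinE] at hsum
  have hle : Module.finrank ℝ ↥(E ⊔ W) ≤ Fintype.card V := by
    have := Submodule.finrank_le (E ⊔ W)
    rwa [finrank_euclideanSpace] at this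
  omega
end

section
/- Let A_n be the n×n complex tridiagonal matrix (n ≥ 2) with diagonal (γ+b, b, ..., b, b+δ), subdiagonal constant a, and superdiagonal constant c, where ac ≠ 0. Then every eigenvalue of A_n has the form λ = b + 2√a√c·cos θ, where θ ∈ ℂ satisfies ac·sin((n+1)θ) − √a√c(γ+δ)·sin(nθ) + γδ·sin((n−1)θ) = 0 if sin θ ≠ 0, or ac·(n+1) − cos θ·√a√c(γ+δ)·n + γδ·(n−1) = 0 if sin θ = 0. -/
/-- If a homogeneous 2×2 system has a nontrivial solution, its determinant vanishes. -/
lemma det2_aux {p q r s A B : ℂ} (hAB : ¬ (A = 0 ∧ B = 0))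
    (h1 : p * A + q * B = 0) (h2 : r * A + s * B = 0) : p * s - q * r = 0 := by
  by_contra hd
  apply hAB
  constructor
  · have hA : (p * s - q * r) * A = s * (p * A + q * B) - q * (r * A + s * B) := by ring
    rw [h1, h2] at hA
    simpa using (mul_eq_zero.mp (by simpa using hA)).resolve_left hd
  · have hB : (p * s - q * r) * B = p * (r * A + s * B) - r * (p * A + q * B) := by ring
    rw [h1, h2] at hB
    simpa using (mul_eq_zero.mp (by simpa using hB)).resolve_left hd

lemma fin_sum_ite {n : ℕ} (f : Fin n → ℂ) (m : ℕ) (hm : m < n) :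
    (∑ j : Fin n, if (j : ℕ) = m then f j else 0) = f ⟨m, hm⟩ := by
  rw [show (∑ j : Fin n, if (j : ℕ) = m then f j else 0)
      = ∑ j : Fin n, if j = (⟨m, hm⟩ : Fin n) then f j else 0 from
    Finset.sum_congr rfl fun j _ => if_congr (by simp [Fin.ext_iff]) rfl rfl]
  simp

lemma fin_sum_ite_zero {n : ℕ} (f : Fin n → ℂ) (m : ℕ) (hm : n ≤ m) :
    (∑ j : Fin n, if (j : ℕ) = m then f j else 0) = 0 :=
  Finset.sum_eq_zero fun j _ => if_neg (by omega)

/-- Case `sin θ ≠ 0`. -/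
lemma caseA (n : ℕ) (hn : 2 ≤ n) (γ δ s θ : ℂ) (U : ℕ → ℂ)
    (hU1 : s * U 1 = (2 * s * Complex.cos θ - γ) * U 0)
    (hUrec : ∀ k, k + 2 < n → U (k + 2) = 2 * Complex.cos θ * U (k + 1) - U k)
    (hUn : s * U (n - 2) = (2 * s * Complex.cos θ - δ) * U (n - 1))
    (hUnz : ∃ j, j < n ∧ U j ≠ 0)
    (hsin : Complex.sin θ ≠ 0) :
    s ^ 2 * Complex.sin (((n : ℂ) + 1) * θ) - s * (γ + δ) * Complex.sin ((n : ℂ) * θ)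
      + γ * δ * Complex.sin (((n : ℂ) - 1) * θ) = 0 := by
  set B := U 0 with hB
  set Aq := (U 1 - U 0 * Complex.cos θ) / Complex.sin θ with hAq
  have key : ∀ j : ℕ, j + 1 < n →
      U j = Aq * Complex.sin ((j : ℂ) * θ) + B * Complex.cos ((j : ℂ) * θ) ∧
      U (j + 1) = Aq * Complex.sin (((j : ℕ) + 1 : ℕ) * θ)
        + B * Complex.cos (((j : ℕ) + 1 : ℕ) * θ) := by
    intro j
    induction j with
    | zero =>
      intro _
      constructor
      · simp [hB]
      · push_cast
        rw [hAq, hB]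
        field_simp
        ring
    | succ k ih =>
      intro hk
      have hk' : k + 1 < n := by omega
      obtain ⟨ih1, ih2⟩ := ih hk'
      refine ⟨ih2, ?_⟩
      have hrec := hUrec k (by omega)
      rw [hrec, ih1, ih2]
      push_cast
      have t1 : ((k : ℂ) + 1 + 1) * θ = ((k : ℂ) + 1) * θ + θ := by ring
      have t2 : (k : ℂ) * θ = ((k : ℂ) + 1) * θ - θ := by ring
      rw [t1, t2, Complex.sin_add, Complex.cos_add, Complex.sin_sub, Complex.cos_sub]
      ring
  have CF : ∀ j : ℕ, j < n →
      U j = Aq * Complex.sin ((j : ℂ) * θ) + B * Complex.cos ((j : ℂ) * θ) := by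
    intro j hj
    rcases lt_or_ge (j + 1) n with h | h
    · exact (key j h).1
    · have e : j = (n - 2) + 1 := by omega
      rw [e]
      have := (key (n - 2) (by omega)).2
      exact_mod_cast this
  have hc1 : ((n - 1 : ℕ) : ℂ) = (n : ℂ) - 1 := by
    push_cast [Nat.cast_sub (by omega : 1 ≤ n)]; ring
  have hc2 : ((n - 2 : ℕ) : ℂ) = (n : ℂ) - 2 := by
    push_cast [Nat.cast_sub (by omega : 2 ≤ n)]; ring
  have u1 : U 1 = Aq * Complex.sin θ + B * Complex.cos θ := by
    have := CF 1 (by omega)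
    push_cast at this
    rw [one_mul] at this
    exact this
  have h1 : (s * Complex.sin θ) * Aq + (γ - s * Complex.cos θ) * B = 0 := by
    linear_combination hU1 - s * u1
  set y := ((n : ℂ) - 1) * θ with hy
  have un1 : U (n - 1) = Aq * Complex.sin y + B * Complex.cos y := by
    have := CF (n - 1) (by omega)
    rw [hc1] at this
    exact this
  have un2 : U (n - 2) = Aq * (Complex.sin y * Complex.cos θ - Complex.cos y * Complex.sin θ)
      + B * (Complex.cos y * Complex.cos θ + Complex.sin y * Complex.sin θ) := by
    have := CF (n - 2) (by omega)
    rw [hc2, show ((n : ℂ) - 2) * θ = y - θ by rw [hy]; ring,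
      Complex.sin_sub, Complex.cos_sub] at this
    exact this
  have h2 : (s * (Complex.sin y * Complex.cos θ - Complex.cos y * Complex.sin θ) - (2 * s * Complex.cos θ - δ) * Complex.sin y) * Aq
      + (s * (Complex.cos y * Complex.cos θ + Complex.sin y * Complex.sin θ) - (2 * s * Complex.cos θ - δ) * Complex.cos y) * B
      = 0 := by
    linear_combination hUn - s * un2 + (2 * s * Complex.cos θ - δ) * un1
  have hAB : ¬ (Aq = 0 ∧ B = 0) := by
    rintro ⟨hA0, hB0⟩
    obtain ⟨j, hj, hUj⟩ := hUnz
    apply hUj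
    rw [CF j hj, hA0, hB0]
    ring
  have hdet := det2_aux hAB h1 h2
  rw [show ((n : ℂ) + 1) * θ = (y + θ) + θ by rw [hy]; ring,
    show (n : ℂ) * θ = y + θ by rw [hy]; ring]
  simp only [Complex.sin_add, Complex.cos_add]
  linear_combination -hdet

/-- Case `sin θ = 0`. -/
lemma caseB (n : ℕ) (hn : 2 ≤ n) (γ δ s θ : ℂ) (U : ℕ → ℂ)
    (hU1 : s * U 1 = (2 * s * Complex.cos θ - γ) * U 0)
    (hUrec : ∀ k, k + 2 < n → U (k + 2) = 2 * Complex.cos θ * U (k + 1) - U k)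
    (hUn : s * U (n - 2) = (2 * s * Complex.cos θ - δ) * U (n - 1))
    (hUnz : ∃ j, j < n ∧ U j ≠ 0)
    (hsin : Complex.sin θ = 0) :
    s ^ 2 * ((n : ℂ) + 1) - Complex.cos θ * s * (γ + δ) * (n : ℂ)
      + γ * δ * ((n : ℂ) - 1) = 0 := by
  set ε := Complex.cos θ with hκ
  have hε : ε ^ 2 = 1 := by
    have h := Complex.sin_sq_add_cos_sq θ
    rw [hsin] at h
    linear_combination h
  have hεne : ε ≠ 0 := by
    intro h
    rw [h] at hε
    norm_num at hε
  set B := U 0 with hB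
  set Aq := ε * U 1 - U 0 with hAq
  have key : ∀ j : ℕ, j + 1 < n →
      U j = ε ^ j * (B + Aq * (j : ℂ)) ∧
      U (j + 1) = ε ^ (j + 1) * (B + Aq * ((j : ℂ) + 1)) := by
    intro j
    induction j with
    | zero =>
      intro _
      constructor
      · simp [hB]
      · rw [pow_one]
        push_cast
        rw [hAq, hB]
        linear_combination (-(U 1)) * hε
    | succ k ih =>
      intro hk
      obtain ⟨ih1, ih2⟩ := ih (by omega)
      refine ⟨by exact_mod_cast ih2, ?_⟩
      have hrec := hUrec k (by omega)
      rw [hrec, ih1, ih2]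
      push_cast
      rw [show k + 1 + 1 = k + 2 from rfl]
      have e1 : ε ^ (k + 2) = ε ^ k * ε ^ 2 := by ring
      have e2 : ε ^ (k + 1) = ε ^ k * ε := by ring
      rw [e1, e2]
      linear_combination (ε ^ k * (B + Aq * (k : ℂ))) * hε
  have CF : ∀ j : ℕ, j < n → U j = ε ^ j * (B + Aq * (j : ℂ)) := by
    intro j hj
    rcases lt_or_ge (j + 1) n with h | h
    · exact (key j h).1
    · have e : j = (n - 2) + 1 := by omega
      rw [e]
      have := (key (n - 2) (by omega)).2
      push_cast at this ⊢
      exact this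
  have hc1 : ((n - 1 : ℕ) : ℂ) = (n : ℂ) - 1 := by
    push_cast [Nat.cast_sub (by omega : 1 ≤ n)]; ring
  have hc2 : ((n - 2 : ℕ) : ℂ) = (n : ℂ) - 2 := by
    push_cast [Nat.cast_sub (by omega : 2 ≤ n)]; ring
  have u1 : U 1 = ε * (B + Aq) := by
    have := CF 1 (by omega)
    push_cast at this
    rw [pow_one] at this
    rw [this]; ring
  have h1 : (s * ε) * Aq + (γ - s * ε) * B = 0 := by
    linear_combination hU1 - s * u1
  have un1 : U (n - 1) = ε ^ (n - 1) * (B + Aq * ((n : ℂ) - 1)) := by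
    have := CF (n - 1) (by omega); rw [hc1] at this; exact this
  have un2 : U (n - 2) = ε ^ (n - 2) * (B + Aq * ((n : ℂ) - 2)) := by
    have := CF (n - 2) (by omega); rw [hc2] at this; exact this
  have hpow : ε ^ (n - 1) = ε ^ (n - 2) * ε := by
    rw [← pow_succ]
    congr 1
    omega
  have step1 : ε ^ (n - 2) * (s * (B + Aq * ((n : ℂ) - 2)))
      = ε ^ (n - 2) * ((2 * s * ε - δ) * (ε * (B + Aq * ((n : ℂ) - 1)))) := by
    linear_combination hUn - s * un2 + (2 * s * ε - δ) * un1
      + ((2 * s * ε - δ) * (B + Aq * ((n : ℂ) - 1))) * hpow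
  have step2 := mul_left_cancel₀ (pow_ne_zero _ hεne) step1
  have h2 : (s * ((n : ℂ) - 2) - (2 * s - δ * ε) * ((n : ℂ) - 1)) * Aq
      + (δ * ε - s) * B = 0 := by
    linear_combination step2 + 2 * s * (((n : ℂ) - 1) * Aq + B) * hε
  have hAB : ¬ (Aq = 0 ∧ B = 0) := by
    rintro ⟨hA0, hB0⟩
    obtain ⟨j, hj, hUj⟩ := hUnz
    apply hUj
    rw [CF j hj, hA0, hB0]
    ring
  have hdet := det2_aux hAB h1 h2
  linear_combination (-ε) * hdet
    - (s ^ 2 * ((n : ℂ) + 1) + γ * δ * ((n : ℂ) - 1) - s * δ * ε * (n : ℂ)) * hε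

/-- every eigenvalue of the `n×n` tridiagonal matrix with diagonal
`(γ+b, b, …, b, b+δ)`, subdiagonal `a` and superdiagonal `c` (`ac ≠ 0`) has the form
`b + 2√a√c·cos θ` with `θ` satisfying the stated transcendental equation. -/
theorem tridiagonal_eigenvalues (n : ℕ) (hn : 2 ≤ n) (a b c γ δ : ℂ) (hac : a * c ≠ 0)
    (sqa sqc : ℂ) (hsqa : sqa ^ 2 = a) (hsqc : sqc ^ 2 = c)
    (A : Matrix (Fin n) (Fin n) ℂ)
    (hA : ∀ i j : Fin n, A i j =
      if (i : ℕ) = (j : ℕ) then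
        (if (i : ℕ) = 0 then γ + b else if (i : ℕ) = n - 1 then b + δ else b)
      else if (i : ℕ) + 1 = (j : ℕ) then c
      else if (j : ℕ) + 1 = (i : ℕ) then a
      else 0)
    (μ : ℂ) (hμ : μ ∈ spectrum ℂ A) :
    ∃ θ : ℂ, μ = b + 2 * sqa * sqc * Complex.cos θ ∧
      (Complex.sin θ ≠ 0 →
        a * c * Complex.sin (((n : ℂ) + 1) * θ)
          - sqa * sqc * (γ + δ) * Complex.sin ((n : ℂ) * θ)
          + γ * δ * Complex.sin (((n : ℂ) - 1) * θ) = 0) ∧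
      (Complex.sin θ = 0 →
        a * c * ((n : ℂ) + 1) - Complex.cos θ * (sqa * sqc) * (γ + δ) * (n : ℂ)
          + γ * δ * ((n : ℂ) - 1) = 0) := by
  subst hsqa hsqc
  have hsa : sqa ≠ 0 := fun h => hac (by rw [h]; ring)
  have hsc : sqc ≠ 0 := fun h => hac (by rw [h]; ring)
  set s : ℂ := sqa * sqc with hs
  have hs0 : s ≠ 0 := mul_ne_zero hsa hsc
  -- choose θ
  obtain ⟨θ, hθ⟩ := Complex.cos_surjective ((μ - b) / (2 * s))
  have hμθ : μ = b + 2 * s * Complex.cos θ := by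
    rw [hθ]
    field_simp
    ring
  -- eigenvector
  have hmem := spectrum.mem_iff.mp hμ
  have hdet : Matrix.det (μ • (1 : Matrix (Fin n) (Fin n) ℂ) - A) = 0 := by
    by_contra hd
    apply hmem
    rw [Algebra.algebraMap_eq_smul_one]
    exact (Matrix.isUnit_iff_isUnit_det _).mpr (isUnit_iff_ne_zero.mpr hd)
  obtain ⟨v, hv0, hv⟩ := Matrix.exists_mulVec_eq_zero_iff.mpr hdet
  have hAv : A.mulVec v = μ • v := by
    have h := hv
    rw [Matrix.sub_mulVec, Matrix.smul_mulVec, Matrix.one_mulVec] at h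
    exact (sub_eq_zero.mp h).symm
  have hrow : ∀ i : Fin n, (∑ j : Fin n, A i j * v j) = μ * v i := by
    intro i
    have h := congrFun hAv i
    simpa [Matrix.mulVec, dotProduct] using h
  -- row 0
  have h0 : (γ + b) * v ⟨0, by omega⟩ + sqc ^ 2 * v ⟨1, by omega⟩ = μ * v ⟨0, by omega⟩ := by
    have h := hrow ⟨0, by omega⟩
    rw [Finset.sum_congr rfl (fun j _ => show A ⟨0, by omega⟩ j * v j
        = (if (j : ℕ) = 0 then (γ + b) * v j else 0)
          + (if (j : ℕ) = 1 then sqc ^ 2 * v j else 0) from by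
      rw [hA]
      simp only [Fin.val_mk]
      split_ifs <;> (first | ring1 | (exfalso; omega) | contradiction)),
      Finset.sum_add_distrib, fin_sum_ite (fun j => (γ + b) * v j) 0 (by omega),
      fin_sum_ite (fun j => sqc ^ 2 * v j) 1 (by omega)] at h
    exact h
  -- interior rows
  have hint : ∀ (k : ℕ) (hk : k + 2 < n),
      b * v ⟨k + 1, by omega⟩ + sqc ^ 2 * v ⟨k + 2, by omega⟩ + sqa ^ 2 * v ⟨k, by omega⟩
        = μ * v ⟨k + 1, by omega⟩ := by
    intro k hk
    have h := hrow ⟨k + 1, by omega⟩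
    rw [Finset.sum_congr rfl (fun j _ => show A ⟨k + 1, by omega⟩ j * v j
        = ((if (j : ℕ) = k + 1 then b * v j else 0)
          + (if (j : ℕ) = k + 2 then sqc ^ 2 * v j else 0))
          + (if (j : ℕ) = k then sqa ^ 2 * v j else 0) from by
      rw [hA]
      simp only [Fin.val_mk]
      split_ifs <;> (first | ring1 | (exfalso; omega) | contradiction)),
      Finset.sum_add_distrib, Finset.sum_add_distrib,
      fin_sum_ite (fun j => b * v j) (k + 1) (by omega),
      fin_sum_ite (fun j => sqc ^ 2 * v j) (k + 2) (by omega),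
      fin_sum_ite (fun j => sqa ^ 2 * v j) k (by omega)] at h
    exact h
  -- last row
  have hlast : sqa ^ 2 * v ⟨n - 2, by omega⟩ + (b + δ) * v ⟨n - 1, by omega⟩
      = μ * v ⟨n - 1, by omega⟩ := by
    have h := hrow ⟨n - 1, by omega⟩
    rw [Finset.sum_congr rfl (fun j _ => show A ⟨n - 1, by omega⟩ j * v j
        = (if (j : ℕ) = n - 2 then sqa ^ 2 * v j else 0)
          + (if (j : ℕ) = n - 1 then (b + δ) * v j else 0) from by
      rw [hA]
      simp only [Fin.val_mk]
      split_ifs <;> (first | ring1 | (exfalso; omega) | contradiction)),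
      Finset.sum_add_distrib,
      fin_sum_ite (fun j => sqa ^ 2 * v j) (n - 2) (by omega),
      fin_sum_ite (fun j => (b + δ) * v j) (n - 1) (by omega)] at h
    exact h
  -- rescaled sequence
  set U : ℕ → ℂ := fun j => (if h : j < n then v ⟨j, h⟩ else 0) * (sqc ^ j * sqa ^ (n - j))
    with hU
  have hUval : ∀ (j : ℕ) (h : j < n), U j = v ⟨j, h⟩ * (sqc ^ j * sqa ^ (n - j)) := by
    intro j h
    rw [hU]
    simp only
    rw [dif_pos h]
  -- the three U-equations
  have hU1 : s * U 1 = (2 * s * Complex.cos θ - γ) * U 0 := by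
    rw [hUval 1 (by omega), hUval 0 (by omega)]
    rw [show n - 0 = (n - 1) + 1 by omega, pow_succ]
    linear_combination (sqa ^ (n - 1) * sqa) * h0 + (sqa ^ (n - 1) * sqa * v ⟨0, by omega⟩) * hμθ
  have hUrec : ∀ k, k + 2 < n → U (k + 2) = 2 * Complex.cos θ * U (k + 1) - U k := by
    intro k hk
    rw [hUval (k + 2) (by omega), hUval (k + 1) (by omega), hUval k (by omega)]
    rw [show n - k = (n - (k + 2)) + 2 by omega, show n - (k + 1) = (n - (k + 2)) + 1 by omega,
      pow_add, pow_add]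
    linear_combination (sqc ^ k * sqa ^ (n - (k + 2))) * hint k hk
      + (sqc ^ k * sqa ^ (n - (k + 2)) * v ⟨k + 1, by omega⟩) * hμθ
  have hUn : s * U (n - 2) = (2 * s * Complex.cos θ - δ) * U (n - 1) := by
    rw [hUval (n - 2) (by omega), hUval (n - 1) (by omega)]
    rw [show n - (n - 2) = 2 by omega, show n - (n - 1) = 1 by omega,
      show sqc ^ (n - 1) = sqc ^ (n - 2) * sqc by rw [← pow_succ]; congr 1; omega]
    linear_combination (sqc ^ (n - 2) * sqc * sqa) * hlast
      + (sqc ^ (n - 2) * sqc * sqa * v ⟨n - 1, by omega⟩) * hμθ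
  have hUnz : ∃ j, j < n ∧ U j ≠ 0 := by
    obtain ⟨i, hi⟩ := Function.ne_iff.mp hv0
    refine ⟨(i : ℕ), i.isLt, ?_⟩
    rw [hUval i i.isLt]
    simp only [Fin.eta]
    exact mul_ne_zero (by simpa using hi)
      (mul_ne_zero (pow_ne_zero _ hsc) (pow_ne_zero _ hsa))
  refine ⟨θ, by rw [hμθ, hs]; ring, ?_, ?_⟩
  · intro hsin
    have := caseA n hn γ δ s θ U hU1 hUrec hUn hUnz hsin
    rw [hs] at this
    linear_combination this
  · intro hsin
    have := caseB n hn γ δ s θ U hU1 hUrec hUn hUnz hsin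
    rw [hs] at this
    linear_combination this
end

section
/- The eigenvalues of the k×k symmetric tridiagonal matrix B with diagonal (2, 2, ..., 2, 1), and −1 on the sub- and super-diagonals, are λ_j = 2 + 2cos(2jπ/(2k+1)) for j = 1, ..., k; in particular all eigenvalues of B are strictly less than 4. -/
open Real Matrix Module

private lemma sin_rec' (a b : ℝ) :
    Real.sin (a - b) + Real.sin (a + b) = 2 * Real.cos b * Real.sin a := by
  rw [Real.sin_add, Real.sin_sub]; ring

private lemma tridiag_mulVec {k : ℕ} (hk : 1 ≤ k) (B : Matrix (Fin k) (Fin k) ℝ)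
    (hB : ∀ i j : Fin k, B i j =
      if (i : ℕ) = (j : ℕ) then (if (i : ℕ) = k - 1 then 1 else 2)
      else if (i : ℕ) + 1 = (j : ℕ) ∨ (j : ℕ) + 1 = (i : ℕ) then -1
      else 0)
    (x : ℕ → ℝ) (hx0 : x 0 = 0) (i : Fin k) :
    B.mulVec (fun l => x ((l : ℕ) + 1)) i
      = (if (i : ℕ) + 1 = k then x ((i : ℕ) + 1) else 2 * x ((i : ℕ) + 1))
        - x (i : ℕ) - (if (i : ℕ) + 1 = k then 0 else x ((i : ℕ) + 2)) := by
  have hik := i.isLt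
  have hsplit : ∀ l : Fin k, B i l * x ((l : ℕ) + 1) =
      (if l = i then (if (i : ℕ) + 1 = k then 1 else 2) * x ((i : ℕ) + 1) else 0)
      + ((if (l : ℕ) + 1 = (i : ℕ) then -x (i : ℕ) else 0)
      + (if (l : ℕ) = (i : ℕ) + 1 then -x ((i : ℕ) + 2) else 0)) := by
    intro l
    have hlk := l.isLt
    rw [hB i l]
    simp only [Fin.ext_iff]
    by_cases h1 : (l : ℕ) = (i : ℕ)
    · rw [h1, if_pos rfl, if_pos rfl,
        if_neg (show ¬((i : ℕ) + 1 = (i : ℕ)) by omega),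
        if_neg (show ¬((i : ℕ) = (i : ℕ) + 1) by omega)]
      simp only [show ((i : ℕ) = k - 1) ↔ ((i : ℕ) + 1 = k) from by omega]
      ring
    · rw [if_neg (fun h => h1 h.symm), if_neg h1]
      by_cases h2 : (l : ℕ) + 1 = (i : ℕ)
      · rw [if_pos (Or.inr h2), if_pos h2,
          if_neg (show ¬((l : ℕ) = (i : ℕ) + 1) by omega), h2]
        ring
      · rw [if_neg h2]
        by_cases h3 : (l : ℕ) = (i : ℕ) + 1
        · rw [if_pos (Or.inl h3.symm), if_pos h3,
            show (l : ℕ) + 1 = (i : ℕ) + 2 by omega]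
          ring
        · rw [if_neg (fun h => h.elim (fun h' => h3 h'.symm) h2), if_neg h3]
          ring
  have hsum : B.mulVec (fun l => x ((l : ℕ) + 1)) i
      = ∑ l : Fin k, B i l * x ((l : ℕ) + 1) := rfl
  rw [hsum, Finset.sum_congr rfl (fun l _ => hsplit l), Finset.sum_add_distrib,
    Finset.sum_add_distrib, Finset.sum_ite_eq' Finset.univ i, if_pos (Finset.mem_univ i)]
  have h2 : (∑ l : Fin k, if (l : ℕ) + 1 = (i : ℕ) then -x (i : ℕ) else 0) = -x (i : ℕ) := by
    by_cases hi0 : (i : ℕ) = 0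
    · rw [Finset.sum_eq_zero (fun l _ => if_neg (by omega)), hi0, hx0, neg_zero]
    · rw [Finset.sum_eq_single (⟨(i : ℕ) - 1, by omega⟩ : Fin k)]
      · rw [if_pos (by simp; omega)]
      · intro l _ hl
        rw [if_neg (fun h => hl (by apply Fin.ext; simp; omega))]
      · intro h; exact absurd (Finset.mem_univ _) h
  have h3 : (∑ l : Fin k, if (l : ℕ) = (i : ℕ) + 1 then -x ((i : ℕ) + 2) else 0)
      = if (i : ℕ) + 1 = k then 0 else -x ((i : ℕ) + 2) := by
    by_cases hik' : (i : ℕ) + 1 = k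
    · rw [if_pos hik', Finset.sum_eq_zero (fun l _ => if_neg (by omega))]
    · rw [if_neg hik', Finset.sum_eq_single (⟨(i : ℕ) + 1, by omega⟩ : Fin k)]
      · rw [if_pos (by simp)]
      · intro l _ hl
        rw [if_neg (fun h => hl (by apply Fin.ext; simpa using h))]
      · intro h; exact absurd (Finset.mem_univ _) h
  rw [h2, h3]
  split_ifs <;> ring

private lemma branch_eig {k : ℕ} (hk : 1 ≤ k) (B : Matrix (Fin k) (Fin k) ℝ)
    (hB : ∀ i j : Fin k, B i j =
      if (i : ℕ) = (j : ℕ) then (if (i : ℕ) = k - 1 then 1 else 2)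
      else if (i : ℕ) + 1 = (j : ℕ) ∨ (j : ℕ) + 1 = (i : ℕ) then -1
      else 0) (j : Fin k) :
    Module.End.HasEigenvector (Matrix.mulVecLin B)
      (2 + 2 * Real.cos (2 * ((j : ℕ) + 1 : ℝ) * Real.pi / (2 * (k : ℝ) + 1)))
      (fun l : Fin k => Real.sin (((l : ℕ) + 1 : ℝ) *
        ((2 * (k : ℝ) - 1 - 2 * (j : ℕ)) * Real.pi / (2 * (k : ℝ) + 1)))) := by
  have hjk : ((j : ℕ) : ℝ) + 1 ≤ (k : ℝ) := by exact_mod_cast j.isLt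
  set φ : ℝ := (2 * (k : ℝ) - 1 - 2 * (j : ℕ)) * Real.pi / (2 * (k : ℝ) + 1) with hφ
  set μ : ℝ := 2 + 2 * Real.cos (2 * ((j : ℕ) + 1 : ℝ) * Real.pi / (2 * (k : ℝ) + 1)) with hμdef
  have hk1 : (1 : ℝ) ≤ (k : ℝ) := by exact_mod_cast hk
  have hden : (0 : ℝ) < 2 * (k : ℝ) + 1 := by linarith
  have hφpos : 0 < φ := by
    apply div_pos (mul_pos (by linarith) Real.pi_pos) hden
  have hφlt : φ < Real.pi := by
    rw [div_lt_iff₀ hden]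
    nlinarith [Real.pi_pos]
  have hμ : μ = 2 - 2 * Real.cos φ := by
    have harg : φ = Real.pi - 2 * ((j : ℕ) + 1 : ℝ) * Real.pi / (2 * (k : ℝ) + 1) := by
      rw [hφ, eq_sub_iff_add_eq, ← add_div, div_eq_iff hden.ne']
      ring
    rw [hμdef, harg, Real.cos_pi_sub]
    ring
  -- the sequence
  set x : ℕ → ℝ := fun n => Real.sin ((n : ℝ) * φ) with hx
  have hx0 : x 0 = 0 := by simp [hx]
  have hrec : ∀ n : ℕ, x n + x (n + 2) = 2 * Real.cos φ * x (n + 1) := by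
    intro n
    have h := sin_rec' (((n : ℕ) + 1 : ℝ) * φ) φ
    have e1 : ((n : ℕ) + 1 : ℝ) * φ - φ = (n : ℝ) * φ := by ring
    have e2 : ((n : ℕ) + 1 : ℝ) * φ + φ = ((n : ℝ) + 2) * φ := by ring
    rw [e1, e2] at h
    rw [hx]
    push_cast
    linarith [h]
  have hend : x (k + 1) = x k := by
    set t : ℕ := k - 1 - (j : ℕ) with ht
    have htn : t + (j : ℕ) + 1 = k := by have := j.isLt; omega
    have htr : (t : ℝ) = (k : ℝ) - 1 - (j : ℕ) := by
      have : ((t : ℕ) : ℝ) + ((j : ℕ) : ℝ) + 1 = (k : ℝ) := by exact_mod_cast congrArg (Nat.cast : ℕ → ℝ) htn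
      linarith
    have hNφ : ((k : ℝ) + 1) * φ = (2 * (t : ℝ) + 1) * Real.pi - (k : ℝ) * φ := by
      rw [hφ, htr]
      field_simp
      ring
    rw [hx]
    push_cast
    rw [hNφ, Real.sin_sub]
    have hs : Real.sin ((2 * (t : ℝ) + 1) * Real.pi) = 0 := by
      have : (2 * (t : ℝ) + 1) * Real.pi = ((2 * t + 1 : ℕ) : ℝ) * Real.pi := by push_cast; ring
      rw [this, Real.sin_nat_mul_pi]
    have hc : Real.cos ((2 * (t : ℝ) + 1) * Real.pi) = -1 := by
      have : (2 * (t : ℝ) + 1) * Real.pi = Real.pi + (t : ℤ) * (2 * Real.pi) := by push_cast; ring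
      rw [this, Real.cos_add_int_mul_two_pi, Real.cos_pi]
    rw [hs, hc]
    ring
  constructor
  · rw [Module.End.mem_eigenspace_iff]
    funext i
    have hmv : Matrix.mulVecLin B (fun l : Fin k => Real.sin (((l : ℕ) + 1 : ℝ) * φ)) i
        = B.mulVec (fun l : Fin k => x ((l : ℕ) + 1)) i := by
      simp only [Matrix.mulVecLin_apply, hx]
      congr 1
      funext l
      push_cast
      ring_nf
    rw [hmv, tridiag_mulVec hk B hB x hx0 i]
    have hval : (μ • fun l : Fin k => Real.sin (((l : ℕ) + 1 : ℝ) * φ)) i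
        = μ * x ((i : ℕ) + 1) := by
      simp only [Pi.smul_apply, smul_eq_mul, hx]
      push_cast
      ring_nf
    rw [hval, hμ]
    by_cases hik : (i : ℕ) + 1 = k
    · rw [if_pos hik, if_pos hik]
      have h1 := hrec (i : ℕ)
      have h2 : x ((i : ℕ) + 2) = x ((i : ℕ) + 1) := by
        rw [show (i : ℕ) + 2 = k + 1 by omega, show (i : ℕ) + 1 = k by omega, hend]
      rw [h2] at h1
      linarith
    · rw [if_neg hik, if_neg hik]
      have h1 := hrec (i : ℕ)
      linarith
  · intro hv
    have h0 := congrFun hv (⟨0, by omega⟩ : Fin k)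
    simp only [Fin.val_mk, Nat.cast_zero, zero_add, one_mul, Pi.zero_apply] at h0
    exact absurd h0 (ne_of_gt (Real.sin_pos_of_pos_of_lt_pi hφpos hφlt))

/-- the eigenvalues of the `k×k` tridiagonal matrix with diagonal
`(2, …, 2, 1)` and `−1` off-diagonals are `2 + 2cos(2jπ/(2k+1))`, `j = 1, …, k`;
in particular they are all strictly less than `4`. -/
theorem branch_matrix_eigs (k : ℕ) (hk : 1 ≤ k) (B : Matrix (Fin k) (Fin k) ℝ)
    (hB : ∀ i j : Fin k, B i j =
      if (i : ℕ) = (j : ℕ) then (if (i : ℕ) = k - 1 then 1 else 2)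
      else if (i : ℕ) + 1 = (j : ℕ) ∨ (j : ℕ) + 1 = (i : ℕ) then -1
      else 0) :
    (∀ μ : ℝ, μ ∈ spectrum ℝ B ↔
      ∃ j : ℕ, 1 ≤ j ∧ j ≤ k ∧
        μ = 2 + 2 * Real.cos (2 * (j : ℝ) * Real.pi / (2 * (k : ℝ) + 1))) ∧
    (∀ μ ∈ spectrum ℝ B, μ < 4) := by
  haveI : NeZero k := ⟨by omega⟩
  have hk1 : (1 : ℝ) ≤ (k : ℝ) := by exact_mod_cast hk
  have hden : (0 : ℝ) < 2 * (k : ℝ) + 1 := by linarith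
  have hspec : spectrum ℝ B = spectrum ℝ (Matrix.mulVecLin B) := by
    have h := AlgEquiv.spectrum_eq
      (Matrix.toLinAlgEquiv' : Matrix (Fin k) (Fin k) ℝ ≃ₐ[ℝ] _) B
    exact h.symm
  set f : Module.End ℝ (Fin k → ℝ) := Matrix.mulVecLin B with hf
  set μs : Fin k → ℝ :=
    fun j => 2 + 2 * Real.cos (2 * ((j : ℕ) + 1 : ℝ) * Real.pi / (2 * (k : ℝ) + 1)) with hμs
  set vs : Fin k → (Fin k → ℝ) :=
    fun j => fun l : Fin k => Real.sin (((l : ℕ) + 1 : ℝ) *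
        ((2 * (k : ℝ) - 1 - 2 * (j : ℕ)) * Real.pi / (2 * (k : ℝ) + 1))) with hvs
  have hev : ∀ j : Fin k, Module.End.HasEigenvector f (μs j) (vs j) :=
    fun j => branch_eig hk B hB j
  have hθmem : ∀ j : Fin k,
      2 * ((j : ℕ) + 1 : ℝ) * Real.pi / (2 * (k : ℝ) + 1) ∈ Set.Icc 0 Real.pi := by
    intro j
    have hjk : ((j : ℕ) : ℝ) + 1 ≤ (k : ℝ) := by exact_mod_cast j.isLt
    constructor
    · positivity
    · rw [div_le_iff₀ hden]
      nlinarith [Real.pi_pos]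
  have hinj : Function.Injective μs := by
    intro a b hab
    have h1 : Real.cos (2 * ((a : ℕ) + 1 : ℝ) * Real.pi / (2 * (k : ℝ) + 1))
        = Real.cos (2 * ((b : ℕ) + 1 : ℝ) * Real.pi / (2 * (k : ℝ) + 1)) := by
      simp only [hμs] at hab; linarith
    have h2 := Real.injOn_cos (hθmem a) (hθmem b) h1
    field_simp [Real.pi_ne_zero, hden.ne'] at h2
    exact Fin.ext (by exact_mod_cast (by linarith : ((a : ℕ) : ℝ) = ((b : ℕ) : ℝ)))
  have hLI := Module.End.eigenvectors_linearIndependent' f μs hinj vs hev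
  have hcard : Fintype.card (Fin k) = Module.finrank ℝ (Fin k → ℝ) := by simp
  have hspan : Submodule.span ℝ (Set.range vs) = ⊤ := by
    have hb := (basisOfLinearIndependentOfCardEqFinrank hLI hcard).span_eq
    rwa [coe_basisOfLinearIndependentOfCardEqFinrank] at hb
  have h_iSup : (⨆ μ' ∈ Set.range μs, Module.End.eigenspace f μ') = ⊤ := by
    rw [eq_top_iff, ← hspan, Submodule.span_le]
    rintro - ⟨j, rfl⟩
    simp only [SetLike.mem_coe]
    exact Submodule.mem_iSup_of_mem (μs j) (Submodule.mem_iSup_of_mem ⟨j, rfl⟩ (hev j).1)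
  have hiff : ∀ μ : ℝ, μ ∈ spectrum ℝ B ↔
      ∃ j : ℕ, 1 ≤ j ∧ j ≤ k ∧
        μ = 2 + 2 * Real.cos (2 * (j : ℝ) * Real.pi / (2 * (k : ℝ) + 1)) := by
    intro μ
    constructor
    · intro hμ
      rw [hspec, ← Module.End.hasEigenvalue_iff_mem_spectrum] at hμ
      have hrange : μ ∈ Set.range μs := by
        by_contra hnot
        have hdis := (Module.End.eigenspaces_iSupIndep f).disjoint_biSup hnot
        rw [h_iSup, disjoint_top] at hdis
        exact hμ hdis
      obtain ⟨j, hj⟩ := hrange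
      refine ⟨(j : ℕ) + 1, by omega, by have := j.isLt; omega, ?_⟩
      rw [← hj, hμs]
      push_cast
      ring_nf
    · rintro ⟨jn, hj1, hjk2, rfl⟩
      set jf : Fin k := ⟨jn - 1, by omega⟩ with hjf
      have hval : μs jf = 2 + 2 * Real.cos (2 * (jn : ℝ) * Real.pi / (2 * (k : ℝ) + 1)) := by
        have h2 : ((jf : ℕ) : ℝ) + 1 = (jn : ℝ) := by
          have : (jf : ℕ) + 1 = jn := by simp [hjf]; omega
          exact_mod_cast this
        simp only [hμs]
        rw [h2]
      rw [hspec, ← Module.End.hasEigenvalue_iff_mem_spectrum]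
      exact hval ▸ Module.End.hasEigenvalue_of_hasEigenvector (hev jf)
  refine ⟨hiff, ?_⟩
  intro μ hμ
  obtain ⟨jn, hj1, hjk2, rfl⟩ := (hiff μ).1 hμ
  have hjr : (1 : ℝ) ≤ (jn : ℝ) := by exact_mod_cast hj1
  have hjr2 : (jn : ℝ) ≤ (k : ℝ) := by exact_mod_cast hjk2
  have hθpos : 0 < 2 * (jn : ℝ) * Real.pi / (2 * (k : ℝ) + 1) := by
    apply div_pos (by nlinarith [Real.pi_pos]) hden
  have hθle : 2 * (jn : ℝ) * Real.pi / (2 * (k : ℝ) + 1) ≤ Real.pi := by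
    rw [div_le_iff₀ hden]
    nlinarith [Real.pi_pos]
  have hcos := Real.cos_lt_cos_of_nonneg_of_le_pi (le_refl 0) hθle hθpos
  rw [Real.cos_zero] at hcos
  linarith
end

section
/- Define the sequence (α_k)_{k≥0} by α_0 = −1 and α_k = 1/(λ − 2 − α_{k−1}) for k ≥ 1, where λ ≥ 4 is a real parameter. Setting x = (λ − 2 − √(λ(λ−4)))/2 and y = (λ − 2 + √(λ(λ−4)))/2, one has: for λ > 4, α_k = (x^k y (x+1) − x y^k (y+1)) / (x^k (x+1) − y^k (y+1)) and α_k ∈ (0, (2k−1)/(2k+1)); for λ = 4, α_k = (2k−1)/(2k+1) < 1. -/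
/-- Auxiliary sequence `A_k = x^k (x+1) - y^k (y+1)`. -/
noncomputable def Aseq (x y : ℝ) (k : ℕ) : ℝ := x ^ k * (x + 1) - y ^ k * (y + 1)

lemma Aseq_rec (x y lam : ℝ) (hxy : x * y = 1) (hsum : x + y = lam - 2) (k : ℕ) :
    Aseq x y (k + 2) = (lam - 2) * Aseq x y (k + 1) - Aseq x y k := by
  simp only [Aseq, pow_succ]
  linear_combination (-(x ^ k * (x + 1) - y ^ k * (y + 1))) * hxy
    + (x ^ k * x * (x + 1) - y ^ k * y * (y + 1)) * hsum

lemma Aseq_neg (x y : ℝ) (hx0 : 0 < x) (hx1 : x < 1) (hy1 : 1 < y) (k : ℕ) :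
    Aseq x y k < 0 := by
  have h1 : x ^ k ≤ 1 := pow_le_one₀ hx0.le hx1.le
  have h2 : (1 : ℝ) ≤ y ^ k := one_le_pow₀ hy1.le
  have hxk : 0 < x ^ k := pow_pos hx0 k
  simp only [Aseq]
  nlinarith

/-- closed form and bounds for the continued-fraction sequence
`α_0 = −1`, `α_k = 1/(λ − 2 − α_{k−1})`, for `λ ≥ 4`, where
`x = (λ − 2 − √(λ(λ−4)))/2` and `y = (λ − 2 + √(λ(λ−4)))/2`. -/
theorem alpha_closed_form (lam : ℝ) (hlam : 4 ≤ lam) (α : ℕ → ℝ)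
    (h0 : α 0 = -1) (hrec : ∀ k : ℕ, α (k + 1) = 1 / (lam - 2 - α k))
    (x y : ℝ) (hx : x = (lam - 2 - Real.sqrt (lam * (lam - 4))) / 2)
    (hy : y = (lam - 2 + Real.sqrt (lam * (lam - 4))) / 2) :
    (4 < lam → ∀ k : ℕ, 1 ≤ k →
      α k = (x ^ k * y * (x + 1) - x * y ^ k * (y + 1))
              / (x ^ k * (x + 1) - y ^ k * (y + 1)) ∧
        0 < α k ∧ α k < (2 * (k : ℝ) - 1) / (2 * (k : ℝ) + 1)) ∧
    (lam = 4 → ∀ k : ℕ, 1 ≤ k →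
      α k = (2 * (k : ℝ) - 1) / (2 * (k : ℝ) + 1) ∧
        (2 * (k : ℝ) - 1) / (2 * (k : ℝ) + 1) < 1) := by
  constructor
  · -- case 4 < lam
    intro hl4
    have hsq : Real.sqrt (lam * (lam - 4)) ^ 2 = lam * (lam - 4) :=
      Real.sq_sqrt (by nlinarith)
    have hspos : 0 < Real.sqrt (lam * (lam - 4)) :=
      Real.sqrt_pos.mpr (by nlinarith)
    have hxy : x * y = 1 := by rw [hx, hy]; nlinarith [hsq]
    have hsum : x + y = lam - 2 := by rw [hx, hy]; ring
    have hy1 : 1 < y := by rw [hy]; nlinarith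
    have hx0 : 0 < x := by nlinarith
    have hx1 : x < 1 := by nlinarith
    have hAneg : ∀ k : ℕ, Aseq x y k < 0 := Aseq_neg x y hx0 hx1 hy1
    have hAne : ∀ k : ℕ, Aseq x y k ≠ 0 := fun k => (hAneg k).ne
    -- bounds by induction
    have hbound : ∀ n : ℕ, 0 < α (n + 1) ∧
        α (n + 1) < (2 * (n : ℝ) + 1) / (2 * (n : ℝ) + 3) := by
      intro n
      induction n with
      | zero =>
        rw [hrec 0, h0]
        have h3 : (0 : ℝ) < lam - 2 - (-1) := by linarith
        refine ⟨div_pos one_pos h3, ?_⟩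
        push_cast
        rw [div_lt_div_iff₀ h3 (by norm_num)]
        nlinarith
      | succ m ih =>
        obtain ⟨ihp, ihb⟩ := ih
        have hm0 : (0 : ℝ) < 2 * (m : ℝ) + 3 := by positivity
        have ihb' : α (m + 1) * (2 * (m : ℝ) + 3) < 2 * (m : ℝ) + 1 :=
          (lt_div_iff₀ hm0).mp ihb
        have hd : (2 * (m : ℝ) + 5) / (2 * (m : ℝ) + 3) < lam - 2 - α (m + 1) := by
          rw [div_lt_iff₀ hm0]
          nlinarith [mul_pos (show (0 : ℝ) < lam - 4 by linarith) hm0]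
        have hd0 : 0 < lam - 2 - α (m + 1) := by
          refine lt_trans ?_ hd; positivity
        have hd' : 2 * (m : ℝ) + 5 < (lam - 2 - α (m + 1)) * (2 * (m : ℝ) + 3) :=
          (div_lt_iff₀ hm0).mp hd
        rw [hrec (m + 1)]
        refine ⟨div_pos one_pos hd0, ?_⟩
        push_cast
        rw [div_lt_div_iff₀ hd0 (by positivity)]
        nlinarith
    -- closed form by induction
    have hform : ∀ n : ℕ, α (n + 1) = Aseq x y n / Aseq x y (n + 1) := by
      intro n
      induction n with
      | zero =>
        rw [hrec 0, h0]
        have e1 : Aseq x y 1 = Aseq x y 0 * (lam - 1) := by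
          simp only [Aseq, pow_one, pow_zero]
          linear_combination (x - y) * hsum
        rw [e1, div_mul_cancel_left₀ (hAne 0), one_div]
        congr 1
        ring
      | succ m ih =>
        rw [hrec (m + 1), ih]
        have h1 : lam - 2 - Aseq x y m / Aseq x y (m + 1)
            = Aseq x y (m + 2) / Aseq x y (m + 1) := by
          rw [Aseq_rec x y lam hxy hsum m, eq_div_iff (hAne (m + 1)), sub_mul,
            div_mul_cancel₀ _ (hAne (m + 1))]
        rw [h1, one_div_div]
    intro k hk
    obtain ⟨n, rfl⟩ := Nat.exists_eq_add_of_le' hk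
    refine ⟨?_, ?_, ?_⟩
    · rw [hform n]
      have hN : x ^ (n + 1) * y * (x + 1) - x * y ^ (n + 1) * (y + 1) = Aseq x y n := by
        simp only [Aseq, pow_succ]
        linear_combination (x ^ n * (x + 1) - y ^ n * (y + 1)) * hxy
      rw [hN]
      rfl
    · exact (hbound n).1
    · have h := (hbound n).2
      have he : (2 * ((n : ℝ) + 1) - 1) / (2 * ((n : ℝ) + 1) + 1)
          = (2 * (n : ℝ) + 1) / (2 * (n : ℝ) + 3) := by ring_nf
      push_cast
      rw [he]
      exact h
  · -- case lam = 4
    intro hl4 k hk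
    subst hl4
    have hform : ∀ n : ℕ, α (n + 1) = (2 * (n : ℝ) + 1) / (2 * (n : ℝ) + 3) := by
      intro n
      induction n with
      | zero => rw [hrec 0, h0]; norm_num
      | succ m ih =>
        rw [hrec (m + 1), ih]
        have hm0 : (0 : ℝ) < 2 * (m : ℝ) + 3 := by positivity
        have hden : (4 : ℝ) - 2 - (2 * (m : ℝ) + 1) / (2 * (m : ℝ) + 3)
            = (2 * (m : ℝ) + 5) / (2 * (m : ℝ) + 3) := by
          rw [eq_div_iff hm0.ne']
          field_simp
          ring
        rw [hden, one_div_div]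
        push_cast
        ring
    obtain ⟨n, rfl⟩ := Nat.exists_eq_add_of_le' hk
    constructor
    · rw [hform n]; push_cast; ring
    · rw [div_lt_one (by positivity)]
      linarith
end

section
/- In the base case of trunk length m ≥ 2 with exactly 2 T-junctions: if a uniform tree H with 2 T-junctions and trunk length m ≥ 2 is split by removing a trunk edge not incident to either T-junction into two starlike trees S_1 and S_2, then λ_1(H) ≥ λ_2(H) ≥ 4, i.e., H has at least two Laplacian eigenvalues ≥ 4. -/
open Finset Matrix in
lemma card_ge_two_of_plane {n : Type*} [Fintype n] [DecidableEq n] [Nonempty n]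
    (A : Matrix n n ℝ) (hA : A.IsHermitian) (c : ℝ) (x y : n → ℝ)
    (hind : ∀ a b : ℝ, a • x + b • y = 0 → a = 0 ∧ b = 0)
    (hQ : ∀ a b : ℝ, c * ((a • x + b • y) ⬝ᵥ (a • x + b • y))
        ≤ (a • x + b • y) ⬝ᵥ (A *ᵥ (a • x + b • y))) :
    2 ≤ (Finset.univ.filter fun i => c ≤ hA.eigenvalues i).card := by
  classical
  set B := hA.eigenvectorBasis with hB
  set e := (WithLp.equiv 2 (n → ℝ)).symm with he
  -- inner products as dot products
  have hinner : ∀ (w : EuclideanSpace ℝ n) (z : n → ℝ),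
      (inner ℝ w (e z) : ℝ) = (fun i => w i) ⬝ᵥ z := by
    intro w z
    simp [PiLp.inner_apply, WithLp.equiv_symm_apply, PiLp.toLp_apply, dotProduct, e, RCLike.inner_apply]
    exact Finset.sum_congr rfl fun _ _ => mul_comm _ _
  have hinner' : ∀ (w : EuclideanSpace ℝ n) (z : n → ℝ),
      (inner ℝ (e z) w : ℝ) = (fun i => w i) ⬝ᵥ z := by
    intro w z
    simp [PiLp.inner_apply, WithLp.equiv_symm_apply, PiLp.toLp_apply, dotProduct, e,
      RCLike.inner_apply, mul_comm]
  have hsym : ∀ (w₁ w₂ : n → ℝ), (inner ℝ (e w₁) (e w₂) : ℝ) = w₁ ⬝ᵥ w₂ := by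
    intro w₁ w₂
    simp [PiLp.inner_apply, WithLp.equiv_symm_apply, PiLp.toLp_apply, dotProduct, e, RCLike.inner_apply]
    exact Finset.sum_congr rfl fun _ _ => mul_comm _ _
  -- coefficient of A*ᵥ z in eigenbasis
  have hcoefA : ∀ (z : n → ℝ) (i : n),
      (fun j => B i j) ⬝ᵥ (A *ᵥ z) = hA.eigenvalues i * ((fun j => B i j) ⬝ᵥ z) := by
    intro z i
    have hAT : Aᵀ = A := by
      rw [← Matrix.conjTranspose_eq_transpose_of_trivial]; exact hA.eq
    have h1 : (fun j => B i j) ⬝ᵥ (A *ᵥ z) = (A *ᵥ (fun j => B i j)) ⬝ᵥ z := by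
      rw [Matrix.dotProduct_mulVec, ← Matrix.mulVec_transpose, hAT]
    have h2 : (A *ᵥ fun j => B i j) = hA.eigenvalues i • (fun j => B i j) :=
      hA.mulVec_eigenvectorBasis i
    rw [h1, h2, smul_dotProduct]
    rfl
  -- Parseval
  have hpar : ∀ (z w : n → ℝ), z ⬝ᵥ w
      = ∑ i, ((fun j => B i j) ⬝ᵥ z) * ((fun j => B i j) ⬝ᵥ w) := by
    intro z w
    rw [← hsym]
    rw [← B.sum_inner_mul_inner (e z) (e w)]
    refine Finset.sum_congr rfl fun i _ => ?_
    rw [hinner' (B i) z, hinner (B i) w]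
  by_contra hcard
  push_neg at hcard
  have hle1 : (Finset.univ.filter fun i => c ≤ hA.eigenvalues i).card ≤ 1 := by omega
  obtain ⟨i₀, hsub⟩ := Finset.card_le_one_iff_subset_singleton.mp hle1
  set cx : ℝ := (fun j => B i₀ j) ⬝ᵥ x with hcx'
  set cy : ℝ := (fun j => B i₀ j) ⬝ᵥ y with hcy'
  obtain ⟨a, b, hab, horth⟩ :
      ∃ a b : ℝ, ¬(a = 0 ∧ b = 0) ∧ a * cx + b * cy = 0 := by
    by_cases hcx : cx = 0
    · exact ⟨1, 0, by simp, by simp [hcx]⟩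
    · exact ⟨cy, -cx, fun h => hcx (by simpa using h.2), by ring⟩
  set z : n → ℝ := a • x + b • y with hz
  have hzne : z ≠ 0 := fun h => hab (hind a b (by rw [← hz]; exact h))
  set co : n → ℝ := fun i => (fun j => B i j) ⬝ᵥ z with hco
  have hcoz : co i₀ = 0 := by
    have : co i₀ = a * cx + b * cy := by
      simp [hco, hz, hcx', hcy', dotProduct_add, dotProduct_smul,
        smul_eq_mul]
    rw [this, horth]
  have h1 : z ⬝ᵥ (A *ᵥ z) = ∑ i, hA.eigenvalues i * (co i)^2 := by
    rw [hpar z (A *ᵥ z)]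
    refine Finset.sum_congr rfl fun i _ => ?_
    rw [hcoefA]; simp [hco]; ring
  have h2 : z ⬝ᵥ z = ∑ i, (co i)^2 := by
    rw [hpar z z]
    refine Finset.sum_congr rfl fun i _ => ?_
    simp [hco]; ring
  have hex : ∃ i, co i ≠ 0 := by
    by_contra h
    push_neg at h
    apply hzne
    have hzz : z ⬝ᵥ z = 0 := by rw [h2]; simp [h]
    exact (dotProduct_self_eq_zero).mp hzz
  obtain ⟨i₁, hi₁⟩ := hex
  have hi₁S : hA.eigenvalues i₁ < c := by
    by_contra hc
    push_neg at hc
    have hmem : i₁ ∈ (Finset.univ.filter fun i => c ≤ hA.eigenvalues i) :=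
      Finset.mem_filter.mpr ⟨Finset.mem_univ _, hc⟩
    have : i₁ = i₀ := Finset.mem_singleton.mp (hsub hmem)
    rw [this, hcoz] at hi₁
    exact hi₁ rfl
  have hlt : ∑ i, hA.eigenvalues i * (co i)^2 < ∑ i, c * (co i)^2 := by
    apply Finset.sum_lt_sum
    · intro i _
      by_cases hiS : c ≤ hA.eigenvalues i
      · have : i = i₀ := Finset.mem_singleton.mp
          (hsub (Finset.mem_filter.mpr ⟨Finset.mem_univ _, hiS⟩))
        rw [this, hcoz]; simp
      · push_neg at hiS
        nlinarith [sq_nonneg (co i)]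
    · refine ⟨i₁, Finset.mem_univ _, ?_⟩
      have : (0:ℝ) < (co i₁)^2 := by positivity
      nlinarith
  have hq := hQ a b
  rw [← hz] at hq
  rw [h1, h2] at hq
  rw [← Finset.mul_sum] at hlt
  linarith


lemma sorted_two_large {l : List ℝ} (hl : l.Pairwise (· ≤ ·)) (hn : 2 ≤ l.length)
    (p : ℝ → Bool) (hp : ∀ a : ℝ, p a = true ↔ (4:ℝ) ≤ a)
    (h2 : 2 ≤ l.countP p) :
    (4:ℝ) ≤ l.getD (l.length - 2) 0 ∧ l.getD (l.length - 2) 0 ≤ l.getD (l.length - 1) 0 := by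
  have h1 : l.length - 2 < l.length := by omega
  have h0 : l.length - 1 < l.length := by omega
  rw [List.getD_eq_getElem _ _ h1, List.getD_eq_getElem _ _ h0]
  have hmono := List.pairwise_iff_getElem.mp hl
  constructor
  · by_contra hlt
    push_neg at hlt
    have htd := List.take_append_drop (l.length - 1) l
    have hcount : l.countP p = (l.take (l.length - 1)).countP p
        + (l.drop (l.length - 1)).countP p := by
      conv_lhs => rw [← htd]
      rw [List.countP_append]
    have hzero : (l.take (l.length - 1)).countP p = 0 := by
      rw [List.countP_eq_zero]
      intro a ha
      obtain ⟨i, hi, rfl⟩ := List.mem_iff_getElem.mp ha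
      rw [List.getElem_take]
      have hil : i < l.length - 1 := by
        have := hi; rw [List.length_take] at this; omega
      have : l[i] ≤ l[l.length - 2] := by
        rcases Nat.lt_or_ge i (l.length - 2) with h | h
        · exact hmono i (l.length - 2) (by omega) h1 h
        · have : i = l.length - 2 := by omega
          subst this; exact le_rfl
      simp only [hp]
      push_neg
      linarith
    have hdrop : (l.drop (l.length - 1)).countP p ≤ 1 := by
      calc (l.drop (l.length - 1)).countP p ≤ (l.drop (l.length - 1)).length :=
            List.countP_le_length
        _ = l.length - (l.length - 1) := List.length_drop
        _ ≤ 1 := by omega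
    omega
  · exact hmono (l.length - 2) (l.length - 1) h1 h0 (by omega)


open Finset Matrix in
lemma star_vec_sq {V : Type*} [Fintype V] [DecidableEq V] (G : SimpleGraph V)
    [DecidableRel G.Adj] (c : V) (hc : G.degree c = 3) :
    ∑ t, (if t = c then (3:ℝ) else if G.Adj c t then -1 else 0)
      * (if t = c then (3:ℝ) else if G.Adj c t then -1 else 0) = 12 := by
  have key : ∀ t, (if t = c then (3:ℝ) else if G.Adj c t then -1 else 0)
      * (if t = c then (3:ℝ) else if G.Adj c t then -1 else 0)
      = (if t = c then (9:ℝ) else 0) + (if G.Adj c t then 1 else 0) := by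
    intro t
    by_cases h1 : t = c
    · subst h1; simp [G.irrefl]; norm_num
    · by_cases h2 : G.Adj c t <;> simp [h1, h2]
  rw [Finset.sum_congr rfl (fun t _ => key t), Finset.sum_add_distrib]
  have e1 : ∑ t, (if t = c then (9:ℝ) else 0) = 9 := by
    simp [Finset.sum_ite_eq']
  have e2 : ∑ t, (if G.Adj c t then (1:ℝ) else 0) = 3 := by
    rw [Finset.sum_boole]
    have : (Finset.univ.filter fun t => G.Adj c t).card = G.degree c := by
      rw [← SimpleGraph.neighborFinset_eq_filter]; rfl
    rw [this, hc]; norm_num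
  rw [e1, e2]; norm_num



lemma lapMatrix_inst_irrel {V : Type*} [Fintype V] [DecidableEq V] (G : SimpleGraph V)
    (d₁ d₂ : DecidableRel G.Adj) :
    @SimpleGraph.lapMatrix V ℝ _ G d₁ _ _ = @SimpleGraph.lapMatrix V ℝ _ G d₂ _ _ := by
  congr!

open Matrix in
set_option maxHeartbeats 1000000 in
/-- base case `m ≥ 2`, two T-junctions: a tree of maximum degree 3 with
exactly two degree-3 vertices whose connecting path has at least 2 intermediate vertices
(distance `≥ 3`) has at least two Laplacian eigenvalues `≥ 4`: `λ₁ ≥ λ₂ ≥ 4`. -/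
theorem base_case_two_junctions {V : Type*} [Fintype V] [DecidableEq V]
    (G : SimpleGraph V) [DecidableRel G.Adj] (hT : G.IsTree)
    (hdeg : ∀ v : V, G.degree v ≤ 3)
    (u v : V) (huv : u ≠ v) (hu : G.degree u = 3) (hv : G.degree v = 3)
    (honly : ∀ w : V, G.degree w = 3 → w = u ∨ w = v)
    (hdist : 3 ≤ G.dist u v) :
    eigDesc G 1 ≥ eigDesc G 2 ∧ eigDesc G 2 ≥ 4 := by
  classical
  haveI : Nonempty V := ⟨u⟩
  have hconn := hT.isConnected
  have hA1 : ¬ G.Adj u v := by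
    intro h
    have := SimpleGraph.dist_eq_one_iff_adj.mpr h
    omega
  have hA2 : ∀ w, G.Adj u w → G.Adj v w → False := by
    intro w h1 h2
    have d1 : G.dist u w = 1 := SimpleGraph.dist_eq_one_iff_adj.mpr h1
    have d2 : G.dist w v = 1 := SimpleGraph.dist_eq_one_iff_adj.mpr h2.symm
    have := hconn.dist_triangle (u := u) (v := w) (w := v)
    omega
  set x : V → ℝ := fun t => if t = u then 3 else if G.Adj u t then -1 else 0 with hxdef
  set y : V → ℝ := fun t => if t = v then 3 else if G.Adj v t then -1 else 0 with hydef
  have hxu : x u = 3 := by simp [hxdef]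
  have hyv : y v = 3 := by simp [hydef]
  have hxv : x v = 0 := by simp [hxdef, Ne.symm huv, hA1]
  have hyu : y u = 0 := by
    have h2 : ¬ G.Adj v u := fun h => hA1 h.symm
    simp [hydef, huv, h2]
  have hxnbr : ∀ w, G.Adj u w → x w = -1 := by
    intro w hw
    have hne : w ≠ u := fun h => G.irrefl (h ▸ hw)
    simp [hxdef, hne, hw]
  have hynbr : ∀ w, G.Adj v w → y w = -1 := by
    intro w hw
    have hne : w ≠ v := fun h => G.irrefl (h ▸ hw)
    simp [hydef, hne, hw]
  have hy0 : ∀ w, G.Adj u w → y w = 0 := by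
    intro w hw
    have h1 : w ≠ v := fun h => hA1 (h ▸ hw)
    have h2 : ¬ G.Adj v w := fun h => hA2 w hw h
    simp [hydef, h1, h2]
  have hx0 : ∀ w, G.Adj v w → x w = 0 := by
    intro w hw
    have h1 : w ≠ u := fun h => hA1 ((h ▸ hw) : G.Adj v u).symm
    have h2 : ¬ G.Adj u w := fun h => hA2 w h hw
    simp [hxdef, h1, h2]
  have hxy0 : ∀ w, x w * y w = 0 := by
    intro w
    by_cases h1 : w = u
    · subst h1; rw [hyu, mul_zero]
    · by_cases h2 : G.Adj u w
      · rw [hy0 w h2, mul_zero]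
      · have : x w = 0 := by simp [hxdef, h1, h2]
        rw [this, zero_mul]
  have hind : ∀ a b : ℝ, a • x + b • y = 0 → a = 0 ∧ b = 0 := by
    intro a b hab
    have h1 := congrFun hab u
    have h2 := congrFun hab v
    simp only [Pi.add_apply, Pi.smul_apply, smul_eq_mul, Pi.zero_apply, hxu, hyu, hxv, hyv,
      mul_zero, add_zero, zero_add] at h1 h2
    constructor <;> nlinarith
  have hxx : ∑ t, x t * x t = 12 := star_vec_sq G u hu
  have hyy : ∑ t, y t * y t = 12 := star_vec_sq G v hv
  have hQ : ∀ a b : ℝ, (4:ℝ) * ((a • x + b • y) ⬝ᵥ (a • x + b • y))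
      ≤ (a • x + b • y) ⬝ᵥ (G.lapMatrix ℝ *ᵥ (a • x + b • y)) := by
    intro a b
    set z : V → ℝ := a • x + b • y with hzdef
    have hzval : ∀ t, z t = a * x t + b * y t := fun t => by simp [hzdef]
    have hzz : z ⬝ᵥ z = 12*a^2 + 12*b^2 := by
      have expand : ∀ t, z t * z t
          = a^2 * (x t * x t) + b^2 * (y t * y t) + (2*a*b) * (x t * y t) := by
        intro t; rw [hzval]; ring
      calc z ⬝ᵥ z = ∑ t, z t * z t := rfl
        _ = ∑ t, (a^2 * (x t * x t) + b^2 * (y t * y t) + (2*a*b) * (x t * y t)) :=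
            Finset.sum_congr rfl fun t _ => expand t
        _ = a^2 * (∑ t, x t * x t) + b^2 * (∑ t, y t * y t)
            + (2*a*b) * (∑ t, x t * y t) := by
            rw [Finset.sum_add_distrib, Finset.sum_add_distrib, Finset.mul_sum,
              Finset.mul_sum, Finset.mul_sum]
        _ = 12*a^2 + 12*b^2 := by
            rw [hxx, hyy]
            have h0 : ∑ t, x t * y t = 0 := Finset.sum_eq_zero fun t _ => hxy0 t
            rw [h0]; ring
    have hform : z ⬝ᵥ (G.lapMatrix ℝ *ᵥ z)
        = (∑ i, ∑ j, if G.Adj i j then (z i - z j)^2 else 0) / 2 := by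
      rw [← Matrix.toLinearMap₂'_apply', SimpleGraph.lapMatrix_toLinearMap₂']
    have hzu : z u = 3 * a := by rw [hzval, hxu, hyu]; ring
    have hzv : z v = 3 * b := by rw [hzval, hxv, hyv]; ring
    have hznu : ∀ w ∈ G.neighborFinset u, z w = -a := by
      intro w hw
      rw [SimpleGraph.mem_neighborFinset] at hw
      rw [hzval, hxnbr w hw, hy0 w hw]; ring
    have hznv : ∀ w ∈ G.neighborFinset v, z w = -b := by
      intro w hw
      rw [SimpleGraph.mem_neighborFinset] at hw
      rw [hzval, hynbr w hw, hx0 w hw]; ring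
    have hbound : 96*a^2 + 96*b^2
        ≤ ∑ i, ∑ j, if G.Adj i j then (z i - z j)^2 else 0 := by
      rw [← Finset.sum_product']
      set F : V × V → ℝ := fun p => if G.Adj p.1 p.2 then (z p.1 - z p.2)^2 else 0 with hF
      set T1 : Finset (V × V) := {u} ×ˢ G.neighborFinset u with hT1
      set T2 : Finset (V × V) := G.neighborFinset u ×ˢ {u} with hT2
      set T3 : Finset (V × V) := {v} ×ˢ G.neighborFinset v with hT3
      set T4 : Finset (V × V) := G.neighborFinset v ×ˢ {v} with hT4
      have m1 : ∀ p : V × V, p ∈ T1 ↔ p.1 = u ∧ G.Adj u p.2 := by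
        intro p; rw [hT1]; simp only [Finset.mem_product, Finset.mem_singleton,
          SimpleGraph.mem_neighborFinset]
      have m2 : ∀ p : V × V, p ∈ T2 ↔ G.Adj u p.1 ∧ p.2 = u := by
        intro p; rw [hT2]; simp only [Finset.mem_product, Finset.mem_singleton,
          SimpleGraph.mem_neighborFinset]
      have m3 : ∀ p : V × V, p ∈ T3 ↔ p.1 = v ∧ G.Adj v p.2 := by
        intro p; rw [hT3]; simp only [Finset.mem_product, Finset.mem_singleton,
          SimpleGraph.mem_neighborFinset]
      have m4 : ∀ p : V × V, p ∈ T4 ↔ G.Adj v p.1 ∧ p.2 = v := by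
        intro p; rw [hT4]; simp only [Finset.mem_product, Finset.mem_singleton,
          SimpleGraph.mem_neighborFinset]
      have d12 : Disjoint T1 T2 := by
        rw [Finset.disjoint_left]
        intro p h1 h2
        obtain ⟨e1, _⟩ := (m1 p).mp h1
        obtain ⟨a2, _⟩ := (m2 p).mp h2
        exact G.irrefl (e1 ▸ a2)
      have d13 : Disjoint T1 T3 := by
        rw [Finset.disjoint_left]
        intro p h1 h3
        obtain ⟨e1, _⟩ := (m1 p).mp h1
        obtain ⟨e3, _⟩ := (m3 p).mp h3
        exact huv (e1 ▸ e3 ▸ rfl)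
      have d23 : Disjoint T2 T3 := by
        rw [Finset.disjoint_left]
        intro p h2 h3
        obtain ⟨a2, _⟩ := (m2 p).mp h2
        obtain ⟨e3, _⟩ := (m3 p).mp h3
        exact hA1 (e3 ▸ a2)
      have d14 : Disjoint T1 T4 := by
        rw [Finset.disjoint_left]
        intro p h1 h4
        obtain ⟨e1, _⟩ := (m1 p).mp h1
        obtain ⟨a4, _⟩ := (m4 p).mp h4
        exact hA1 ((e1 ▸ a4) : G.Adj v u).symm
      have d24 : Disjoint T2 T4 := by
        rw [Finset.disjoint_left]
        intro p h2 h4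
        obtain ⟨_, e2⟩ := (m2 p).mp h2
        obtain ⟨_, e4⟩ := (m4 p).mp h4
        exact huv (e2 ▸ e4 ▸ rfl)
      have d34 : Disjoint T3 T4 := by
        rw [Finset.disjoint_left]
        intro p h3 h4
        obtain ⟨e3, _⟩ := (m3 p).mp h3
        obtain ⟨a4, _⟩ := (m4 p).mp h4
        exact G.irrefl (e3 ▸ a4)
      have h12 : Disjoint T1 T2 := d12
      have h123 : Disjoint (T1 ∪ T2) T3 := Finset.disjoint_union_left.mpr ⟨d13, d23⟩
      have h1234 : Disjoint (T1 ∪ T2 ∪ T3) T4 :=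
        Finset.disjoint_union_left.mpr ⟨Finset.disjoint_union_left.mpr ⟨d14, d24⟩, d34⟩
      have s1 : ∑ p ∈ T1, F p = 48*a^2 := by
        rw [hT1, Finset.sum_product, Finset.sum_singleton]
        have step : ∀ w ∈ G.neighborFinset u, F (u, w) = 16*a^2 := by
          intro w hw
          have hadj : G.Adj u w := (SimpleGraph.mem_neighborFinset _ _ _).mp hw
          show (if G.Adj u w then (z u - z w)^2 else 0) = 16*a^2
          rw [if_pos hadj, hzu, hznu w hw]; ring
        rw [Finset.sum_congr rfl step, Finset.sum_const]
        have hcard : (G.neighborFinset u).card = 3 := hu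
        rw [hcard, nsmul_eq_mul]; push_cast; ring
      have s2 : ∑ p ∈ T2, F p = 48*a^2 := by
        rw [hT2, Finset.sum_product, Finset.sum_comm]
        rw [Finset.sum_singleton]
        have step : ∀ w ∈ G.neighborFinset u, F (w, u) = 16*a^2 := by
          intro w hw
          have hadj : G.Adj u w := (SimpleGraph.mem_neighborFinset _ _ _).mp hw
          show (if G.Adj w u then (z w - z u)^2 else 0) = 16*a^2
          rw [if_pos hadj.symm, hzu, hznu w hw]; ring
        rw [Finset.sum_congr rfl step, Finset.sum_const]
        have hcard : (G.neighborFinset u).card = 3 := hu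
        rw [hcard, nsmul_eq_mul]; push_cast; ring
      have s3 : ∑ p ∈ T3, F p = 48*b^2 := by
        rw [hT3, Finset.sum_product, Finset.sum_singleton]
        have step : ∀ w ∈ G.neighborFinset v, F (v, w) = 16*b^2 := by
          intro w hw
          have hadj : G.Adj v w := (SimpleGraph.mem_neighborFinset _ _ _).mp hw
          show (if G.Adj v w then (z v - z w)^2 else 0) = 16*b^2
          rw [if_pos hadj, hzv, hznv w hw]; ring
        rw [Finset.sum_congr rfl step, Finset.sum_const]
        have hcard : (G.neighborFinset v).card = 3 := hv
        rw [hcard, nsmul_eq_mul]; push_cast; ring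
      have s4 : ∑ p ∈ T4, F p = 48*b^2 := by
        rw [hT4, Finset.sum_product, Finset.sum_comm]
        rw [Finset.sum_singleton]
        have step : ∀ w ∈ G.neighborFinset v, F (w, v) = 16*b^2 := by
          intro w hw
          have hadj : G.Adj v w := (SimpleGraph.mem_neighborFinset _ _ _).mp hw
          show (if G.Adj w v then (z w - z v)^2 else 0) = 16*b^2
          rw [if_pos hadj.symm, hzv, hznv w hw]; ring
        rw [Finset.sum_congr rfl step, Finset.sum_const]
        have hcard : (G.neighborFinset v).card = 3 := hv
        rw [hcard, nsmul_eq_mul]; push_cast; ring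
      have hsub : T1 ∪ T2 ∪ T3 ∪ T4 ⊆ Finset.univ ×ˢ Finset.univ := by
        intro p _
        exact Finset.mem_product.mpr ⟨Finset.mem_univ _, Finset.mem_univ _⟩
      calc 96*a^2 + 96*b^2 = ∑ p ∈ T1 ∪ T2 ∪ T3 ∪ T4, F p := by
            rw [Finset.sum_union h1234, Finset.sum_union h123, Finset.sum_union h12,
              s1, s2, s3, s4]; ring
        _ ≤ ∑ p ∈ Finset.univ ×ˢ Finset.univ, F p := by
            apply Finset.sum_le_sum_of_subset_of_nonneg hsub
            intro p _ _
            show 0 ≤ (if G.Adj p.1 p.2 then (z p.1 - z p.2)^2 else 0)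
            split <;> positivity
    rw [hzz, hform]
    linarith
  have hN : 2 ≤ Fintype.card V := Fintype.one_lt_card_iff_nontrivial.mpr ⟨u, v, huv⟩
  have main : ∀ (A : Matrix V V ℝ) (hA : A.IsHermitian), A = G.lapMatrix ℝ →
      ∀ l : List ℝ, l.Pairwise (· ≤ ·) →
      (↑l : Multiset ℝ) = Finset.univ.val.map hA.eigenvalues →
      (l.getD (Fintype.card V - 1) 0 ≥ l.getD (Fintype.card V - 2) 0 ∧
        l.getD (Fintype.card V - 2) 0 ≥ 4) := by
    rintro A hA rfl l hsort hcoe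
    have hcard2 : 2 ≤ (Finset.univ.filter fun i => (4:ℝ) ≤ hA.eigenvalues i).card :=
      card_ge_two_of_plane (G.lapMatrix ℝ) hA 4 x y hind hQ
    have hlen : l.length = Fintype.card V := by
      have := congrArg Multiset.card hcoe
      simpa using this
    have hcount : 2 ≤ l.countP (fun a => decide ((4:ℝ) ≤ a)) := by
      have e1 : l.countP (fun a => decide ((4:ℝ) ≤ a))
          = Multiset.countP (fun a => (4:ℝ) ≤ a) (↑l : Multiset ℝ) := rfl
      rw [e1, hcoe, Multiset.countP_map]
      exact hcard2
    obtain ⟨H1, H2⟩ := sorted_two_large hsort (by omega)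
      (fun a => decide ((4:ℝ) ≤ a)) (fun a => by simp) hcount
    rw [hlen] at H1 H2
    exact ⟨H2, H1⟩
  unfold eigDesc
  refine main _ _ ?_ _ (Multiset.pairwise_sort _ _) (Multiset.sort_eq _ _)
  exact lapMatrix_inst_irrel G _ _
end

section
/- For the uniform tree H_{0,k} with trunk length m = 0 (consecutive T-junctions adjacent) and t T-junctions, the number of Laplacian eigenvalues at least 4 satisfies n_{4+}(H_{0,k}) ≤ ⌊(t+1)/2⌋ for all branch lengths k ≥ 1. -/
/-- The uniform tree `H_{m,k}` with `t` T-junctions: `t` degree-3 vertices aligned on a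
spine, consecutive junctions separated by `m` degree-2 vertices; each junction carries a
pendant branch which is a path of `k` vertices, and the two end junctions carry one
additional such branch (so each junction has degree 3).  Spine vertex `i` (for
`0 ≤ i < t + (t-1)m`) is a junction iff `i` is a multiple of `m+1`; branch `b` (for
`0 ≤ b < t+2`) is attached to spine vertex `0` for `b = 0`, to junction `b-1` for
`1 ≤ b ≤ t`, and to the last spine vertex for `b = t+1`. -/
def uniformTree (m k t : ℕ) :
    SimpleGraph (Fin (t + (t - 1) * m) ⊕ Fin (t + 2) × Fin k) :=
  SimpleGraph.fromRel fun x y =>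
    match x, y with
    | Sum.inl i, Sum.inl j => (j : ℕ) = (i : ℕ) + 1
    | Sum.inr (b, p), Sum.inr (b', p') => b = b' ∧ (p' : ℕ) = (p : ℕ) + 1
    | Sum.inl i, Sum.inr (b, p) => (p : ℕ) = 0 ∧
        (((b : ℕ) = 0 ∧ (i : ℕ) = 0) ∨
         (1 ≤ (b : ℕ) ∧ (b : ℕ) ≤ t ∧ (i : ℕ) = ((b : ℕ) - 1) * (m + 1)) ∨
         ((b : ℕ) = t + 1 ∧ (i : ℕ) = (t - 1) * (m + 1)))
    | Sum.inr _, Sum.inl _ => False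

open Finset Matrix

namespace UniformTreeAux

/-- Quadratic form of one pendant branch of length `k` hanging from a vertex with
value `w`: attachment edge + internal edges − 4·(squares on the branch). -/
def Bq (k : ℕ) (w : ℝ) (g : ℕ → ℝ) : ℝ :=
  (w - g 0)^2 + (∑ p ∈ range (k-1), (g p - g (p+1))^2) - 4 * ∑ p ∈ range k, (g p)^2

lemma Bq_succ (k : ℕ) (hk : 1 ≤ k) (w : ℝ) (g : ℕ → ℝ) :
    Bq (k+1) w g = (w - g 0)^2 - 4*(g 0)^2 + Bq k (g 0) (fun p => g (p+1)) := by
  unfold Bq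
  rw [show k + 1 - 1 = (k-1) + 1 by omega]
  rw [Finset.sum_range_succ' (fun p => (g p - g (p+1))^2) (k-1)]
  rw [Finset.sum_range_succ' (fun p => (g p)^2) k]
  ring

lemma Bq_le (k : ℕ) (hk : 1 ≤ k) (w : ℝ) (g : ℕ → ℝ) :
    Bq k w g ≤ (4*k/(2*k+1)) * w^2 := by
  induction k generalizing w g with
  | zero => omega
  | succ k ih =>
    rcases Nat.eq_or_lt_of_le hk with h1 | h1
    · -- k+1 = 1, i.e. k = 0
      have hk0 : k = 0 := by omega
      subst hk0
      unfold Bq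
      simp only [Nat.add_sub_cancel, zero_add, Nat.sub_self, Finset.range_zero, Finset.sum_empty,
        Finset.range_one, Finset.sum_singleton]
      push_cast
      nlinarith [sq_nonneg (w + 3 * g 0)]
    · have hk' : 1 ≤ k := by omega
      rw [Bq_succ k hk' w g]
      have h2 := ih hk' (g 0) (fun p => g (p+1))
      have hkR : (1:ℝ) ≤ (k:ℝ) := by exact_mod_cast hk'
      have hd1 : (0:ℝ) < 2*(k:ℝ)+1 := by linarith
      have hd2 : (0:ℝ) < 2*(k:ℝ)+3 := by linarith
      have key : (w - g 0)^2 - 4*(g 0)^2 + (4*(k:ℝ)/(2*(k:ℝ)+1)) * (g 0)^2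
          ≤ (4*((k:ℝ)+1)/(2*((k:ℝ)+1)+1)) * w^2 := by
        rw [← sub_nonneg]
        have hid : (4*((k:ℝ)+1)/(2*((k:ℝ)+1)+1)) * w^2
            - ((w - g 0)^2 - 4*(g 0)^2 + (4*(k:ℝ)/(2*(k:ℝ)+1)) * (g 0)^2)
            = ((2*(k:ℝ)+1)*w + (2*(k:ℝ)+3)*(g 0))^2 / ((2*(k:ℝ)+1)*(2*(k:ℝ)+3)) := by
          have h3 : (2*((k:ℝ)+1)+1) = 2*(k:ℝ)+3 := by ring
          rw [h3]
          field_simp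
          ring
        rw [hid]
        positivity
      push_cast
      push_cast at h2 key
      linarith

lemma Bq_zero_lt (k : ℕ) (hk : 1 ≤ k) (g : ℕ → ℝ) :
    (∀ p < k, g p = 0) ∨ Bq k 0 g < 0 := by
  induction k generalizing g with
  | zero => omega
  | succ k ih =>
    rcases Nat.eq_or_lt_of_le hk with h1 | h1
    · have hk0 : k = 0 := by omega
      subst hk0
      by_cases h : g 0 = 0
      · left; intro p hp; interval_cases p; exact h
      · right
        unfold Bq
        simp only [Nat.add_sub_cancel, zero_add, Nat.sub_self, Finset.range_zero, Finset.sum_empty,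
          Finset.range_one, Finset.sum_singleton]
        have hg : 0 < (g 0)^2 := by positivity
        nlinarith [hg]
    · have hk' : 1 ≤ k := by omega
      rw [Bq_succ k hk' 0 g]
      by_cases h : g 0 = 0
      · rcases ih hk' (fun p => g (p+1)) with hall | hlt
        · left; intro p hp
          rcases p with _ | p
          · exact h
          · exact hall p (by omega)
        · right; rw [h]; simpa using hlt
      · right
        have h2 := Bq_le k hk' (g 0) (fun p => g (p+1))
        have hkR : (1:ℝ) ≤ (k:ℝ) := by exact_mod_cast hk'
        have hd1 : (0:ℝ) < 2*(k:ℝ)+1 := by linarith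
        have hγ : (4*(k:ℝ)/(2*(k:ℝ)+1)) < 2 := by
          rw [div_lt_iff₀ hd1]; linarith
        have hg : 0 < (g 0)^2 := by positivity
        nlinarith [h2, hγ, hg]
/-- junction attachment index -/
def Jt (t b : ℕ) : ℕ := if b = 0 then 0 else if b ≤ t then b - 1 else t - 1

lemma Jt_lt (t b : ℕ) (ht : 2 ≤ t) : Jt t b < t := by
  unfold Jt; split_ifs <;> first | contradiction | omega

lemma sum_Jt (t : ℕ) (ht : 2 ≤ t) (F : ℕ → ℝ) :
    ∑ b ∈ range (t+2), F (Jt t b) = (∑ a ∈ range t, F a) + F 0 + F (t-1) := by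
  rw [show t + 2 = (t+1) + 1 by ring, Finset.sum_range_succ, Finset.sum_range_succ']
  have h1 : Jt t (t+1) = t - 1 := by unfold Jt; split_ifs <;> first | contradiction | omega
  have h2 : Jt t 0 = 0 := by unfold Jt; simp
  have h3 : ∀ b ∈ range t, F (Jt t (b+1)) = F b := by
    intro b hb
    rw [mem_range] at hb
    have : Jt t (b+1) = b := by unfold Jt; split_ifs <;> first | contradiction | omega
    rw [this]
  rw [Finset.sum_congr rfl h3, h1, h2]

lemma spine_bound (t : ℕ) (ht : 2 ≤ t) (Z : ℕ → ℝ)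
    (hpair : ∀ j : ℕ, 2*j+1 < t → Z (2*j) = Z (2*j+1))
    (hodd : t % 2 = 1 → Z (t-1) = 0) :
    ∑ a ∈ range (t-1), (Z a - Z (a+1))^2
      ≤ 2 * ∑ a ∈ range t, (Z a)^2 - 2*(Z 0)^2 - 2*(Z (t-1))^2 := by
  set O : Finset ℕ := (range (t-1)).filter (fun a => a % 2 = 1) with hO
  have memO : ∀ a, a ∈ O ↔ (a < t - 1 ∧ a % 2 = 1) := by
    intro a; rw [hO, Finset.mem_filter, mem_range]
  have step1 : ∑ a ∈ range (t-1), (Z a - Z (a+1))^2 = ∑ a ∈ O, (Z a - Z (a+1))^2 := by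
    rw [hO]
    refine (Finset.sum_filter_of_ne ?_).symm
    intro a ha hne
    rw [mem_range] at ha
    by_contra hodd'
    have hp := hpair (a/2) (by omega)
    apply hne
    rw [show 2*(a/2) = a by omega] at hp
    rw [hp]
    ring
  have step2 : ∑ a ∈ O, (Z a - Z (a+1))^2 ≤ ∑ a ∈ O, (2*(Z a)^2 + 2*(Z (a+1))^2) := by
    refine Finset.sum_le_sum fun a _ => ?_
    nlinarith [sq_nonneg (Z a + Z (a+1))]
  set O' : Finset ℕ := O.image (· + 1) with hO'
  have memO' : ∀ a, a ∈ O' ↔ (∃ b, (b < t-1 ∧ b % 2 = 1) ∧ b + 1 = a) := by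
    intro a
    rw [hO', Finset.mem_image]
    constructor
    · rintro ⟨b, hb, hba⟩; exact ⟨b, (memO b).mp hb, hba⟩
    · rintro ⟨b, hb, hba⟩; exact ⟨b, (memO b).mpr hb, hba⟩
  have himg : ∑ a ∈ O, (Z (a+1))^2 = ∑ a ∈ O', (Z a)^2 := by
    rw [hO', Finset.sum_image]
    intro a _ b _ h
    simp only at h
    omega
  have hdisj : Disjoint O O' := by
    rw [Finset.disjoint_left]
    intro a haO haO'
    rw [memO] at haO
    rw [memO'] at haO'
    obtain ⟨b, hb, hba⟩ := haO'
    omega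
  have hunion : ∑ a ∈ O, (Z a)^2 + ∑ a ∈ O', (Z a)^2 = ∑ a ∈ O ∪ O', (Z a)^2 :=
    (Finset.sum_union hdisj).symm
  have key : ∑ a ∈ O ∪ O', (Z a)^2 ≤ ∑ a ∈ range t, (Z a)^2 - (Z 0)^2 - (Z (t-1))^2 := by
    by_cases hpar : t % 2 = 1
    · have hz : Z (t-1) = 0 := hodd hpar
      have hsub : O ∪ O' ⊆ (range t).erase 0 := by
        intro a ha
        rw [Finset.mem_union, memO, memO'] at ha
        rw [Finset.mem_erase, mem_range]
        rcases ha with h | ⟨b, hb, hba⟩ <;> omega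
      have hle : ∑ a ∈ O ∪ O', (Z a)^2 ≤ ∑ a ∈ (range t).erase 0, (Z a)^2 :=
        Finset.sum_le_sum_of_subset_of_nonneg hsub (fun i _ _ => sq_nonneg _)
      have herase := Finset.sum_erase_add (range t) (fun a => (Z a)^2)
        (Finset.mem_range.mpr (by omega : 0 < t))
      rw [hz]
      simp only [ne_eq, OfNat.ofNat_ne_zero, not_false_eq_true, zero_pow]
      linarith
    · have hsub : O ∪ O' ⊆ ((range t).erase (t-1)).erase 0 := by
        intro a ha
        rw [Finset.mem_union, memO, memO'] at ha
        rw [Finset.mem_erase, Finset.mem_erase, mem_range]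
        rcases ha with h | ⟨b, hb, hba⟩ <;> omega
      have hle : ∑ a ∈ O ∪ O', (Z a)^2 ≤ ∑ a ∈ ((range t).erase (t-1)).erase 0, (Z a)^2 :=
        Finset.sum_le_sum_of_subset_of_nonneg hsub (fun i _ _ => sq_nonneg _)
      have h1 := Finset.sum_erase_add (range t) (fun a => (Z a)^2)
        (Finset.mem_range.mpr (by omega : t-1 < t))
      have h0mem : (0:ℕ) ∈ (range t).erase (t-1) := by
        rw [Finset.mem_erase, mem_range]; omega
      have h2 := Finset.sum_erase_add ((range t).erase (t-1)) (fun a => (Z a)^2) h0mem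
      linarith
  calc ∑ a ∈ range (t-1), (Z a - Z (a+1))^2
      = ∑ a ∈ O, (Z a - Z (a+1))^2 := step1
    _ ≤ ∑ a ∈ O, (2*(Z a)^2 + 2*(Z (a+1))^2) := step2
    _ = 2 * (∑ a ∈ O, (Z a)^2 + ∑ a ∈ O', (Z a)^2) := by
        rw [Finset.sum_add_distrib, ← Finset.mul_sum, ← Finset.mul_sum, himg]; ring
    _ = 2 * ∑ a ∈ O ∪ O', (Z a)^2 := by rw [hunion]
    _ ≤ 2 * (∑ a ∈ range t, (Z a)^2 - (Z 0)^2 - (Z (t-1))^2) := by linarith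
    _ = 2 * ∑ a ∈ range t, (Z a)^2 - 2*(Z 0)^2 - 2*(Z (t-1))^2 := by ring

lemma main_ineq (t k : ℕ) (ht : 2 ≤ t) (hk : 1 ≤ k) (Z : ℕ → ℝ) (Y : ℕ → ℕ → ℝ)
    (hpair : ∀ j : ℕ, 2*j+1 < t → Z (2*j) = Z (2*j+1))
    (hodd : t % 2 = 1 → Z (t-1) = 0)
    (hnz : (∃ a, a < t ∧ Z a ≠ 0) ∨ (∃ b, b < t+2 ∧ ∃ p, p < k ∧ Y b p ≠ 0)) :
    (∑ a ∈ range (t-1), (Z a - Z (a+1))^2)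
    + (∑ b ∈ range (t+2), ∑ p ∈ range (k-1), (Y b p - Y b (p+1))^2)
    + (∑ b ∈ range (t+2), (Z (Jt t b) - Y b 0)^2)
    < 4 * ((∑ a ∈ range t, (Z a)^2) + ∑ b ∈ range (t+2), ∑ p ∈ range k, (Y b p)^2) := by
  have hsplit : (∑ a ∈ range (t-1), (Z a - Z (a+1))^2)
      + (∑ b ∈ range (t+2), ∑ p ∈ range (k-1), (Y b p - Y b (p+1))^2)
      + (∑ b ∈ range (t+2), (Z (Jt t b) - Y b 0)^2)
      - 4 * ((∑ a ∈ range t, (Z a)^2) + ∑ b ∈ range (t+2), ∑ p ∈ range k, (Y b p)^2)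
      = ((∑ a ∈ range (t-1), (Z a - Z (a+1))^2) - 4 * ∑ a ∈ range t, (Z a)^2)
        + ∑ b ∈ range (t+2), Bq k (Z (Jt t b)) (Y b) := by
    unfold Bq
    rw [Finset.sum_sub_distrib, Finset.sum_add_distrib, ← Finset.mul_sum]
    ring
  rw [← sub_neg, hsplit]
  by_cases hz : ∀ a, a < t → Z a = 0
  · obtain ⟨b₀, hb₀, p₀, hp₀, hY⟩ : ∃ b, b < t+2 ∧ ∃ p, p < k ∧ Y b p ≠ 0 := by
      rcases hnz with ⟨a, ha, hZa⟩ | h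
      · exact absurd (hz a ha) hZa
      · exact h
    have hspine : (∑ a ∈ range (t-1), (Z a - Z (a+1))^2) - 4 * ∑ a ∈ range t, (Z a)^2 = 0 := by
      have e1 : ∑ a ∈ range (t-1), (Z a - Z (a+1))^2 = 0 := by
        refine Finset.sum_eq_zero fun a ha => ?_
        rw [mem_range] at ha
        rw [hz a (by omega), hz (a+1) (by omega)]
        ring
      have e2 : ∑ a ∈ range t, (Z a)^2 = 0 := by
        refine Finset.sum_eq_zero fun a ha => ?_
        rw [mem_range] at ha
        rw [hz a ha]; ring
      rw [e1, e2]; ring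
    rw [hspine, zero_add]
    have hb : ∀ b ∈ range (t+2), Bq k (Z (Jt t b)) (Y b) ≤ 0 := by
      intro b _
      rw [hz _ (Jt_lt t b ht)]
      have := Bq_le k hk 0 (Y b)
      simpa using this
    have hb₀lt : Bq k (Z (Jt t b₀)) (Y b₀) < 0 := by
      rw [hz _ (Jt_lt t b₀ ht)]
      rcases Bq_zero_lt k hk (Y b₀) with hall | hlt
      · exact absurd (hall p₀ hp₀) hY
      · exact hlt
    calc ∑ b ∈ range (t+2), Bq k (Z (Jt t b)) (Y b)
        < ∑ b ∈ range (t+2), (0:ℝ) := by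
          refine Finset.sum_lt_sum hb ⟨b₀, Finset.mem_range.mpr hb₀, hb₀lt⟩
      _ = 0 := by simp
  · push_neg at hz
    obtain ⟨a₀, ha₀, hZa₀⟩ := hz
    set γ : ℝ := 4*k/(2*k+1) with hγ
    have hkR : (1:ℝ) ≤ (k:ℝ) := by exact_mod_cast hk
    have hγlt : γ < 2 := by
      rw [hγ, div_lt_iff₀ (by linarith)]; linarith
    have hγ0 : 0 ≤ γ := by positivity
    have hbr : ∑ b ∈ range (t+2), Bq k (Z (Jt t b)) (Y b)
        ≤ γ * ((∑ a ∈ range t, (Z a)^2) + (Z 0)^2 + (Z (t-1))^2) := by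
      calc ∑ b ∈ range (t+2), Bq k (Z (Jt t b)) (Y b)
          ≤ ∑ b ∈ range (t+2), γ * (Z (Jt t b))^2 :=
            Finset.sum_le_sum fun b _ => Bq_le k hk _ _
        _ = γ * ∑ b ∈ range (t+2), (Z (Jt t b))^2 := by rw [Finset.mul_sum]
        _ = γ * ((∑ a ∈ range t, (Z a)^2) + (Z 0)^2 + (Z (t-1))^2) := by
            rw [sum_Jt t ht (fun a => (Z a)^2)]
    have hsp := spine_bound t ht Z hpair hodd
    have hpos : 0 < ∑ a ∈ range t, (Z a)^2 := by
      have h1 : (Z a₀)^2 ≤ ∑ a ∈ range t, (Z a)^2 :=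
        Finset.single_le_sum (fun a _ => sq_nonneg (Z a)) (Finset.mem_range.mpr ha₀)
      have h2 : 0 < (Z a₀)^2 := by positivity
      linarith
    have hZ0 : 0 ≤ (Z 0)^2 := sq_nonneg _
    have hZt : 0 ≤ (Z (t-1))^2 := sq_nonneg _
    nlinarith [hbr, hsp, hpos, hγlt, hZ0, hZt]

lemma count_eig_ge_add_finrank_le {V : Type*} [Fintype V] [DecidableEq V]
    (A : Matrix V V ℝ) (hA : A.IsHermitian) (c : ℝ) (W : Submodule ℝ (EuclideanSpace ℝ V))
    (hW : ∀ x ∈ W, x ≠ 0 → ∑ j, x j * (A *ᵥ x) j < c * ∑ j, x j * x j) :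
    (Finset.univ.filter fun i => c ≤ hA.eigenvalues i).card + Module.finrank ℝ W
      ≤ Fintype.card V := by
  classical
  set S : Finset V := Finset.univ.filter fun i => c ≤ hA.eigenvalues i with hS
  set v : V → EuclideanSpace ℝ V := fun i => hA.eigenvectorBasis i with hv
  have hon : Orthonormal ℝ v := hA.eigenvectorBasis.orthonormal
  set u : {i // i ∈ S} → EuclideanSpace ℝ V := fun i => v i.1 with hu
  have honu : Orthonormal ℝ u := hon.comp Subtype.val Subtype.val_injective
  set E : Submodule ℝ (EuclideanSpace ℝ V) := Submodule.span ℝ (Set.range u) with hE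
  have hrankE : Module.finrank ℝ E = S.card := by
    rw [finrank_span_eq_card honu.linearIndependent, Fintype.card_coe]
  have hdisj : Disjoint E W := by
    rw [Submodule.disjoint_def]
    intro x hxE hxW
    by_contra hx0
    obtain ⟨f, hf⟩ := Submodule.mem_span_range_iff_exists_fun ℝ |>.mp hxE
    set y : EuclideanSpace ℝ V := WithLp.toLp 2 (A *ᵥ x) with hy
    have hAu : ∀ i : {i // i ∈ S}, A *ᵥ (u i) = hA.eigenvalues i.1 • u i := by
      intro i
      exact hA.mulVec_eigenvectorBasis i.1
    have hAx : y = ∑ i, (f i * hA.eigenvalues i.1) • u i := by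
      rw [hy, ← hf]
      apply WithLp.ofLp_injective 2
      simp only [WithLp.ofLp_toLp, WithLp.ofLp_sum, WithLp.ofLp_smul, Matrix.mulVec_sum,
        Matrix.mulVec_smul, hAu, smul_smul]
    have e1 : (inner ℝ x x : ℝ) = ∑ i, f i * f i := by
      rw [← hf, honu.inner_sum]
      simp
    have e2 : (inner ℝ x y : ℝ) = ∑ i, f i * (f i * hA.eigenvalues i.1) := by
      rw [← hf, hAx, honu.inner_sum]
      simp
    have hxy : ∑ j, x j * y j = (inner ℝ x y : ℝ) := by
      rw [PiLp.inner_apply]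
      simp [mul_comm]
    have hxx : ∑ j, x j * x j = (inner ℝ x x : ℝ) := by
      rw [PiLp.inner_apply]
      simp [mul_comm, sq]
    have hlt := hW x hxW hx0
    rw [show (A *ᵥ x) = y from rfl] at hlt
    rw [hxy, hxx, e1, e2] at hlt
    have hge : c * ∑ i, f i * f i ≤ ∑ i, f i * (f i * hA.eigenvalues i.1) := by
      rw [Finset.mul_sum]
      refine Finset.sum_le_sum fun i _ => ?_
      have hμ : c ≤ hA.eigenvalues i.1 := (Finset.mem_filter.mp i.2).2
      have hnn : 0 ≤ f i * f i := mul_self_nonneg _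
      calc c * (f i * f i) ≤ hA.eigenvalues i.1 * (f i * f i) :=
            mul_le_mul_of_nonneg_right hμ hnn
        _ = f i * (f i * hA.eigenvalues i.1) := by ring
    linarith
  have h1 := Submodule.finrank_sup_add_finrank_inf_eq E W
  rw [hdisj.eq_bot] at h1
  simp only [finrank_bot, add_zero] at h1
  have h2 : Module.finrank ℝ ↥(E ⊔ W) ≤ Fintype.card V := by
    have := Submodule.finrank_le (E ⊔ W)
    rwa [finrank_euclideanSpace] at this
  omega

end UniformTreeAux

open UniformTreeAux


section
variable (t k : ℕ)

/-- directed edge-weight function -/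
def Fq (x : Fin (t + (t - 1) * 0) ⊕ Fin (t + 2) × Fin k → ℝ) :
    (Fin (t + (t - 1) * 0) ⊕ Fin (t + 2) × Fin k) →
    (Fin (t + (t - 1) * 0) ⊕ Fin (t + 2) × Fin k) → ℝ := fun u v =>
  match u, v with
  | Sum.inl i, Sum.inl j =>
      if (j : ℕ) = (i : ℕ) + 1 then (x (Sum.inl i) - x (Sum.inl j))^2 else 0
  | Sum.inr w, Sum.inr w' =>
      if w.1 = w'.1 ∧ (w'.2 : ℕ) = (w.2 : ℕ) + 1
      then (x (Sum.inr w) - x (Sum.inr w'))^2 else 0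
  | Sum.inl i, Sum.inr w =>
      if (w.2 : ℕ) = 0 ∧ (i : ℕ) = Jt t (w.1 : ℕ)
      then (x (Sum.inl i) - x (Sum.inr w))^2 else 0
  | Sum.inr _, Sum.inl _ => 0

open scoped Classical in
lemma adj_pointwise (ht : 2 ≤ t)
    (x : Fin (t + (t - 1) * 0) ⊕ Fin (t + 2) × Fin k → ℝ)
    (u v : Fin (t + (t - 1) * 0) ⊕ Fin (t + 2) × Fin k) :
    (if (uniformTree 0 k t).Adj u v then (x u - x v)^2 else 0)
      = Fq t k x u v + Fq t k x v u := by
  rcases u with i | ⟨b, p⟩ <;> rcases v with j | ⟨b', p'⟩ <;>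
    simp only [uniformTree, SimpleGraph.fromRel_adj, Fq, Jt, ne_eq, Sum.inl.injEq,
      Sum.inr.injEq, Prod.mk.injEq, Fin.ext_iff, reduceCtorEq, not_false_eq_true, true_and,
      zero_add, mul_one, or_false, false_or] <;>
    split_ifs <;> first | ring1 | omega | (exfalso; omega)

lemma fin_sum_ite_val {n : ℕ} (c : ℕ) (f : Fin n → ℝ) :
    (∑ i : Fin n, if (i : ℕ) = c then f i else 0) = if h : c < n then f ⟨c, h⟩ else 0 := by
  split_ifs with h
  · rw [Finset.sum_eq_single (⟨c, h⟩ : Fin n)]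
    · simp
    · intro b _ hb
      exact if_neg fun hc => hb (Fin.ext hc)
    · intro h'; exact absurd (Finset.mem_univ _) h'
  · exact Finset.sum_eq_zero fun i _ => if_neg fun hc => h (by rw [← hc]; exact i.2)

lemma sum_range_pred (N : ℕ) (F : ℕ → ℝ) :
    (∑ a ∈ range N, if a + 1 < N then F a else 0) = ∑ a ∈ range (N-1), F a := by
  rw [← Finset.sum_subset (fun a ha => by rw [mem_range] at *; omega : range (N-1) ⊆ range N)
      (fun a ha hna => by rw [mem_range] at *; rw [if_neg]; omega)]
  exact Finset.sum_congr rfl fun a ha => by rw [mem_range] at ha; rw [if_pos]; omega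

open scoped Classical in
lemma graph_sum_eq (ht : 2 ≤ t) (hk : 1 ≤ k)
    (x : Fin (t + (t - 1) * 0) ⊕ Fin (t + 2) × Fin k → ℝ)
    (Z : ℕ → ℝ) (hZ : ∀ (a : ℕ) (h : a < t + (t - 1) * 0), Z a = x (Sum.inl ⟨a, h⟩))
    (Y : ℕ → ℕ → ℝ)
    (hY : ∀ (b p : ℕ) (hb : b < t + 2) (hp : p < k), Y b p = x (Sum.inr (⟨b, hb⟩, ⟨p, hp⟩))) :
    (∑ u, ∑ v, if (uniformTree 0 k t).Adj u v then (x u - x v)^2 else 0)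
    = 2 * ((∑ a ∈ range (t-1), (Z a - Z (a+1))^2)
         + ((∑ b ∈ range (t+2), ∑ p ∈ range (k-1), (Y b p - Y b (p+1))^2)
          + (∑ b ∈ range (t+2), (Z (Jt t b) - Y b 0)^2))) := by
  have hN : t + (t - 1) * 0 = t := by simp
  -- symmetrize
  have h1 : (∑ u, ∑ v, if (uniformTree 0 k t).Adj u v then (x u - x v)^2 else 0)
      = 2 * ∑ u, ∑ v, Fq t k x u v := by
    have e1 : (∑ u, ∑ v, if (uniformTree 0 k t).Adj u v then (x u - x v)^2 else 0)
        = ∑ u, ∑ v, (Fq t k x u v + Fq t k x v u) :=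
      Finset.sum_congr rfl fun u _ =>
        Finset.sum_congr rfl fun v _ => adj_pointwise t k ht x u v
    rw [e1]
    simp_rw [Finset.sum_add_distrib]
    rw [Finset.sum_comm]
    ring
  rw [h1]
  congr 1
  -- split into quadrants
  rw [Fintype.sum_sum_type]
  have hinner : ∀ u, (∑ v, Fq t k x u v)
      = (∑ j, Fq t k x u (Sum.inl j)) + ∑ w, Fq t k x u (Sum.inr w) :=
    fun u => Fintype.sum_sum_type _
  simp_rw [hinner]
  -- quadrant (inr, inl) vanishes
  have hq0 : ∀ w, (∑ j, Fq t k x (Sum.inr w) (Sum.inl j)) = 0 := by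
    intro w
    exact Finset.sum_eq_zero fun j _ => rfl
  -- spine quadrant
  have hqA : (∑ i, ∑ j, Fq t k x (Sum.inl i) (Sum.inl j))
      = ∑ a ∈ range (t-1), (Z a - Z (a+1))^2 := by
    have estep : ∀ i : Fin (t + (t-1)*0), (∑ j, Fq t k x (Sum.inl i) (Sum.inl j))
        = if (i : ℕ) + 1 < t + (t-1)*0 then (Z (i:ℕ) - Z ((i:ℕ)+1))^2 else 0 := by
      intro i
      have : (∑ j, Fq t k x (Sum.inl i) (Sum.inl j))
          = ∑ j : Fin (t + (t-1)*0), if (j : ℕ) = (i : ℕ) + 1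
              then (x (Sum.inl i) - x (Sum.inl j))^2 else 0 := rfl
      rw [this, fin_sum_ite_val]
      split_ifs with h
      · rw [hZ _ h, hZ (i : ℕ) i.2]
      · rfl
    rw [Finset.sum_congr rfl fun i _ => estep i]
    rw [Fin.sum_univ_eq_sum_range
      (fun a => if a + 1 < t + (t-1)*0 then (Z a - Z (a+1))^2 else 0)]
    rw [sum_range_pred]
    rw [hN]
  -- attach quadrant
  have hqB : (∑ i, ∑ w, Fq t k x (Sum.inl i) (Sum.inr w))
      = ∑ b ∈ range (t+2), (Z (Jt t b) - Y b 0)^2 := by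
    rw [Finset.sum_comm]
    have estep : ∀ w : Fin (t+2) × Fin k, (∑ i, Fq t k x (Sum.inl i) (Sum.inr w))
        = if (w.2 : ℕ) = 0 then (Z (Jt t (w.1 : ℕ)) - Y (w.1 : ℕ) 0)^2 else 0 := by
      intro w
      by_cases hp : (w.2 : ℕ) = 0
      · rw [if_pos hp]
        have e1 : (∑ i, Fq t k x (Sum.inl i) (Sum.inr w))
            = ∑ i : Fin (t + (t-1)*0), if (i : ℕ) = Jt t (w.1 : ℕ)
                then (x (Sum.inl i) - x (Sum.inr w))^2 else 0 := by
          refine Finset.sum_congr rfl fun i _ => ?_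
          show (if (w.2 : ℕ) = 0 ∧ (i : ℕ) = Jt t (w.1 : ℕ)
              then (x (Sum.inl i) - x (Sum.inr w))^2 else 0) = _
          by_cases hi : (i : ℕ) = Jt t (w.1 : ℕ)
          · rw [if_pos ⟨hp, hi⟩, if_pos hi]
          · rw [if_neg (by rintro ⟨-, hh⟩; exact hi hh), if_neg hi]
        have hJ : Jt t (w.1 : ℕ) < t + (t-1)*0 := by
          have := Jt_lt t (w.1 : ℕ) ht
          omega
        rw [e1, fin_sum_ite_val, dif_pos hJ, ← hZ _ hJ]
        have hw : (⟨(⟨(w.1 : ℕ), w.1.2⟩ : Fin (t+2)), (⟨0, by omega⟩ : Fin k)⟩ :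
            Fin (t+2) × Fin k) = w := by
          refine Prod.ext ?_ ?_
          · exact Fin.eta _ _
          · exact Fin.ext (by simpa using hp.symm)
        rw [hY (w.1 : ℕ) 0 w.1.2 (by omega), hw]
      · rw [if_neg hp]
        refine Finset.sum_eq_zero fun i _ => ?_
        show (if (w.2 : ℕ) = 0 ∧ (i : ℕ) = Jt t (w.1 : ℕ)
            then (x (Sum.inl i) - x (Sum.inr w))^2 else 0) = 0
        rw [if_neg]
        rintro ⟨h, -⟩
        exact hp h
    rw [Finset.sum_congr rfl fun w _ => estep w]
    rw [Fintype.sum_prod_type]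
    have e2 : ∀ b : Fin (t+2), (∑ p : Fin k, if (p : ℕ) = 0
        then (Z (Jt t (b : ℕ)) - Y (b : ℕ) 0)^2 else 0)
        = (Z (Jt t (b : ℕ)) - Y (b : ℕ) 0)^2 := by
      intro b
      rw [fin_sum_ite_val 0 (fun _ => (Z (Jt t (b : ℕ)) - Y (b : ℕ) 0)^2), dif_pos (by omega : 0 < k)]
    rw [Finset.sum_congr rfl fun b _ => e2 b]
    exact Fin.sum_univ_eq_sum_range (fun b => (Z (Jt t b) - Y b 0)^2) (t+2)
  -- branch quadrant
  have hqC : (∑ w, ∑ w', Fq t k x (Sum.inr w) (Sum.inr w'))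
      = ∑ b ∈ range (t+2), ∑ p ∈ range (k-1), (Y b p - Y b (p+1))^2 := by
    have estep : ∀ w : Fin (t+2) × Fin k, (∑ w', Fq t k x (Sum.inr w) (Sum.inr w'))
        = if (w.2 : ℕ) + 1 < k then (Y (w.1:ℕ) (w.2:ℕ) - Y (w.1:ℕ) ((w.2:ℕ)+1))^2 else 0 := by
      intro w
      rw [Fintype.sum_prod_type]
      have e1 : ∀ b' : Fin (t+2), (∑ p' : Fin k, Fq t k x (Sum.inr w) (Sum.inr (b', p')))
          = if w.1 = b' then (∑ p' : Fin k, if (p' : ℕ) = (w.2 : ℕ) + 1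
              then (x (Sum.inr w) - x (Sum.inr (b', p')))^2 else 0) else 0 := by
        intro b'
        by_cases hb : w.1 = b'
        · rw [if_pos hb]
          refine Finset.sum_congr rfl fun p' _ => ?_
          show (if w.1 = b' ∧ (p' : ℕ) = (w.2 : ℕ) + 1
              then (x (Sum.inr w) - x (Sum.inr (b', p')))^2 else 0) = _
          by_cases hp : (p' : ℕ) = (w.2 : ℕ) + 1
          · rw [if_pos ⟨hb, hp⟩, if_pos hp]
          · rw [if_neg (by rintro ⟨-, h⟩; exact hp h), if_neg hp]
        · rw [if_neg hb]
          refine Finset.sum_eq_zero fun p' _ => ?_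
          show (if w.1 = b' ∧ (p' : ℕ) = (w.2 : ℕ) + 1
              then (x (Sum.inr w) - x (Sum.inr (b', p')))^2 else 0) = 0
          rw [if_neg]
          rintro ⟨h, -⟩
          exact hb h
      rw [Finset.sum_congr rfl fun b' _ => e1 b']
      rw [Finset.sum_ite_eq Finset.univ w.1
        (fun b' => ∑ p' : Fin k, if (p' : ℕ) = (w.2 : ℕ) + 1
            then (x (Sum.inr w) - x (Sum.inr (b', p')))^2 else 0)]
      rw [if_pos (Finset.mem_univ _)]
      rw [fin_sum_ite_val]
      split_ifs with h
      · rw [hY (w.1:ℕ) ((w.2:ℕ)+1) w.1.2 h, hY (w.1:ℕ) (w.2:ℕ) w.1.2 w.2.2]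
      · rfl
    rw [Finset.sum_congr rfl fun w _ => estep w]
    rw [Fintype.sum_prod_type]
    have e3 : ∀ b : Fin (t+2), (∑ p : Fin k, if (p:ℕ)+1 < k
          then (Y (b:ℕ) (p:ℕ) - Y (b:ℕ) ((p:ℕ)+1))^2 else 0)
        = ∑ p ∈ range (k-1), (Y (b:ℕ) p - Y (b:ℕ) (p+1))^2 := by
      intro b
      rw [Fin.sum_univ_eq_sum_range
        (fun p => if p + 1 < k then (Y (b:ℕ) p - Y (b:ℕ) (p+1))^2 else 0)]
      exact sum_range_pred k _
    rw [Finset.sum_congr rfl fun b _ => e3 b]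
    exact Fin.sum_univ_eq_sum_range
      (fun b => ∑ p ∈ range (k-1), (Y b p - Y b (p+1))^2) (t+2)
  rw [Finset.sum_add_distrib, Finset.sum_add_distrib]
  rw [hqA, hqB, hqC, Finset.sum_eq_zero fun w _ => hq0 w]
  ring

lemma graph_sq_eq (ht : 2 ≤ t)
    (x : Fin (t + (t - 1) * 0) ⊕ Fin (t + 2) × Fin k → ℝ)
    (Z : ℕ → ℝ) (hZ : ∀ (a : ℕ) (h : a < t + (t - 1) * 0), Z a = x (Sum.inl ⟨a, h⟩))
    (Y : ℕ → ℕ → ℝ)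
    (hY : ∀ (b p : ℕ) (hb : b < t + 2) (hp : p < k), Y b p = x (Sum.inr (⟨b, hb⟩, ⟨p, hp⟩))) :
    (∑ u, (x u)^2)
      = (∑ a ∈ range t, (Z a)^2) + ∑ b ∈ range (t+2), ∑ p ∈ range k, (Y b p)^2 := by
  have hN : t + (t - 1) * 0 = t := by simp
  rw [Fintype.sum_sum_type, Fintype.sum_prod_type]
  congr 1
  · have e1 : ∀ i : Fin (t + (t-1)*0), (x (Sum.inl i))^2 = (Z (i : ℕ))^2 := by
      intro i
      rw [hZ (i : ℕ) i.2]
    rw [Finset.sum_congr rfl fun i _ => e1 i,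
      Fin.sum_univ_eq_sum_range (fun a => (Z a)^2), hN]
  · have e2 : ∀ b : Fin (t+2), (∑ p : Fin k, (x (Sum.inr (b, p)))^2)
        = ∑ p ∈ range k, (Y (b : ℕ) p)^2 := by
      intro b
      have e3 : ∀ p : Fin k, (x (Sum.inr (b, p)))^2 = (Y (b : ℕ) (p : ℕ))^2 := by
        intro p
        rw [hY (b : ℕ) (p : ℕ) b.2 p.2]
      rw [Finset.sum_congr rfl fun p _ => e3 p,
        Fin.sum_univ_eq_sum_range (fun p => (Y (b : ℕ) p)^2)]
    rw [Finset.sum_congr rfl fun b _ => e2 b,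
      Fin.sum_univ_eq_sum_range (fun b => ∑ p ∈ range k, (Y b p)^2)]

end


namespace UniformTreeAux2

/-- Embedding of spine indices (clamped) into the vertex type. -/
def emb (t k : ℕ) (ht : 2 ≤ t) (a : ℕ) : Fin (t + (t - 1) * 0) ⊕ Fin (t + 2) × Fin k :=
  Sum.inl ⟨min a (t - 1), by omega⟩

/-- The constraint linear map cutting out the good subspace. -/
def phiMap (t k : ℕ) (ht : 2 ≤ t) :
    EuclideanSpace ℝ (Fin (t + (t - 1) * 0) ⊕ Fin (t + 2) × Fin k) →ₗ[ℝ]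
      (Fin ((t + 1) / 2) → ℝ) where
  toFun := fun x j => if 2 * (j : ℕ) + 1 < t
      then x (emb t k ht (2 * (j : ℕ))) - x (emb t k ht (2 * (j : ℕ) + 1))
      else x (emb t k ht (t - 1))
  map_add' := by
    intro a b
    funext j
    simp only [PiLp.add_apply, Pi.add_apply]
    split_ifs <;> ring
  map_smul' := by
    intro c a
    funext j
    simp only [PiLp.smul_apply, Pi.smul_apply, smul_eq_mul, RingHom.id_apply]
    split_ifs <;> ring

end UniformTreeAux2

open UniformTreeAux2 in
/-- for trunk length `m = 0` and `t ≥ 2` T-junctions, for every branch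
length `k ≥ 1` the uniform tree `H_{0,k}` has at most `⌊(t+1)/2⌋` Laplacian
eigenvalues `≥ 4`. -/
theorem uniform_tree_trunk_zero_upper (t : ℕ) (ht : 2 ≤ t) :
    ∀ k : ℕ, 1 ≤ k → n4plus (uniformTree 0 k t) ≤ (t + 1) / 2 := by
  classical
  intro k hk
  have hN : t + (t - 1) * 0 = t := by simp
  set φ := phiMap t k ht with hφ
  have hrank : Fintype.card (Fin (t + (t - 1) * 0) ⊕ Fin (t + 2) × Fin k)
      ≤ Module.finrank ℝ (LinearMap.ker φ) + (t + 1) / 2 := by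
    have h1 := LinearMap.finrank_range_add_finrank_ker φ
    have h2 : Module.finrank ℝ (LinearMap.range φ) ≤ (t + 1) / 2 := by
      have h3 := Submodule.finrank_le (LinearMap.range φ)
      simpa [Module.finrank_pi] using h3
    rw [finrank_euclideanSpace] at h1
    omega
  have hform : ∀ x ∈ LinearMap.ker φ, x ≠ 0 →
      ∑ j, x j * (((uniformTree 0 k t).lapMatrix ℝ) *ᵥ x) j < 4 * ∑ j, x j * x j := by
    intro x hxW hx0
    set Z : ℕ → ℝ := fun a => if h : a < t + (t - 1) * 0 then x (Sum.inl ⟨a, h⟩) else 0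
      with hZdef
    set Y : ℕ → ℕ → ℝ := fun b p => if h : b < t + 2 ∧ p < k
        then x (Sum.inr (⟨b, h.1⟩, ⟨p, h.2⟩)) else 0 with hYdef
    have hZ : ∀ (a : ℕ) (h : a < t + (t - 1) * 0), Z a = x (Sum.inl ⟨a, h⟩) :=
      fun a h => dif_pos h
    have hY : ∀ (b p : ℕ) (hb : b < t + 2) (hp : p < k),
        Y b p = x (Sum.inr (⟨b, hb⟩, ⟨p, hp⟩)) := fun b p hb hp => dif_pos ⟨hb, hp⟩
    have hZemb : ∀ a : ℕ, a ≤ t - 1 → x (emb t k ht a) = Z a := by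
      intro a ha
      rw [hZ a (by omega)]
      show x (Sum.inl ⟨min a (t-1), _⟩) = x (Sum.inl ⟨a, _⟩)
      congr 1
      exact congrArg (fun w => WithLp.toLp 2 (x.1 w)) (congrArg Sum.inl (Fin.ext (show min a (t-1) = a by omega) :
        (⟨min a (t-1), by omega⟩ : Fin (t + (t-1)*0)) = ⟨a, by omega⟩))
    have hker : ∀ j : Fin ((t+1)/2), (if 2 * (j : ℕ) + 1 < t
        then x (emb t k ht (2 * (j : ℕ))) - x (emb t k ht (2 * (j : ℕ) + 1))
        else x (emb t k ht (t - 1))) = 0 := by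
      intro j
      have hx : φ x = 0 := hxW
      exact congrFun hx j
    have hpair : ∀ j : ℕ, 2 * j + 1 < t → Z (2 * j) = Z (2 * j + 1) := by
      intro j hj
      have hjs : j < (t + 1) / 2 := by omega
      have h := hker ⟨j, hjs⟩
      rw [if_pos (by simpa using hj)] at h
      rw [hZemb (2*j) (by omega), hZemb (2*j+1) (by omega)] at h
      linarith
    have hodd : t % 2 = 1 → Z (t - 1) = 0 := by
      intro hpar
      have hjs : (t - 1) / 2 < (t + 1) / 2 := by omega
      have h := hker ⟨(t-1)/2, hjs⟩
      rw [if_neg (by simp; omega)] at h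
      rw [hZemb (t-1) le_rfl] at h
      exact h
    have hnz : (∃ a, a < t ∧ Z a ≠ 0) ∨ (∃ b, b < t + 2 ∧ ∃ p, p < k ∧ Y b p ≠ 0) := by
      have hex : ∃ u, x u ≠ 0 := by
        by_contra hc
        push_neg at hc
        exact hx0 (WithLp.ofLp_injective 2 (funext hc))
      obtain ⟨u, hu⟩ := hex
      rcases u with i | ⟨b, p⟩
      · left
        refine ⟨(i : ℕ), by omega, ?_⟩
        rw [hZ (i : ℕ) i.2]
        simpa using hu
      · right
        refine ⟨(b : ℕ), b.2, (p : ℕ), p.2, ?_⟩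
        rw [hY _ _ b.2 p.2]
        simpa using hu
    have hQ : ∑ j, x j * (((uniformTree 0 k t).lapMatrix ℝ) *ᵥ x) j
        = (∑ u, ∑ v, if (uniformTree 0 k t).Adj u v then (x u - x v)^2 else 0) / 2 := by
      have h1 : ∑ j, x j * (((uniformTree 0 k t).lapMatrix ℝ) *ᵥ x) j
          = dotProduct x (((uniformTree 0 k t).lapMatrix ℝ) *ᵥ x) := rfl
      rw [h1, ← Matrix.toLinearMap₂'_apply', SimpleGraph.lapMatrix_toLinearMap₂']
    have hsum := graph_sum_eq t k ht hk x Z hZ Y hY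
    have hsq := graph_sq_eq t k ht x Z hZ Y hY
    have hmain := main_ineq t k ht hk Z Y hpair hodd hnz
    have hxx : ∑ j, x j * x j = ∑ u, (x u)^2 :=
      Finset.sum_congr rfl fun u _ => by ring
    rw [hQ, hxx, hsum, hsq]
    linarith [hmain]
  have habs := count_eig_ge_add_finrank_le ((uniformTree 0 k t).lapMatrix ℝ)
      (SimpleGraph.posSemidef_lapMatrix ℝ (uniformTree 0 k t)).1 4 (LinearMap.ker φ) hform
  have hcard : n4plus (uniformTree 0 k t) = (Finset.univ.filter fun i =>
      (4:ℝ) ≤ (SimpleGraph.posSemidef_lapMatrix ℝ (uniformTree 0 k t)).1.eigenvalues i).card :=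
    rfl
  rw [hcard]
  omega
end

section
/- Base case m = 0, t = 2: a tree of maximum degree 3 with exactly two adjacent degree-3 vertices has exactly one Laplacian eigenvalue greater than or equal to 4. -/
open SimpleGraph Matrix Finset in
private lemma acyclic_no_support' {V : Type*} [Fintype V] [DecidableEq V]
    (K : SimpleGraph V) (hac : K.IsAcyclic) (x : V → ℝ) (a : V) (ha : x a ≠ 0)
    (hsome : ∀ b, x b ≠ 0 → ∃ c, K.Adj b c)
    (hnext : ∀ b, x b ≠ 0 → ∀ c, K.Adj b c → ∃ c', K.Adj b c' ∧ c' ≠ c)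
    (halt : ∀ b c, K.Adj b c → x b ≠ 0 → x c ≠ 0) : False := by
  have main : ∀ n : ℕ, ∃ (b c : V) (p : K.Walk b a), K.Adj b c ∧ x b ≠ 0 ∧ x c ≠ 0 ∧
      p.IsPath ∧ p.length = n ∧ c ∉ p.support := by
    intro n
    induction n with
    | zero =>
      obtain ⟨c, hc⟩ := hsome a ha
      exact ⟨a, c, SimpleGraph.Walk.nil, hc, ha, halt a c hc ha, SimpleGraph.Walk.IsPath.nil,
        rfl, by simp [hc.ne']⟩
    | succ n ih =>
      obtain ⟨b, c, p, hbc, hxb, hxc, hp, hlen, hcs⟩ := ih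
      have hp' : (SimpleGraph.Walk.cons hbc.symm p).IsPath := hp.cons hcs
      obtain ⟨d, hcd, hdb⟩ := hnext c hxc b hbc.symm
      have hxd : x d ≠ 0 := halt c d hcd hxc
      refine ⟨c, d, SimpleGraph.Walk.cons hbc.symm p, hcd, hxc, hxd, hp', by simp [hlen], ?_⟩
      intro hd
      have hq : ((SimpleGraph.Walk.cons hbc.symm p).takeUntil d hd).IsPath := hp'.takeUntil hd
      have he : s(d, c) ∉ ((SimpleGraph.Walk.cons hbc.symm p).takeUntil d hd).edges := by
        intro hmem
        have h2 := (SimpleGraph.Walk.cons hbc.symm p).edges_takeUntil_subset hd hmem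
        rw [SimpleGraph.Walk.edges_cons] at h2
        rcases List.mem_cons.mp h2 with h1 | h2
        · rw [Sym2.eq_iff] at h1
          rcases h1 with ⟨h, h'⟩ | ⟨h, h'⟩
          · exact hcd.ne' h
          · exact hdb h
        · exact hcs (SimpleGraph.Walk.snd_mem_support_of_mem_edges p h2)
      exact hac _ ((SimpleGraph.Walk.cons_isCycle_iff _ hcd.symm).mpr ⟨hq, he⟩)
  obtain ⟨b, c, p, _, _, _, hp, hlen, _⟩ := main (Fintype.card V)
  exact absurd (hlen ▸ hp.length_lt) (lt_irrefl _)

open SimpleGraph Matrix Finset in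
private lemma forest_quad' {V : Type*} [Fintype V] [DecidableEq V]
    (K : SimpleGraph V) [DecidableRel K.Adj] (hac : K.IsAcyclic)
    (hdeg : ∀ a, K.degree a ≤ 2) (x : V → ℝ) (hx : x ≠ 0) :
    x ⬝ᵥ (K.lapMatrix ℝ *ᵥ x) < 4 * (x ⬝ᵥ x) := by
  have hQ : x ⬝ᵥ (K.lapMatrix ℝ *ᵥ x)
      = (∑ i, ∑ j, if K.Adj i j then (x i - x j)^2 else 0)/2 := by
    rw [← Matrix.toLinearMap₂'_apply', SimpleGraph.lapMatrix_toLinearMap₂']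
  have hS2 : ∀ (y : V → ℝ), (∑ i, ∑ j, if K.Adj i j then (y i ^2 + y j ^2) else 0)
      = 2 * ∑ i, (K.degree i : ℝ) * (y i)^2 := by
    intro y
    have h1 : ∀ i, (∑ j, if K.Adj i j then (y i ^2 : ℝ) else 0) = (K.degree i : ℝ) * y i ^ 2 := by
      intro i
      rw [SimpleGraph.degree_eq_sum_if_adj, Finset.sum_mul]
      congr 1; ext j
      split <;> simp
    have h2 : (∑ i, ∑ j, if K.Adj i j then (y j ^2 : ℝ) else 0)
        = ∑ i, (K.degree i : ℝ) * y i ^ 2 := by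
      rw [Finset.sum_comm]
      refine Finset.sum_congr rfl fun j _ => ?_
      rw [SimpleGraph.degree_eq_sum_if_adj, Finset.sum_mul]
      congr 1; ext i
      rw [if_congr (K.adj_comm i j) rfl rfl]
      split <;> simp
    calc (∑ i, ∑ j, if K.Adj i j then (y i ^2 + y j ^2) else 0)
        = (∑ i, ∑ j, if K.Adj i j then (y i ^2 : ℝ) else 0)
          + (∑ i, ∑ j, if K.Adj i j then (y j ^2 : ℝ) else 0) := by
          rw [← Finset.sum_add_distrib]
          refine Finset.sum_congr rfl fun i _ => ?_
          rw [← Finset.sum_add_distrib]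
          refine Finset.sum_congr rfl fun j _ => ?_
          split <;> simp
      _ = 2 * ∑ i, (K.degree i : ℝ) * (y i)^2 := by
          rw [Finset.sum_congr rfl fun i _ => h1 i, h2]; ring
  have hdegR : ∀ i, ((K.degree i : ℝ)) ≤ 2 := by
    intro i; exact_mod_cast hdeg i
  have hxx : ∀ i, (0:ℝ) ≤ x i ^ 2 := fun i => sq_nonneg _
  rw [hQ]
  rw [div_lt_iff₀ (by norm_num : (0:ℝ) < 2)]
  have hdot : x ⬝ᵥ x = ∑ i, x i ^ 2 := by
    simp [dotProduct, sq]
  rw [hdot]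
  by_cases hstrict : ∀ i j, K.Adj i j → x j = - x i
  · by_cases hdeg2 : ∀ i, x i ≠ 0 → 2 ≤ K.degree i
    · exfalso
      obtain ⟨a, ha⟩ := Function.ne_iff.mp hx
      refine acyclic_no_support' K hac x a ha ?_ ?_ ?_
      · intro b hb
        have h2 : 0 < K.degree b := lt_of_lt_of_le (by norm_num) (hdeg2 b hb)
        rw [← SimpleGraph.card_neighborFinset_eq_degree, Finset.card_pos] at h2
        obtain ⟨c, hc⟩ := h2
        exact ⟨c, (SimpleGraph.mem_neighborFinset K b c).mp hc⟩
      · intro b hb c hc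
        have h2 : 2 ≤ (K.neighborFinset b).card := by
          rw [SimpleGraph.card_neighborFinset_eq_degree]; exact hdeg2 b hb
        have hcmem : c ∈ K.neighborFinset b := (SimpleGraph.mem_neighborFinset K b c).mpr hc
        have : 0 < ((K.neighborFinset b).erase c).card := by
          rw [Finset.card_erase_of_mem hcmem]; omega
        obtain ⟨c', hc'⟩ := Finset.card_pos.mp this
        rw [Finset.mem_erase] at hc'
        exact ⟨c', (SimpleGraph.mem_neighborFinset K b c').mp hc'.2, hc'.1⟩
      · intro b c hbc hb
        rw [hstrict b c hbc]; simpa using hb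
    · push_neg at hdeg2
      obtain ⟨i0, hi0, hdi0⟩ := hdeg2
      calc (∑ i, ∑ j, if K.Adj i j then (x i - x j)^2 else 0)
          ≤ (∑ i, ∑ j, if K.Adj i j then (x i ^2 + x j ^2)*2 else 0) := by
            refine Finset.sum_le_sum fun i _ => Finset.sum_le_sum fun j _ => ?_
            split
            · nlinarith [sq_nonneg (x i + x j)]
            · exact le_rfl
        _ = 2 * (2 * ∑ i, (K.degree i : ℝ) * (x i)^2) := by
            rw [← hS2 x]; rw [Finset.mul_sum]
            refine Finset.sum_congr rfl fun i _ => ?_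
            rw [Finset.mul_sum]
            refine Finset.sum_congr rfl fun j _ => ?_
            split <;> ring
        _ < 4 * (∑ i, x i ^ 2) * 2 := by
            have : (∑ i, (K.degree i : ℝ) * (x i)^2) < ∑ i, 2 * x i ^ 2 := by
              refine Finset.sum_lt_sum (fun i _ => by nlinarith [hdegR i, hxx i])
                ⟨i0, Finset.mem_univ i0, ?_⟩
              have : (K.degree i0 : ℝ) ≤ 1 := by
                exact_mod_cast Nat.lt_succ_iff.mp (by omega : K.degree i0 < 2)
              have hx0 : 0 < x i0 ^2 := by positivity
              nlinarith
            calc 2 * (2 * ∑ i, (K.degree i : ℝ) * (x i)^2) < 2*(2*∑ i, 2 * x i ^ 2) := by linarith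
              _ = 4 * (∑ i, x i ^ 2) * 2 := by rw [← Finset.mul_sum]; ring
  · push_neg at hstrict
    obtain ⟨i0, j0, hadj0, hne0⟩ := hstrict
    calc (∑ i, ∑ j, if K.Adj i j then (x i - x j)^2 else 0)
        < (∑ i, ∑ j, if K.Adj i j then (x i ^2 + x j ^2)*2 else 0) := by
          refine Finset.sum_lt_sum (fun i _ => Finset.sum_le_sum fun j _ => ?_)
            ⟨i0, Finset.mem_univ i0, ?_⟩
          · split
            · nlinarith [sq_nonneg (x i + x j)]
            · exact le_rfl
          · refine Finset.sum_lt_sum (fun j _ => ?_) ⟨j0, Finset.mem_univ j0, ?_⟩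
            · split
              · nlinarith [sq_nonneg (x i0 + x j)]
              · exact le_rfl
            · rw [if_pos hadj0, if_pos hadj0]
              have : x j0 + x i0 ≠ 0 := fun h => hne0 (by linarith)
              nlinarith [sq_pos_of_ne_zero this]
      _ = 2 * (2 * ∑ i, (K.degree i : ℝ) * (x i)^2) := by
          rw [← hS2 x]; rw [Finset.mul_sum]
          refine Finset.sum_congr rfl fun i _ => ?_
          rw [Finset.mul_sum]
          refine Finset.sum_congr rfl fun j _ => ?_
          split <;> ring
      _ ≤ 4 * (∑ i, x i ^ 2) * 2 := by
          have : (∑ i, (K.degree i : ℝ) * (x i)^2) ≤ ∑ i, 2 * x i ^ 2 :=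
            Finset.sum_le_sum (fun i _ => by nlinarith [hdegR i, hxx i])
          calc 2 * (2 * ∑ i, (K.degree i : ℝ) * (x i)^2) ≤ 2*(2*∑ i, 2 * x i ^ 2) := by linarith
            _ = 4 * (∑ i, x i ^ 2) * 2 := by rw [← Finset.mul_sum]; ring

open SimpleGraph Matrix Finset in
private lemma dot_eigen' {V : Type*} [Fintype V] [DecidableEq V]
    {A : Matrix V V ℝ} (hA : A.IsHermitian) (i j : V) :
    (⇑(hA.eigenvectorBasis i) ⬝ᵥ ⇑(hA.eigenvectorBasis j)) = if i = j then 1 else 0 := by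
  have := (orthonormal_iff_ite.mp hA.eigenvectorBasis.orthonormal) i j
  rw [PiLp.inner_apply] at this
  simpa [dotProduct, mul_comm] using this

open SimpleGraph Matrix Finset in
private lemma z_expand' {V : Type*} [Fintype V] [DecidableEq V]
    {A : Matrix V V ℝ} (hA : A.IsHermitian) (z : V → ℝ) (k : V) :
    z k = ∑ i, (⇑(hA.eigenvectorBasis i) ⬝ᵥ z) * (hA.eigenvectorBasis i) k := by
  have h := hA.eigenvectorBasis.sum_repr' (WithLp.toLp 2 z)
  have hk := congrArg (fun w : EuclideanSpace ℝ V => w k) h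
  simp only [WithLp.ofLp_sum, WithLp.ofLp_smul, Finset.sum_apply, Pi.smul_apply] at hk
  rw [← hk]
  refine Finset.sum_congr rfl fun i _ => ?_
  rw [PiLp.inner_apply]
  simp [dotProduct, smul_eq_mul, mul_comm]

open SimpleGraph Matrix Finset in
private lemma dot_self_repr' {V : Type*} [Fintype V] [DecidableEq V]
    {A : Matrix V V ℝ} (hA : A.IsHermitian) (z : V → ℝ) :
    z ⬝ᵥ z = ∑ i, (⇑(hA.eigenvectorBasis i) ⬝ᵥ z)^2 := by
  set c : V → ℝ := fun i => ⇑(hA.eigenvectorBasis i) ⬝ᵥ z with hc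
  calc z ⬝ᵥ z = ∑ k, z k * z k := rfl
    _ = ∑ k, (∑ i, c i * (hA.eigenvectorBasis i) k) * z k := by
        refine Finset.sum_congr rfl fun k _ => ?_
        rw [← z_expand' hA z k]
    _ = ∑ i, c i * ∑ k, (hA.eigenvectorBasis i) k * z k := by
        simp_rw [Finset.sum_mul, Finset.mul_sum]
        rw [Finset.sum_comm]
        exact Finset.sum_congr rfl fun i _ => Finset.sum_congr rfl fun k _ => by ring
    _ = ∑ i, (c i)^2 := by
        refine Finset.sum_congr rfl fun i _ => ?_
        have : (∑ k, (hA.eigenvectorBasis i) k * z k) = c i := rfl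
        rw [this]; ring

open SimpleGraph Matrix Finset in
private lemma quad_repr' {V : Type*} [Fintype V] [DecidableEq V]
    {A : Matrix V V ℝ} (hA : A.IsHermitian) (z : V → ℝ) :
    z ⬝ᵥ (A *ᵥ z) = ∑ i, hA.eigenvalues i * (⇑(hA.eigenvectorBasis i) ⬝ᵥ z)^2 := by
  set c : V → ℝ := fun i => ⇑(hA.eigenvectorBasis i) ⬝ᵥ z with hc
  have hAz : ∀ k, (A *ᵥ z) k = ∑ i, c i * (hA.eigenvalues i * (hA.eigenvectorBasis i) k) := by
    intro k
    calc (A *ᵥ z) k = ∑ l, A k l * z l := rfl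
      _ = ∑ l, A k l * ∑ i, c i * (hA.eigenvectorBasis i) l := by
          refine Finset.sum_congr rfl fun l _ => by rw [← z_expand' hA z l]
      _ = ∑ i, c i * ∑ l, A k l * (hA.eigenvectorBasis i) l := by
          simp_rw [Finset.mul_sum]
          rw [Finset.sum_comm]
          exact Finset.sum_congr rfl fun i _ => Finset.sum_congr rfl fun l _ => by ring
      _ = ∑ i, c i * (hA.eigenvalues i * (hA.eigenvectorBasis i) k) := by
          refine Finset.sum_congr rfl fun i _ => ?_
          have h1 : (∑ l, A k l * (hA.eigenvectorBasis i) l)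
              = (A *ᵥ ⇑(hA.eigenvectorBasis i)) k := rfl
          rw [h1, hA.mulVec_eigenvectorBasis]
          rfl
  calc z ⬝ᵥ (A *ᵥ z) = ∑ k, z k * ∑ i, c i * (hA.eigenvalues i * (hA.eigenvectorBasis i) k) := by
        refine Finset.sum_congr rfl fun k _ => by rw [hAz k]
    _ = ∑ i, hA.eigenvalues i * c i * ∑ k, (hA.eigenvectorBasis i) k * z k := by
        simp_rw [Finset.mul_sum]
        rw [Finset.sum_comm]
        exact Finset.sum_congr rfl fun i _ => Finset.sum_congr rfl fun k _ => by ring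
    _ = ∑ i, hA.eigenvalues i * (c i)^2 := by
        refine Finset.sum_congr rfl fun i _ => ?_
        have : (∑ k, (hA.eigenvectorBasis i) k * z k) = c i := rfl
        rw [this]; ring

open SimpleGraph Matrix Finset in
private lemma lap_delete_quad' {V : Type*} [Fintype V] [DecidableEq V]
    (G : SimpleGraph V) [DecidableRel G.Adj] (u v : V) (huv : G.Adj u v)
    [DecidableRel (G.deleteEdges {s(u,v)}).Adj] (x : V → ℝ) :
    x ⬝ᵥ (G.lapMatrix ℝ *ᵥ x)
      = x ⬝ᵥ ((G.deleteEdges {s(u,v)}).lapMatrix ℝ *ᵥ x) + (x u - x v)^2 := by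
  have hne : u ≠ v := G.ne_of_adj huv
  rw [← Matrix.toLinearMap₂'_apply', SimpleGraph.lapMatrix_toLinearMap₂',
      ← Matrix.toLinearMap₂'_apply', SimpleGraph.lapMatrix_toLinearMap₂']
  have hterm : ∀ i j : V, (if G.Adj i j then (x i - x j)^2 else 0)
      = (if (G.deleteEdges {s(u,v)}).Adj i j then (x i - x j)^2 else 0)
        + ((if i = u ∧ j = v then (x i - x j)^2 else 0)
          + (if i = v ∧ j = u then (x i - x j)^2 else 0)) := by
    intro i j
    by_cases h : G.Adj i j
    · by_cases h2 : (i = u ∧ j = v) ∨ (i = v ∧ j = u)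
      · have hdel : ¬ (G.deleteEdges {s(u,v)}).Adj i j := by
          rw [SimpleGraph.deleteEdges_adj]
          rintro ⟨-, hmem⟩
          apply hmem
          simp only [Set.mem_singleton_iff, Sym2.eq_iff]
          tauto
        rcases h2 with ⟨h3, h4⟩ | ⟨h3, h4⟩ <;> subst h3 <;> subst h4 <;>
          simp [if_pos h, if_neg hdel, hne, hne.symm, Ne.symm hne] <;> ring
      · push_neg at h2
        have hdel : (G.deleteEdges {s(u,v)}).Adj i j := by
          rw [SimpleGraph.deleteEdges_adj]
          refine ⟨h, ?_⟩
          simp only [Set.mem_singleton_iff, Sym2.eq_iff]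
          rintro (⟨h3, h4⟩ | ⟨h3, h4⟩)
          · exact h2.1 h3 h4
          · exact h2.2 h3 h4
        have : ¬ (i = u ∧ j = v) := fun ⟨a, b⟩ => h2.1 a b
        have h' : ¬ (i = v ∧ j = u) := fun ⟨a, b⟩ => h2.2 a b
        rw [if_pos h, if_pos hdel, if_neg this, if_neg h']
        ring
    · have hdel : ¬ (G.deleteEdges {s(u,v)}).Adj i j := fun hc => h hc.1
      have h1 : ¬ (i = u ∧ j = v) := fun ⟨a, b⟩ => h (a ▸ b ▸ huv)
      have h2 : ¬ (i = v ∧ j = u) := fun ⟨a, b⟩ => h (a ▸ b ▸ huv.symm)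
      rw [if_neg h, if_neg hdel, if_neg h1, if_neg h2]
      ring
  have hsplit : (∑ i, ∑ j, if G.Adj i j then (x i - x j)^2 else 0)
      = (∑ i, ∑ j, if (G.deleteEdges {s(u,v)}).Adj i j then (x i - x j)^2 else 0)
        + 2 * (x u - x v)^2 := by
    simp_rw [hterm, Finset.sum_add_distrib]
    congr 1
    have e1 : (∑ i, ∑ j, if i = u ∧ j = v then (x i - x j)^2 else 0) = (x u - x v)^2 := by
      simp [ite_and, Finset.sum_ite_eq']
    have e2 : (∑ i, ∑ j, if i = v ∧ j = u then (x i - x j)^2 else 0) = (x v - x u)^2 := by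
      simp [ite_and, Finset.sum_ite_eq']
    rw [e1, e2]
    ring
  rw [hsplit]
  ring

/-- base case `m = 0`, `t = 2`: a tree of maximum degree 3 with exactly
two degree-3 vertices, which are adjacent, has exactly one Laplacian eigenvalue `≥ 4`. -/
theorem base_case_adjacent_junctions {V : Type*} [Fintype V] [DecidableEq V]
    (G : SimpleGraph V) [DecidableRel G.Adj] (hT : G.IsTree)
    (hdeg : ∀ v : V, G.degree v ≤ 3)
    (u v : V) (hu : G.degree u = 3) (hv : G.degree v = 3)
    (honly : ∀ w : V, G.degree w = 3 → w = u ∨ w = v)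
    (hadj : G.Adj u v) :
    n4plus G = 1 := by
  rename_i instFin instEq instR0
  have hne : u ≠ v := G.ne_of_adj hadj
  open SimpleGraph Matrix Finset in
  have key : ∀ (instR : DecidableRel G.Adj),
      ∀ (instP : DecidablePred fun i : V =>
        (4:ℝ) ≤ (@SimpleGraph.posSemidef_lapMatrix V ℝ _ G instR _ _ _ _).1.eigenvalues i),
      (@Finset.filter V _ instP Finset.univ).card = 1 := by
    intro instR instP
    have hinst : instR = instR0 := Subsingleton.elim _ _
    subst hinst
    set hL : (SimpleGraph.lapMatrix ℝ G).IsHermitian :=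
      (SimpleGraph.posSemidef_lapMatrix ℝ G).1 with hLdef
    -- decidability for the deleted graph
    haveI instG' : DecidableRel (G.deleteEdges {s(u,v)}).Adj := fun a b =>
      decidable_of_iff (G.Adj a b ∧ ¬ s(a,b) = s(u,v)) (by
        rw [SimpleGraph.deleteEdges_adj]; simp)
    -- the deleted graph is acyclic
    have hac' : (G.deleteEdges {s(u,v)}).IsAcyclic := by
      intro w c hc
      exact hT.2 _ ((SimpleGraph.Walk.mapLe_isCycle (SimpleGraph.deleteEdges_le _)).mpr hc)
    -- degrees in the deleted graph
    have hNu : (G.deleteEdges {s(u,v)}).neighborFinset u = (G.neighborFinset u).erase v := by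
      ext c
      simp only [SimpleGraph.mem_neighborFinset, SimpleGraph.deleteEdges_adj,
        Set.mem_singleton_iff, Sym2.eq_iff, Finset.mem_erase]
      constructor
      · rintro ⟨ha, hs⟩
        exact ⟨fun hcv => hs (by tauto), ha⟩
      · rintro ⟨hcv, ha⟩
        exact ⟨ha, by tauto⟩
    have hNv : (G.deleteEdges {s(u,v)}).neighborFinset v = (G.neighborFinset v).erase u := by
      ext c
      simp only [SimpleGraph.mem_neighborFinset, SimpleGraph.deleteEdges_adj,
        Set.mem_singleton_iff, Sym2.eq_iff, Finset.mem_erase]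
      constructor
      · rintro ⟨ha, hs⟩
        exact ⟨fun hcu => hs (by tauto), ha⟩
      · rintro ⟨hcu, ha⟩
        exact ⟨ha, by tauto⟩
    have hdeg' : ∀ a, (G.deleteEdges {s(u,v)}).degree a ≤ 2 := by
      intro a
      by_cases hau : a = u
      · subst hau
        rw [← SimpleGraph.card_neighborFinset_eq_degree, hNu,
          Finset.card_erase_of_mem (by rw [SimpleGraph.mem_neighborFinset]; exact hadj),
          SimpleGraph.card_neighborFinset_eq_degree, hu]
      · by_cases hav : a = v
        · subst hav
          rw [← SimpleGraph.card_neighborFinset_eq_degree, hNv,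
            Finset.card_erase_of_mem (by rw [SimpleGraph.mem_neighborFinset]; exact hadj.symm),
            SimpleGraph.card_neighborFinset_eq_degree, hv]
        · have h3 : G.degree a ≤ 2 := by
            rcases Nat.lt_or_ge (G.degree a) 3 with h | h
            · omega
            · have : G.degree a = 3 := le_antisymm (hdeg a) h
              rcases honly a this with h' | h' <;> [exact absurd h' hau; exact absurd h' hav]
          have hsub : (G.deleteEdges {s(u,v)}).neighborFinset a ⊆ G.neighborFinset a := by
            intro c hc
            rw [SimpleGraph.mem_neighborFinset] at *
            exact hc.1
          calc (G.deleteEdges {s(u,v)}).degree a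
              = ((G.deleteEdges {s(u,v)}).neighborFinset a).card :=
                (SimpleGraph.card_neighborFinset_eq_degree _ a).symm
            _ ≤ (G.neighborFinset a).card := Finset.card_le_card hsub
            _ = G.degree a := SimpleGraph.card_neighborFinset_eq_degree _ a
            _ ≤ 2 := h3
    -- main strict upper bound for vectors vanishing on the deleted edge
    have hmain : ∀ x : V → ℝ, x ≠ 0 → x u = x v →
        x ⬝ᵥ (G.lapMatrix ℝ *ᵥ x) < 4 * (x ⬝ᵥ x) := by
      intro x hx0 hxuv
      rw [lap_delete_quad' G u v hadj x, hxuv, sub_self]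
      have := forest_quad' (G.deleteEdges {s(u,v)}) hac' hdeg' x hx0
      norm_num
      exact this
    -- existence of an eigenvalue ≥ 4
    have hex : ∃ i, (4:ℝ) ≤ hL.eigenvalues i := by
      by_contra hcon
      push_neg at hcon
      obtain ⟨z, hzu, hzadj, hznon⟩ : ∃ z : V → ℝ, z u = 3 ∧
          (∀ k, k ≠ u → G.Adj u k → z k = -1) ∧ (∀ k, k ≠ u → ¬ G.Adj u k → z k = 0) := by
        refine ⟨fun k => if k = u then 3 else if G.Adj u k then -1 else 0, by simp,
          fun k hk ha => ?_, fun k hk ha => ?_⟩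
        · simp [hk, ha]
        · simp [hk, ha]
      have hz0 : z ≠ 0 := fun h' => by
        have := congrFun h' u
        rw [hzu] at this
        norm_num at this
      have hterm : ∀ k, z k * z k
          = (if k = u then (9:ℝ) else 0) + (if G.Adj u k then 1 else 0) := by
        intro k
        by_cases hk : k = u
        · subst hk
          rw [hzu]
          norm_num [SimpleGraph.irrefl]
        · rw [if_neg hk]
          by_cases ha : G.Adj u k
          · rw [hzadj k hk ha, if_pos ha]; norm_num
          · rw [hznon k hk ha, if_neg ha]; norm_num
      have hzz : z ⬝ᵥ z = 12 := by
        calc z ⬝ᵥ z = ∑ k, z k * z k := rfl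
          _ = ∑ k, ((if k = u then (9:ℝ) else 0) + (if G.Adj u k then 1 else 0)) :=
              Finset.sum_congr rfl fun k _ => hterm k
          _ = (∑ k, if k = u then (9:ℝ) else 0) + ∑ k, (if G.Adj u k then (1:ℝ) else 0) :=
              Finset.sum_add_distrib
          _ = 9 + (G.degree u : ℝ) := by
              rw [Finset.sum_ite_eq' Finset.univ u (fun _ => (9:ℝ)),
                if_pos (Finset.mem_univ u), ← SimpleGraph.degree_eq_sum_if_adj]
          _ = 12 := by rw [hu]; norm_num
      have hnn : ∀ i j : V, (0:ℝ) ≤ if G.Adj i j then (z i - z j)^2 else 0 := by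
        intro i j; split
        · positivity
        · exact le_rfl
      have hlow : 4 * (z ⬝ᵥ z) ≤ z ⬝ᵥ (G.lapMatrix ℝ *ᵥ z) := by
        rw [← Matrix.toLinearMap₂'_apply', SimpleGraph.lapMatrix_toLinearMap₂', hzz]
        rw [le_div_iff₀ (by norm_num : (0:ℝ) < 2)]
        have hTu : u ∉ G.neighborFinset u := by simp
        have hstep : ∑ i ∈ insert u (G.neighborFinset u),
              (∑ j, if G.Adj i j then (z i - z j)^2 else 0)
            ≤ ∑ i, ∑ j, if G.Adj i j then (z i - z j)^2 else 0 :=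
          Finset.sum_le_sum_of_subset_of_nonneg (Finset.subset_univ _)
            (fun i _ _ => Finset.sum_nonneg fun j _ => hnn i j)
        rw [Finset.sum_insert hTu] at hstep
        have hgu : (∑ j, if G.Adj u j then (z u - z j)^2 else 0) = 48 := by
          have h16 : ∀ j, (if G.Adj u j then ((z u - z j)^2 : ℝ) else 0)
              = (if G.Adj u j then (16:ℝ) else 0) := by
            intro j
            by_cases haj : G.Adj u j
            · have hju : j ≠ u := fun e => G.ne_of_adj haj e.symm
              rw [if_pos haj, if_pos haj, hzadj j hju haj, hzu]
              norm_num
            · rw [if_neg haj, if_neg haj]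
          rw [Finset.sum_congr rfl fun j _ => h16 j]
          have : (∑ j, if G.Adj u j then (16:ℝ) else 0) = 16 * (G.degree u : ℝ) := by
            rw [SimpleGraph.degree_eq_sum_if_adj, Finset.mul_sum]
            refine Finset.sum_congr rfl fun j _ => ?_
            split <;> norm_num
          rw [this, hu]
          norm_num
        have hgn : ∀ i ∈ G.neighborFinset u,
            (16:ℝ) ≤ ∑ j, if G.Adj i j then (z i - z j)^2 else 0 := by
          intro i hi
          rw [SimpleGraph.mem_neighborFinset] at hi
          have hiu : i ≠ u := fun e => G.ne_of_adj hi.symm e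
          have hzi : z i = -1 := hzadj i hiu hi
          have h16 : (if G.Adj i u then ((z i - z u)^2:ℝ) else 0) = 16 := by
            rw [if_pos hi.symm, hzi, hzu]; norm_num
          calc (16:ℝ) = if G.Adj i u then (z i - z u)^2 else 0 := h16.symm
            _ ≤ ∑ j, if G.Adj i j then (z i - z j)^2 else 0 :=
              Finset.single_le_sum (fun j _ => hnn i j) (Finset.mem_univ u)
        have hsum48 : (48:ℝ) ≤ ∑ i ∈ G.neighborFinset u,
            (∑ j, if G.Adj i j then (z i - z j)^2 else 0) := by
          have := Finset.sum_le_sum hgn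
          rw [Finset.sum_const, SimpleGraph.card_neighborFinset_eq_degree, hu] at this
          calc (48:ℝ) = (3:ℕ) • (16:ℝ) := by norm_num
            _ ≤ _ := this
        linarith
      -- strict upper bound from the eigenvalues
      have h1 := quad_repr' hL z
      have h2 := dot_self_repr' hL z
      have hcne : ∃ i, (⇑(hL.eigenvectorBasis i) ⬝ᵥ z) ≠ 0 := by
        by_contra hc
        push_neg at hc
        have h12 : (12:ℝ) = 0 := by
          rw [← hzz, h2]
          exact Finset.sum_eq_zero fun i _ => by rw [hc i]; ring
        norm_num at h12
      obtain ⟨i0, hi0⟩ := hcne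
      have hstrict : z ⬝ᵥ (G.lapMatrix ℝ *ᵥ z) < 4 * (z ⬝ᵥ z) := by
        rw [h1, h2, Finset.mul_sum]
        refine Finset.sum_lt_sum (fun i _ => ?_) ⟨i0, Finset.mem_univ _, ?_⟩
        · nlinarith [sq_nonneg (⇑(hL.eigenvectorBasis i) ⬝ᵥ z), (hcon i).le,
            sq_nonneg (⇑(hL.eigenvectorBasis i) ⬝ᵥ z)]
        · nlinarith [sq_pos_of_ne_zero hi0, hcon i0]
      linarith
    -- uniqueness
    have huniq : ∀ i j, (4:ℝ) ≤ hL.eigenvalues i → (4:ℝ) ≤ hL.eigenvalues j → i = j := by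
      intro i j hi hj
      by_contra hij
      have hii : (⇑(hL.eigenvectorBasis i) ⬝ᵥ ⇑(hL.eigenvectorBasis i)) = 1 := by
        rw [dot_eigen' hL i i, if_pos rfl]
      have hjj : (⇑(hL.eigenvectorBasis j) ⬝ᵥ ⇑(hL.eigenvectorBasis j)) = 1 := by
        rw [dot_eigen' hL j j, if_pos rfl]
      have hij0 : (⇑(hL.eigenvectorBasis i) ⬝ᵥ ⇑(hL.eigenvectorBasis j)) = 0 := by
        rw [dot_eigen' hL i j, if_neg hij]
      have hji0 : (⇑(hL.eigenvectorBasis j) ⬝ᵥ ⇑(hL.eigenvectorBasis i)) = 0 := by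
        rw [dot_eigen' hL j i, if_neg (Ne.symm hij)]
      have hbi := hL.mulVec_eigenvectorBasis i
      have hbj := hL.mulVec_eigenvectorBasis j
      by_cases h0 : (⇑(hL.eigenvectorBasis i) : V → ℝ) u = (⇑(hL.eigenvectorBasis i) : V → ℝ) v
      · have hbine : ⇑(hL.eigenvectorBasis i) ≠ 0 := fun h => by
          rw [h, zero_dotProduct] at hii
          norm_num at hii
        have hm := hmain _ hbine h0
        rw [hbi, dotProduct_smul, smul_eq_mul, hii] at hm
        linarith
      · set α : ℝ := (hL.eigenvectorBasis j) u - (hL.eigenvectorBasis j) v with hα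
        set β : ℝ := -((hL.eigenvectorBasis i) u - (hL.eigenvectorBasis i) v) with hβ
        have hβ0 : β ≠ 0 := by
          rw [hβ, neg_ne_zero]
          exact sub_ne_zero.mpr h0
        set x : V → ℝ := α • ⇑(hL.eigenvectorBasis i) + β • ⇑(hL.eigenvectorBasis j) with hx
        have hxuv : x u = x v := by
          rw [hx]
          simp only [Pi.add_apply, Pi.smul_apply, smul_eq_mul, hα, hβ]
          ring
        have hxx : x ⬝ᵥ x = α^2 + β^2 := by
          rw [hx]
          rw [add_dotProduct, smul_dotProduct, smul_dotProduct,
            dotProduct_add, dotProduct_add,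
            dotProduct_smul, dotProduct_smul,
            dotProduct_smul, dotProduct_smul,
            hii, hjj, hij0, hji0]
          simp only [smul_eq_mul]
          ring
        have hx0 : x ≠ 0 := by
          intro h
          rw [h, zero_dotProduct] at hxx
          nlinarith [sq_nonneg α, sq_pos_of_ne_zero hβ0]
        have hLx : G.lapMatrix ℝ *ᵥ x
            = α • (hL.eigenvalues i • ⇑(hL.eigenvectorBasis i))
              + β • (hL.eigenvalues j • ⇑(hL.eigenvectorBasis j)) := by
          rw [hx, Matrix.mulVec_add, Matrix.mulVec_smul, Matrix.mulVec_smul, hbi, hbj]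
        have hq : x ⬝ᵥ (G.lapMatrix ℝ *ᵥ x)
            = hL.eigenvalues i * α^2 + hL.eigenvalues j * β^2 := by
          rw [hLx, hx]
          simp only [add_dotProduct, smul_dotProduct, dotProduct_add,
            dotProduct_smul, smul_eq_mul, hii, hjj, hij0, hji0]
          ring
        have hm := hmain x hx0 hxuv
        rw [hq, hxx] at hm
        nlinarith [sq_nonneg α, sq_pos_of_ne_zero hβ0]
    obtain ⟨i, hi⟩ := hex
    rw [Finset.card_eq_one]
    refine ⟨i, ?_⟩
    ext j
    simp only [Finset.mem_filter, Finset.mem_univ, true_and, Finset.mem_singleton]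
    constructor
    · intro hj
      exact huniq j i hj hi
    · rintro rfl
      exact hi
  unfold n4plus
  exact key _ _
end
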